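/- arXiv:2312.06906 — 9 statements merged into one kernel-verified Lean document; each statement's English description precedes it below -/
import Mathlib

section
/- For all u ∈ {1,…,m}, w ∈ {1,…,n}, and all t ∈ ℝ, the (u, m+w) entry of U_L(X∨Y,t) equals (1 − e^{it(m+n)})/(m+n). -/
open Matrix Complex

/-- Transition matrix `exp(itM)` of the continuous quantum walk whose Hamiltonian is the
real symmetric matrix `M` (the matrix exponential is taken over `ℂ`). -/
noncomputable def transU {N : Type*} [Fintype N] [DecidableEq N]
    (M : Matrix N N ℝ) (t : ℝ) : Matrix N N ℂ :=
  NormedSpace.exp ((Complex.I * (t : ℂ)) • M.map (fun x : ℝ => (x : ℂ)))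

/-- Laplacian matrix of the join `X ∨ Y` of two weighted graphs with Laplacian
matrices `LX` and `LY`. -/
noncomputable def joinL (m n : ℕ) (LX : Matrix (Fin m) (Fin m) ℝ)
    (LY : Matrix (Fin n) (Fin n) ℝ) :
    Matrix (Fin m ⊕ Fin n) (Fin m ⊕ Fin n) ℝ :=
  Matrix.fromBlocks (LX + (n : ℝ) • (1 : Matrix (Fin m) (Fin m) ℝ))
    (-(Matrix.of fun _ _ => (1 : ℝ)))
    (-(Matrix.of fun _ _ => (1 : ℝ)))
    (LY + (m : ℝ) • (1 : Matrix (Fin n) (Fin n) ℝ))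

/-- Adjacency matrix of the join `X ∨ Y` of two weighted graphs with adjacency
matrices `AX` and `AY`. -/
noncomputable def joinA (m n : ℕ) (AX : Matrix (Fin m) (Fin m) ℝ)
    (AY : Matrix (Fin n) (Fin n) ℝ) :
    Matrix (Fin m ⊕ Fin n) (Fin m ⊕ Fin n) ℝ :=
  Matrix.fromBlocks AX (Matrix.of fun _ _ => (1 : ℝ))
    (Matrix.of fun _ _ => (1 : ℝ)) AY

/-- `lam` is an eigenvalue of the matrix `M`. -/
def IsEigenvalue {N : Type*} [Fintype N] (M : Matrix N N ℝ) (lam : ℝ) : Prop :=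
  ∃ w : N → ℝ, w ≠ 0 ∧ M.mulVec w = lam • w

/-- The eigenvalue support `σ_u(M)` of the vertex `u`: all eigenvalues `lam` of `M` having
an eigenvector `w` with `w u ≠ 0`. -/
def eigSupport {N : Type*} [Fintype N] (M : Matrix N N ℝ) (u : N) : Set ℝ :=
  {lam | ∃ w : N → ℝ, w ≠ 0 ∧ M.mulVec w = lam • w ∧ w u ≠ 0}

/-- Vertices `u` and `v` are strongly cospectral with respect to `M`: for each eigenvalue,
either all eigenvectors have equal `u`,`v` entries, or all have opposite `u`,`v` entries. -/
def StronglyCospectral {N : Type*} [Fintype N] (M : Matrix N N ℝ) (u v : N) : Prop :=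
  ∀ lam : ℝ, IsEigenvalue M lam →
    (∀ w : N → ℝ, M.mulVec w = lam • w → w u = w v) ∨
    (∀ w : N → ℝ, M.mulVec w = lam • w → w u = -(w v))

/-- `σ_{uv}^-(M)`: eigenvalues in the support of `u` all of whose eigenvectors `w`
satisfy `w u = - w v`. -/
def sigmaMinus {N : Type*} [Fintype N] (M : Matrix N N ℝ) (u v : N) : Set ℝ :=
  {lam | lam ∈ eigSupport M u ∧ ∀ w : N → ℝ, M.mulVec w = lam • w → w u = -(w v)}

/-- The vertex `u` is periodic with respect to `M`. -/
noncomputable def PeriodicAt {N : Type*} [Fintype N] [DecidableEq N]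
    (M : Matrix N N ℝ) (u : N) : Prop :=
  ∃ τ : ℝ, 0 < τ ∧ ‖transU M τ u u‖ = 1

/-- Perfect state transfer occurs between vertices `u` and `v` with respect to `M`. -/
noncomputable def HasPST {N : Type*} [Fintype N] [DecidableEq N]
    (M : Matrix N N ℝ) (u v : N) : Prop :=
  ∃ τ : ℝ, 0 < τ ∧ ‖transU M τ u v‖ = 1
section Aux

variable {N : Type*} [Fintype N] [DecidableEq N]

lemma aux_exp_entry (A : Matrix N N ℂ) (i j : N) :
    NormedSpace.exp A i j = ∑' k : ℕ, ((k.factorial : ℂ)⁻¹ * (A ^ k) i j) := by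
  letI : SeminormedRing (Matrix N N ℂ) := Matrix.linftyOpSemiNormedRing
  letI : NormedRing (Matrix N N ℂ) := Matrix.linftyOpNormedRing
  letI : NormedAlgebra ℂ (Matrix N N ℂ) := Matrix.linftyOpNormedAlgebra
  have hsum : Summable fun k : ℕ => ((k.factorial : ℂ)⁻¹) • A ^ k :=
    NormedSpace.expSeries_summable' A
  let φL : Matrix N N ℂ →ₗ[ℂ] ℂ :=
    { toFun := fun M => M i j
      map_add' := fun _ _ => rfl
      map_smul' := fun _ _ => rfl }
  have hφc : Continuous φL := (continuous_apply j).comp (continuous_apply i)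
  let φ : Matrix N N ℂ →L[ℂ] ℂ := ⟨φL, hφc⟩
  calc NormedSpace.exp A i j = φ (NormedSpace.exp A) := rfl
    _ = φ (∑' k : ℕ, ((k.factorial : ℂ)⁻¹) • A ^ k) := by rw [NormedSpace.exp_eq_tsum ℂ]
    _ = ∑' k : ℕ, φ (((k.factorial : ℂ)⁻¹) • A ^ k) := φ.map_tsum hsum
    _ = ∑' k : ℕ, ((k.factorial : ℂ)⁻¹ * (A ^ k) i j) := rfl

lemma aux_exp_mul_eigen (A K₀ : Matrix N N ℂ) (μ : ℂ) (h : A * K₀ = μ • K₀) :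
    NormedSpace.exp A * K₀ = Complex.exp μ • K₀ := by
  letI : SeminormedRing (Matrix N N ℂ) := Matrix.linftyOpSemiNormedRing
  letI : NormedRing (Matrix N N ℂ) := Matrix.linftyOpNormedRing
  letI : NormedAlgebra ℂ (Matrix N N ℂ) := Matrix.linftyOpNormedAlgebra
  have hpow : ∀ k : ℕ, A ^ k * K₀ = μ ^ k • K₀ := by
    intro k
    induction k with
    | zero => simp
    | succ k ih =>
        rw [pow_succ, mul_assoc, h, mul_smul_comm, ih, smul_smul, pow_succ, mul_comm]
  have hsum : Summable fun k : ℕ => ((k.factorial : ℂ)⁻¹) • A ^ k :=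
    NormedSpace.expSeries_summable' A
  have hsumμ : Summable fun k : ℕ => ((k.factorial : ℂ)⁻¹ * μ ^ k) := by
    simpa [smul_eq_mul] using NormedSpace.expSeries_summable' (𝕂 := ℂ) μ
  let φL : Matrix N N ℂ →ₗ[ℂ] Matrix N N ℂ := LinearMap.mulRight ℂ K₀
  have hφc : Continuous φL := LinearMap.continuous_of_finiteDimensional φL
  let φ : Matrix N N ℂ →L[ℂ] Matrix N N ℂ := ⟨φL, hφc⟩
  calc NormedSpace.exp A * K₀ = φ (NormedSpace.exp A) := rfl
    _ = φ (∑' k : ℕ, ((k.factorial : ℂ)⁻¹) • A ^ k) := by rw [NormedSpace.exp_eq_tsum ℂ]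
    _ = ∑' k : ℕ, φ (((k.factorial : ℂ)⁻¹) • A ^ k) := φ.map_tsum hsum
    _ = ∑' k : ℕ, ((k.factorial : ℂ)⁻¹ * μ ^ k) • K₀ := by
        congr 1
        funext k
        show ((k.factorial : ℂ)⁻¹ • A ^ k) * K₀ = _
        rw [smul_mul_assoc, hpow, smul_smul]
    _ = (∑' k : ℕ, ((k.factorial : ℂ)⁻¹ * μ ^ k)) • K₀ := hsumμ.tsum_smul_const K₀
    _ = Complex.exp μ • K₀ := by
        congr 1
        rw [Complex.exp_eq_exp_ℂ, NormedSpace.exp_eq_tsum ℂ]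
        simp [smul_eq_mul]

lemma aux_exp_smul_pseudoproj (K₀ : Matrix N N ℂ) (μ s : ℂ) (hμ : μ ≠ 0)
    (h : K₀ * K₀ = μ • K₀) :
    NormedSpace.exp (s • K₀) = 1 + ((Complex.exp (s * μ) - 1) / μ) • K₀ := by
  have hKpow : ∀ k : ℕ, K₀ ^ (k + 1) = μ ^ k • K₀ := by
    intro k
    induction k with
    | zero => simp
    | succ k ih =>
        rw [pow_succ, ih, smul_mul_assoc, h, smul_smul, pow_succ]
  have hterm : ∀ k : ℕ, ((s • K₀) ^ (k + 1)) = (μ⁻¹ * (s * μ) ^ (k + 1)) • K₀ := by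
    intro k
    rw [smul_pow, hKpow, smul_smul]
    congr 1
    field_simp
    ring
  have h0 : Summable fun k : ℕ => ((k.factorial : ℂ)⁻¹ * (s * μ) ^ k) := by
    simpa [smul_eq_mul] using NormedSpace.expSeries_summable' (𝕂 := ℂ) (s * μ)
  have he : Complex.exp (s * μ) = ∑' k : ℕ, ((k.factorial : ℂ)⁻¹ * (s * μ) ^ k) := by
    rw [Complex.exp_eq_exp_ℂ, NormedSpace.exp_eq_tsum ℂ]
    simp [smul_eq_mul]
  ext i j
  rw [aux_exp_entry]
  have hfsh : ∀ k : ℕ, ((((k+1)).factorial : ℂ)⁻¹ * ((s • K₀) ^ (k+1)) i j)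
      = (((k+1).factorial : ℂ)⁻¹ * (s * μ) ^ (k+1)) * (μ⁻¹ * K₀ i j) := by
    intro k
    rw [hterm]
    simp [Matrix.smul_apply, smul_eq_mul]
    ring
  have hsumf : Summable fun k : ℕ => ((k.factorial : ℂ)⁻¹ * ((s • K₀) ^ k) i j) := by
    rw [← summable_nat_add_iff 1]
    apply Summable.congr ((((summable_nat_add_iff 1).mpr h0)).mul_right (μ⁻¹ * K₀ i j))
    intro k
    exact (hfsh k).symm
  rw [Summable.tsum_eq_zero_add hsumf]
  have hrest : (∑' k : ℕ, (((k+1).factorial : ℂ)⁻¹ * ((s • K₀) ^ (k+1)) i j))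
      = (Complex.exp (s * μ) - 1) * (μ⁻¹ * K₀ i j) := by
    rw [tsum_congr hfsh, tsum_mul_right]
    congr 1
    rw [he, Summable.tsum_eq_zero_add h0]
    simp
  rw [hrest]
  simp only [pow_zero, Nat.factorial_zero, Nat.cast_one, inv_one, one_mul,
    Matrix.add_apply, Matrix.smul_apply, smul_eq_mul, Matrix.one_apply]
  rw [div_eq_mul_inv]
  ring

end Aux

theorem stmt0 (m n : ℕ) (hm : 1 ≤ m) (hn : 1 ≤ n)
    (LX : Matrix (Fin m) (Fin m) ℝ) (LY : Matrix (Fin n) (Fin n) ℝ)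
    (hLXsymm : LX.IsSymm) (hLXrow : ∀ i, ∑ j, LX i j = 0)
    (hLYsymm : LY.IsSymm) (hLYrow : ∀ i, ∑ j, LY i j = 0) :
    ∀ (u : Fin m) (w : Fin n) (t : ℝ),
      transU (joinL m n LX LY) t (Sum.inl u) (Sum.inr w) =
        (1 - Complex.exp (Complex.I * (t : ℂ) * ((m : ℂ) + (n : ℂ)))) / ((m : ℂ) + (n : ℂ)) := by
  intro u w t
  set μ : ℂ := (m : ℂ) + (n : ℂ) with hμdef
  have hμcast : μ = ((m + n : ℕ) : ℂ) := by push_cast [hμdef]; ring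
  have hμ : μ ≠ 0 := by
    have hmn : m + n ≠ 0 := by omega
    rw [hμcast]
    exact Nat.cast_ne_zero.mpr hmn
  set c : ℂ := Complex.I * (t : ℂ) with hcdef
  set K : Matrix (Fin m ⊕ Fin n) (Fin m ⊕ Fin n) ℂ := Matrix.of (fun _ _ => (1 : ℂ)) with hKdef
  set B : Matrix (Fin m ⊕ Fin n) (Fin m ⊕ Fin n) ℂ :=
    (joinL m n LX LY).map (fun x : ℝ => (x : ℂ)) + K with hBdef
  -- entries of B
  have hB11 : ∀ (a b : Fin m), B (Sum.inl a) (Sum.inl b)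
      = ((LX a b : ℂ) + (n : ℂ) * (if a = b then 1 else 0)) + 1 := by
    intro a b
    simp [hBdef, hKdef, joinL, Matrix.map_apply, Matrix.add_apply, Matrix.smul_apply,
      Matrix.one_apply, apply_ite]
  have hB22 : ∀ (a b : Fin n), B (Sum.inr a) (Sum.inr b)
      = ((LY a b : ℂ) + (m : ℂ) * (if a = b then 1 else 0)) + 1 := by
    intro a b
    simp [hBdef, hKdef, joinL, Matrix.map_apply, Matrix.add_apply, Matrix.smul_apply,
      Matrix.one_apply, apply_ite]
  have hB12 : ∀ (a : Fin m) (b : Fin n), B (Sum.inl a) (Sum.inr b) = 0 := by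
    intro a b
    simp [hBdef, hKdef, joinL, Matrix.map_apply, Matrix.add_apply]
  have hB21 : ∀ (a : Fin n) (b : Fin m), B (Sum.inr a) (Sum.inl b) = 0 := by
    intro a b
    simp [hBdef, hKdef, joinL, Matrix.map_apply, Matrix.add_apply]
  -- row sums of B
  have hrow : ∀ i, ∑ x, B i x = μ := by
    intro i
    cases i with
    | inl a =>
        rw [Fintype.sum_sum_type]
        have h2 : ∑ b : Fin n, B (Sum.inl a) (Sum.inr b) = 0 :=
          Finset.sum_eq_zero fun b _ => hB12 a b
        rw [h2, add_zero, Finset.sum_congr rfl fun b _ => hB11 a b]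
        have hx : ∑ b : Fin m, (LX a b : ℂ) = 0 := by exact_mod_cast hLXrow a
        rw [Finset.sum_add_distrib, Finset.sum_add_distrib, hx, ← Finset.mul_sum,
          Finset.sum_ite_eq, if_pos (Finset.mem_univ a), Finset.sum_const,
          Finset.card_univ, Fintype.card_fin, nsmul_eq_mul, hμdef]
        ring
    | inr a =>
        rw [Fintype.sum_sum_type]
        have h2 : ∑ b : Fin m, B (Sum.inr a) (Sum.inl b) = 0 :=
          Finset.sum_eq_zero fun b _ => hB21 a b
        rw [h2, zero_add, Finset.sum_congr rfl fun b _ => hB22 a b]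
        have hx : ∑ b : Fin n, (LY a b : ℂ) = 0 := by exact_mod_cast hLYrow a
        rw [Finset.sum_add_distrib, Finset.sum_add_distrib, hx, ← Finset.mul_sum,
          Finset.sum_ite_eq, if_pos (Finset.mem_univ a), Finset.sum_const,
          Finset.card_univ, Fintype.card_fin, nsmul_eq_mul, hμdef]
        ring
  -- column sums of B
  have hcol : ∀ j, ∑ x, B x j = μ := by
    intro j
    cases j with
    | inl a =>
        rw [Fintype.sum_sum_type]
        have h2 : ∑ b : Fin n, B (Sum.inr b) (Sum.inl a) = 0 :=
          Finset.sum_eq_zero fun b _ => hB21 b a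
        rw [h2, add_zero, Finset.sum_congr rfl fun b _ => hB11 b a]
        have hx : ∑ b : Fin m, (LX b a : ℂ) = 0 := by
          have hr : ∑ b : Fin m, LX b a = 0 :=
            (Finset.sum_congr rfl fun b _ => hLXsymm.apply a b).trans (hLXrow a)
          exact_mod_cast hr
        rw [Finset.sum_add_distrib, Finset.sum_add_distrib, hx, ← Finset.mul_sum,
          Finset.sum_ite_eq', if_pos (Finset.mem_univ a), Finset.sum_const,
          Finset.card_univ, Fintype.card_fin, nsmul_eq_mul, hμdef]
        ring
    | inr a =>
        rw [Fintype.sum_sum_type]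
        have h2 : ∑ b : Fin m, B (Sum.inl b) (Sum.inr a) = 0 :=
          Finset.sum_eq_zero fun b _ => hB12 b a
        rw [h2, zero_add, Finset.sum_congr rfl fun b _ => hB22 b a]
        have hx : ∑ b : Fin n, (LY b a : ℂ) = 0 := by
          have hr : ∑ b : Fin n, LY b a = 0 :=
            (Finset.sum_congr rfl fun b _ => hLYsymm.apply a b).trans (hLYrow a)
          exact_mod_cast hr
        rw [Finset.sum_add_distrib, Finset.sum_add_distrib, hx, ← Finset.mul_sum,
          Finset.sum_ite_eq', if_pos (Finset.mem_univ a), Finset.sum_const,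
          Finset.card_univ, Fintype.card_fin, nsmul_eq_mul, hμdef]
        ring
  have hBK : B * K = μ • K := by
    ext i j
    rw [Matrix.mul_apply]
    simp only [hKdef, Matrix.smul_apply, Matrix.of_apply, mul_one, smul_eq_mul]
    exact hrow i
  have hKB : K * B = μ • K := by
    ext i j
    rw [Matrix.mul_apply]
    simp only [hKdef, Matrix.smul_apply, Matrix.of_apply, one_mul, smul_eq_mul, mul_one]
    exact hcol j
  have hKK : K * K = μ • K := by
    ext i j
    rw [Matrix.mul_apply]
    simp only [hKdef, Matrix.smul_apply, Matrix.of_apply, mul_one, smul_eq_mul]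
    rw [Finset.sum_const, Finset.card_univ]
    simp [Fintype.card_sum, hμcast]
  -- powers of B have zero (inl, inr) entry
  have hBkzero : ∀ k : ℕ, ∀ (a : Fin m) (b : Fin n),
      (B ^ k) (Sum.inl a) (Sum.inr b) = 0 := by
    intro k
    induction k with
    | zero =>
        intro a b
        simp [Matrix.one_apply]
    | succ k ih =>
        intro a b
        rw [pow_succ, Matrix.mul_apply, Fintype.sum_sum_type]
        have e1 : ∑ x : Fin m, (B ^ k) (Sum.inl a) (Sum.inl x) * B (Sum.inl x) (Sum.inr b) = 0 :=
          Finset.sum_eq_zero fun x _ => by rw [hB12 x b, mul_zero]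
        have e2 : ∑ x : Fin n, (B ^ k) (Sum.inl a) (Sum.inr x) * B (Sum.inr x) (Sum.inr b) = 0 :=
          Finset.sum_eq_zero fun x _ => by rw [ih a x, zero_mul]
        rw [e1, e2, add_zero]
  -- exp of c • B has zero (inl, inr) entry
  have hexpB0 : NormedSpace.exp (c • B) (Sum.inl u) (Sum.inr w) = 0 := by
    rw [aux_exp_entry]
    rw [tsum_congr (fun k : ℕ => ?_), tsum_zero]
    rw [smul_pow, Matrix.smul_apply, hBkzero k u w]
    simp
  -- decompose and use exp of sum
  have hLc : (joinL m n LX LY).map (fun x : ℝ => (x : ℂ)) = B - K := by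
    rw [hBdef]
    exact (add_sub_cancel_right _ _).symm
  have hcommBK : Commute B K := hBK.trans hKB.symm
  have hsplit : c • ((joinL m n LX LY).map (fun x : ℝ => (x : ℂ)))
      = c • B + (-c) • K := by
    rw [hLc, smul_sub, neg_smul, sub_eq_add_neg]
  have hexpmul : NormedSpace.exp (c • ((joinL m n LX LY).map (fun x : ℝ => (x : ℂ))))
      = NormedSpace.exp (c • B) * NormedSpace.exp ((-c) • K) := by
    rw [hsplit]
    exact Matrix.exp_add_of_commute _ _ ((hcommBK.smul_left c).smul_right (-c))
  have hexpK : NormedSpace.exp ((-c) • K)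
      = 1 + ((Complex.exp (-c * μ) - 1) / μ) • K :=
    aux_exp_smul_pseudoproj K μ (-c) hμ hKK
  have hexpBK : NormedSpace.exp (c • B) * K = Complex.exp (c * μ) • K :=
    aux_exp_mul_eigen (c • B) K (c * μ) (by rw [smul_mul_assoc, hBK, smul_smul])
  have hfinal : NormedSpace.exp (c • ((joinL m n LX LY).map (fun x : ℝ => (x : ℂ))))
      = NormedSpace.exp (c • B)
        + (((Complex.exp (-c * μ) - 1) / μ) * Complex.exp (c * μ)) • K := by
    rw [hexpmul, hexpK, mul_add, mul_one, Matrix.mul_smul, hexpBK, smul_smul]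
  show NormedSpace.exp (c • ((joinL m n LX LY).map (fun x : ℝ => (x : ℂ))))
      (Sum.inl u) (Sum.inr w) = (1 - Complex.exp (c * μ)) / μ
  rw [hfinal, Matrix.add_apply, hexpB0, Matrix.smul_apply, zero_add]
  have hinv : Complex.exp (-c * μ) * Complex.exp (c * μ) = 1 := by
    rw [← Complex.exp_add]
    ring_nf
    exact Complex.exp_zero
  simp only [hKdef, Matrix.of_apply, smul_eq_mul, mul_one]
  rw [div_mul_eq_mul_div, sub_mul, hinv, one_mul]
end

section
/- For all u, v ∈ {1,…,m} and all t ∈ ℝ, U_L(X∨Y,t)_{u,v} = e^{itn}·U_L(X,t)_{u,v} + 1/(m+n) + n·e^{it(m+n)}/(m(m+n)) − e^{itn}/m. -/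
open Matrix Complex

set_option maxHeartbeats 1000000

section helpers
open NormedSpace
variable {𝔸 : Type*} [NormedRing 𝔸] [NormedAlgebra ℂ 𝔸] [CompleteSpace 𝔸]

lemma aux_exp_tail (w : ℂ) :
    ∑' k : ℕ, ((Nat.factorial (k+1) : ℂ))⁻¹ * w ^ (k+1) = Complex.exp w - 1 := by
  have hsum := expSeries_summable' (𝕂 := ℂ) (𝔸 := ℂ) w
  have h0 : Complex.exp w = ∑' n : ℕ, ((Nat.factorial n : ℂ))⁻¹ • w ^ n := by
    rw [Complex.exp_eq_exp_ℂ, exp_eq_tsum ℂ]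
  rw [Summable.tsum_eq_zero_add hsum] at h0
  simp only [smul_eq_mul, pow_zero, Nat.factorial_zero, Nat.cast_one, inv_one, one_mul] at h0 ⊢
  rw [h0, add_sub_cancel_left]

lemma exp_idem (Q : 𝔸) (hQ : Q * Q = Q) (w : ℂ) :
    exp (w • Q) = 1 + (Complex.exp w - 1) • Q := by
  have hpow : ∀ k : ℕ, Q ^ (k + 1) = Q := by
    intro k; induction k with
    | zero => simp
    | succ k ih => rw [pow_succ, ih, hQ]
  have hsum := expSeries_summable' (𝕂 := ℂ) (w • Q)
  have h1 : ∀ k : ℕ, ((Nat.factorial (k+1) : ℂ))⁻¹ • (w • Q) ^ (k+1)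
      = ((Nat.factorial (k+1) : ℂ)⁻¹ * w ^ (k+1)) • Q := by
    intro k; rw [smul_pow, hpow, smul_smul]
  have hsum2 : Summable fun k : ℕ => ((Nat.factorial (k+1) : ℂ))⁻¹ * w ^ (k+1) := by
    have h3 := expSeries_summable' (𝕂 := ℂ) (𝔸 := ℂ) w
    simp only [smul_eq_mul] at h3
    exact (summable_nat_add_iff 1).2 h3
  calc exp (w • Q) = ∑' n : ℕ, ((Nat.factorial n : ℂ))⁻¹ • (w • Q) ^ n := by
        rw [exp_eq_tsum ℂ]
    _ = ((Nat.factorial 0 : ℂ))⁻¹ • (w • Q) ^ 0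
        + ∑' k : ℕ, ((Nat.factorial (k+1) : ℂ))⁻¹ • (w • Q) ^ (k+1) := Summable.tsum_eq_zero_add hsum
    _ = 1 + ∑' k : ℕ, ((Nat.factorial (k+1) : ℂ)⁻¹ * w ^ (k+1)) • Q := by
        simp only [h1]; simp
    _ = 1 + (Complex.exp w - 1) • Q := by rw [hsum2.tsum_smul_const, aux_exp_tail]

lemma exp_mul_eq_of_mul_eq_zero (M N : 𝔸) (h : M * N = 0) : exp M * N = N := by
  have hpow : ∀ k : ℕ, M ^ (k + 1) * N = 0 := by
    intro k; induction k with
    | zero => simpa using h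
    | succ k ih => rw [pow_succ, mul_assoc, h, mul_zero]
  have hsum := expSeries_summable' (𝕂 := ℂ) M
  calc exp M * N = (∑' n : ℕ, ((Nat.factorial n : ℂ))⁻¹ • M ^ n) * N := by rw [exp_eq_tsum ℂ]
    _ = ∑' n : ℕ, ((Nat.factorial n : ℂ))⁻¹ • M ^ n * N := (hsum.tsum_mul_right N).symm
    _ = ∑' n : ℕ, ((Nat.factorial n : ℂ))⁻¹ • (M ^ n * N) := by
        simp only [smul_mul_assoc]
    _ = N := by
        rw [Summable.tsum_eq_zero_add (by simpa [smul_mul_assoc] using hsum.mul_right N)]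
        simp [hpow]

end helpers

section matrixHelpers
open NormedSpace

noncomputable def fbHom (m n : ℕ) :
    (Matrix (Fin m) (Fin m) ℂ × Matrix (Fin n) (Fin n) ℂ) →+*
      Matrix (Fin m ⊕ Fin n) (Fin m ⊕ Fin n) ℂ where
  toFun p := Matrix.fromBlocks p.1 0 0 p.2
  map_one' := Matrix.fromBlocks_one
  map_mul' p q := by
    rw [Matrix.fromBlocks_multiply]
    simp
  map_zero' := Matrix.fromBlocks_zero
  map_add' p q := by
    simp only [Prod.fst_add, Prod.snd_add]
    rw [Matrix.fromBlocks_add]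
    simp
  
lemma fbHom_continuous (m n : ℕ) : Continuous (fbHom m n) := by
  exact Continuous.matrix_fromBlocks continuous_fst continuous_const continuous_const
    continuous_snd

lemma exp_fromBlocks {m n : ℕ} (A : Matrix (Fin m) (Fin m) ℂ) (D : Matrix (Fin n) (Fin n) ℂ) :
    exp (Matrix.fromBlocks A 0 0 D) = Matrix.fromBlocks (exp A) 0 0 (exp D) := by
  letI : NormedRing (Matrix (Fin m) (Fin m) ℂ) := Matrix.linftyOpNormedRing
  letI : NormedAlgebra ℚ (Matrix (Fin m) (Fin m) ℂ) := Matrix.linftyOpNormedAlgebra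
  letI : NormedRing (Matrix (Fin n) (Fin n) ℂ) := Matrix.linftyOpNormedRing
  letI : NormedAlgebra ℚ (Matrix (Fin n) (Fin n) ℂ) := Matrix.linftyOpNormedAlgebra
  letI : NormedRing (Matrix (Fin m ⊕ Fin n) (Fin m ⊕ Fin n) ℂ) := Matrix.linftyOpNormedRing
  letI : NormedAlgebra ℚ (Matrix (Fin m ⊕ Fin n) (Fin m ⊕ Fin n) ℂ) :=
    Matrix.linftyOpNormedAlgebra
  haveI : @CompleteSpace (Matrix (Fin m) (Fin m) ℂ)
      (NormedRing.toSeminormedRing (α := Matrix (Fin m) (Fin m) ℂ)).toUniformSpace :=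
    letI : NormedSpace ℂ (Matrix (Fin m) (Fin m) ℂ) := Matrix.linftyOpNormedSpace
    FiniteDimensional.complete ℂ (Matrix (Fin m) (Fin m) ℂ)
  haveI : @CompleteSpace (Matrix (Fin n) (Fin n) ℂ)
      (NormedRing.toSeminormedRing (α := Matrix (Fin n) (Fin n) ℂ)).toUniformSpace :=
    letI : NormedSpace ℂ (Matrix (Fin n) (Fin n) ℂ) := Matrix.linftyOpNormedSpace
    FiniteDimensional.complete ℂ (Matrix (Fin n) (Fin n) ℂ)
  have h1 : exp ((A, D) : Matrix (Fin m) (Fin m) ℂ × Matrix (Fin n) (Fin n) ℂ)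
      = (exp A, exp D) := by
    ext1
    · exact map_exp (RingHom.fst _ _) continuous_fst _
    · exact map_exp (RingHom.snd _ _) continuous_snd _
  have h2 := map_exp (fbHom m n) (fbHom_continuous m n)
      ((A, D) : Matrix (Fin m) (Fin m) ℂ × Matrix (Fin n) (Fin n) ℂ)
  erw [h1] at h2
  exact h2.symm

lemma mexp_idem {k : Type*} [Fintype k] [DecidableEq k] (Q : Matrix k k ℂ)
    (hQ : Q * Q = Q) (w : ℂ) :
    exp (w • Q) = 1 + (Complex.exp w - 1) • Q := by
  letI : NormedRing (Matrix k k ℂ) := Matrix.linftyOpNormedRing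
  letI : NormedAlgebra ℂ (Matrix k k ℂ) := Matrix.linftyOpNormedAlgebra
  exact exp_idem Q hQ w

lemma mexp_mul_eq_of_mul_eq_zero {k : Type*} [Fintype k] [DecidableEq k]
    (M N : Matrix k k ℂ) (h : M * N = 0) : exp M * N = N := by
  letI : NormedRing (Matrix k k ℂ) := Matrix.linftyOpNormedRing
  letI : NormedAlgebra ℂ (Matrix k k ℂ) := Matrix.linftyOpNormedAlgebra
  exact exp_mul_eq_of_mul_eq_zero M N h

end matrixHelpers

section ones
open Matrix NormedSpace

lemma ones_mul_ones {k l r : Type*} [Fintype k] [Fintype l] [Fintype r] :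
    (Matrix.of fun _ _ => (1:ℂ) : Matrix k l ℂ) * (Matrix.of fun _ _ => (1:ℂ) : Matrix l r ℂ)
      = (Fintype.card l : ℂ) • (Matrix.of fun _ _ => (1:ℂ) : Matrix k r ℂ) := by
  ext i j
  simp [Matrix.mul_apply, Finset.card_univ]

lemma rowsum_mul_ones {k l r : Type*} [Fintype k] [Fintype l] [Fintype r]
    (M : Matrix k l ℝ) (h : ∀ i, ∑ j, M i j = 0) :
    (M.map (fun x : ℝ => (x:ℂ))) * (Matrix.of fun _ _ => (1:ℂ) : Matrix l r ℂ) = 0 := by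
  ext i j
  simp only [Matrix.mul_apply, Matrix.map_apply, Matrix.of_apply, mul_one, Matrix.zero_apply]
  rw [← Complex.ofReal_sum]
  rw [h i]
  simp

lemma ones_mul_colsum {k l r : Type*} [Fintype k] [Fintype l] [Fintype r]
    (M : Matrix l r ℝ) (h : ∀ j, ∑ i, M i j = 0) :
    (Matrix.of fun _ _ => (1:ℂ) : Matrix k l ℂ) * (M.map (fun x : ℝ => (x:ℂ))) = 0 := by
  ext i j
  simp only [Matrix.mul_apply, Matrix.map_apply, Matrix.of_apply, one_mul, Matrix.zero_apply]
  rw [← Complex.ofReal_sum, h j]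
  simp

end ones

section mainhelp
open NormedSpace

lemma exp_scaled_shift {k : Type*} [Fintype k] [DecidableEq k] (R : Matrix k k ℂ)
    (a : ℂ) (ha : a ≠ 0) (hR : R * R = a • R) (w : ℂ) :
    exp ((-(w * a)) • (1 : Matrix k k ℂ) + w • R)
      = Complex.exp (-(w * a)) • (1 : Matrix k k ℂ)
        + ((1 - Complex.exp (-(w * a))) * a⁻¹) • R := by
  have hQ : (a⁻¹ • R) * (a⁻¹ • R) = a⁻¹ • R := by
    rw [Matrix.smul_mul, Matrix.mul_smul, hR, smul_smul, smul_smul]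
    congr 1
    field_simp
  have hsplit : (-(w * a)) • (1 : Matrix k k ℂ) + w • R
      = (-(w * a)) • (1 : Matrix k k ℂ) + (w * a) • (a⁻¹ • R) := by
    rw [smul_smul]
    congr 1
    field_simp
  have hcomm : Commute ((-(w * a)) • (1 : Matrix k k ℂ)) ((w * a) • (a⁻¹ • R)) :=
    ((Commute.one_left _).smul_left _).smul_right _
  rw [hsplit, Matrix.exp_add_of_commute _ _ hcomm,
    mexp_idem (1 : Matrix k k ℂ) (one_mul 1) _, mexp_idem _ hQ _]
  have h1 : (1 : Matrix k k ℂ) + (Complex.exp (-(w * a)) - 1) • (1 : Matrix k k ℂ)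
      = Complex.exp (-(w * a)) • (1 : Matrix k k ℂ) := by
    rw [sub_smul, one_smul]
    abel
  rw [h1, Matrix.smul_mul, one_mul, smul_add, smul_smul, smul_smul]
  congr 2
  have hEF : Complex.exp (-(w * a)) * Complex.exp (w * a) = 1 := by
    rw [← Complex.exp_add]; simp
  linear_combination a⁻¹ * hEF

end mainhelp

theorem stmt1 (m n : ℕ) (hm : 1 ≤ m) (hn : 1 ≤ n)
    (LX : Matrix (Fin m) (Fin m) ℝ) (LY : Matrix (Fin n) (Fin n) ℝ)
    (hLXsymm : LX.IsSymm) (hLXrow : ∀ i, ∑ j, LX i j = 0)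
    (hLYsymm : LY.IsSymm) (hLYrow : ∀ i, ∑ j, LY i j = 0) :
    ∀ (u v : Fin m) (t : ℝ),
      transU (joinL m n LX LY) t (Sum.inl u) (Sum.inl v) =
        Complex.exp (Complex.I * (t : ℂ) * (n : ℂ)) * transU LX t u v
          + 1 / ((m : ℂ) + (n : ℂ))
          + (n : ℂ) * Complex.exp (Complex.I * (t : ℂ) * ((m : ℂ) + (n : ℂ)))
              / ((m : ℂ) * ((m : ℂ) + (n : ℂ)))
          - Complex.exp (Complex.I * (t : ℂ) * (n : ℂ)) / (m : ℂ) := by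
  intro u v t
  have hm0 : (m : ℂ) ≠ 0 := Nat.cast_ne_zero.mpr (by omega)
  have hn0 : (n : ℂ) ≠ 0 := Nat.cast_ne_zero.mpr (by omega)
  have hc0 : ((m : ℂ) + (n : ℂ)) ≠ 0 := by
    have : ((m + n : ℕ) : ℂ) ≠ 0 := Nat.cast_ne_zero.mpr (by omega)
    push_cast at this
    exact this
  have hLXcol : ∀ j, ∑ i, LX i j = 0 := by
    intro j
    calc ∑ i, LX i j = ∑ i, LX j i := Finset.sum_congr rfl fun i _ => hLXsymm.apply j i
      _ = 0 := hLXrow j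
  have hLYcol : ∀ j, ∑ i, LY i j = 0 := by
    intro j
    calc ∑ i, LY i j = ∑ i, LY j i := Finset.sum_congr rfl fun i _ => hLYsymm.apply j i
      _ = 0 := hLYrow j
  set z : ℂ := Complex.I * (t : ℂ) with hz
  set c : ℂ := (m : ℂ) + (n : ℂ) with hc
  set KX : Matrix (Fin m) (Fin m) ℂ := LX.map (fun x : ℝ => (x : ℂ)) with hKX
  set KY : Matrix (Fin n) (Fin n) ℂ := LY.map (fun x : ℝ => (x : ℂ)) with hKY
  set Pm : Matrix (Fin m) (Fin m) ℂ := Matrix.of fun _ _ => 1 with hPm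
  set Pn : Matrix (Fin n) (Fin n) ℂ := Matrix.of fun _ _ => 1 with hPn
  set Pmn : Matrix (Fin m) (Fin n) ℂ := Matrix.of fun _ _ => 1 with hPmn
  set Pnm : Matrix (Fin n) (Fin m) ℂ := Matrix.of fun _ _ => 1 with hPnm
  set P : Matrix (Fin m ⊕ Fin n) (Fin m ⊕ Fin n) ℂ := Matrix.of fun _ _ => 1 with hP
  set BX : Matrix (Fin m) (Fin m) ℂ := KX + Pm - (m : ℂ) • 1 with hBX
  set BY : Matrix (Fin n) (Fin n) ℂ := KY + Pn - (n : ℂ) • 1 with hBY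
  set B : Matrix (Fin m ⊕ Fin n) (Fin m ⊕ Fin n) ℂ := Matrix.fromBlocks BX 0 0 BY with hB
  set C : Matrix (Fin m ⊕ Fin n) (Fin m ⊕ Fin n) ℂ := c • 1 - P with hC
  -- all-ones products
  have hPmPm : Pm * Pm = (m : ℂ) • Pm := by have h := ones_mul_ones (k := Fin m) (l := Fin m) (r := Fin m); rw [Fintype.card_fin] at h; exact h
  have hPmPmn : Pm * Pmn = (m : ℂ) • Pmn := by have h := ones_mul_ones (k := Fin m) (l := Fin m) (r := Fin n); rw [Fintype.card_fin] at h; exact h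
  have hPnPn : Pn * Pn = (n : ℂ) • Pn := by have h := ones_mul_ones (k := Fin n) (l := Fin n) (r := Fin n); rw [Fintype.card_fin] at h; exact h
  have hPnPnm : Pn * Pnm = (n : ℂ) • Pnm := by have h := ones_mul_ones (k := Fin n) (l := Fin n) (r := Fin m); rw [Fintype.card_fin] at h; exact h
  have hPP : P * P = c • P := by
    rw [hP, ones_mul_ones]
    congr 1
    simp [hc]
  -- Laplacian-kernel products
  have hKXPm : KX * Pm = 0 := rowsum_mul_ones LX hLXrow
  have hKXPmn : KX * Pmn = 0 := rowsum_mul_ones LX hLXrow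
  have hPmKX : Pm * KX = 0 := ones_mul_colsum LX hLXcol
  have hPnmKX : Pnm * KX = 0 := ones_mul_colsum LX hLXcol
  have hKYPn : KY * Pn = 0 := rowsum_mul_ones LY hLYrow
  have hKYPnm : KY * Pnm = 0 := rowsum_mul_ones LY hLYrow
  have hPnKY : Pn * KY = 0 := ones_mul_colsum LY hLYcol
  have hPmnKY : Pmn * KY = 0 := ones_mul_colsum LY hLYcol
  -- BX, BY annihilate ones
  have hBXPm : BX * Pm = 0 := by
    rw [hBX, Matrix.sub_mul, Matrix.add_mul, hKXPm, hPmPm, Matrix.smul_mul, Matrix.one_mul]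
    simp
  have hBXPmn : BX * Pmn = 0 := by
    rw [hBX, Matrix.sub_mul, Matrix.add_mul, hKXPmn, hPmPmn, Matrix.smul_mul, Matrix.one_mul]
    simp
  have hPmBX : Pm * BX = 0 := by
    rw [hBX, Matrix.mul_sub, Matrix.mul_add, hPmKX, hPmPm, Matrix.mul_smul, Matrix.mul_one]
    simp
  have hPnmBX : Pnm * BX = 0 := by
    rw [hBX, Matrix.mul_sub, Matrix.mul_add, hPnmKX]
    have : Pnm * Pm = (m : ℂ) • Pnm := by have h := ones_mul_ones (k := Fin n) (l := Fin m) (r := Fin m); rw [Fintype.card_fin] at h; exact h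
    rw [this, Matrix.mul_smul, Matrix.mul_one]
    simp
  have hBYPn : BY * Pn = 0 := by
    rw [hBY, Matrix.sub_mul, Matrix.add_mul, hKYPn, hPnPn, Matrix.smul_mul, Matrix.one_mul]
    simp
  have hBYPnm : BY * Pnm = 0 := by
    rw [hBY, Matrix.sub_mul, Matrix.add_mul, hKYPnm, hPnPnm, Matrix.smul_mul, Matrix.one_mul]
    simp
  have hPnBY : Pn * BY = 0 := by
    rw [hBY, Matrix.mul_sub, Matrix.mul_add, hPnKY, hPnPn, Matrix.mul_smul, Matrix.mul_one]
    simp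
  have hPmnBY : Pmn * BY = 0 := by
    rw [hBY, Matrix.mul_sub, Matrix.mul_add, hPmnKY]
    have : Pmn * Pn = (n : ℂ) • Pmn := by have h := ones_mul_ones (k := Fin m) (l := Fin n) (r := Fin n); rw [Fintype.card_fin] at h; exact h
    rw [this, Matrix.mul_smul, Matrix.mul_one]
    simp
  have hPblocks : P = Matrix.fromBlocks Pm Pmn Pnm Pn := by
    ext (i | i) (j | j) <;> rfl
  have hBP : B * P = 0 := by
    rw [hPblocks, hB, Matrix.fromBlocks_multiply]
    rw [hBXPm, hBXPmn, hBYPnm, hBYPn]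
    simp [Matrix.fromBlocks_zero]
  have hPB : P * B = 0 := by
    rw [hPblocks, hB, Matrix.fromBlocks_multiply]
    rw [hPmBX, hPnmBX, hPmnBY, hPnBY]
    simp [Matrix.fromBlocks_zero]
  have hLeq : (joinL m n LX LY).map (fun x : ℝ => (x : ℂ)) = B + C := by
    rw [joinL, hB, hC, hPblocks, hBX, hBY]
    ext (i | i) (j | j) <;>
      simp only [Matrix.fromBlocks_apply₁₁, Matrix.fromBlocks_apply₁₂, Matrix.fromBlocks_apply₂₁,
        Matrix.fromBlocks_apply₂₂, Matrix.map_apply, Matrix.add_apply, Matrix.sub_apply,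
        Matrix.smul_apply, Matrix.one_apply, Matrix.of_apply, Matrix.neg_apply,
        Matrix.zero_apply, hPm, hPn, hPmn, hPnm, hKX, hKY, hc, smul_eq_mul] <;>
      first
        | (split_ifs <;> (first | (push_cast <;> ring1) | simp_all))
        | (push_cast <;> ring)
  have hCommBC : Commute B C := by
    show B * C = C * B
    rw [hC, Matrix.mul_sub, Matrix.sub_mul, hBP, hPB, Matrix.mul_smul, Matrix.smul_mul, Matrix.mul_one, Matrix.one_mul]
  have hmain : transU (joinL m n LX LY) t = NormedSpace.exp (z • B) * NormedSpace.exp (z • C) := by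
    rw [transU, hLeq, smul_add]
    exact Matrix.exp_add_of_commute _ _ ((hCommBC.smul_left z).smul_right z)
  -- exp of z • C
  have hexpC : NormedSpace.exp (z • C)
      = Complex.exp (z * c) • (1 : Matrix (Fin m ⊕ Fin n) (Fin m ⊕ Fin n) ℂ)
        + ((1 - Complex.exp (z * c)) * c⁻¹) • P := by
    have hsplit : z • C = (-((-z) * c)) • (1 : Matrix (Fin m ⊕ Fin n) (Fin m ⊕ Fin n) ℂ) + (-z) • P := by
      rw [hC]
      module
    rw [hsplit, exp_scaled_shift P c hc0 hPP (-z)]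
    ring_nf
  -- exp of z • BX
  have hKXPm0 : (z • KX) * Pm = 0 := by rw [Matrix.smul_mul, hKXPm, smul_zero]
  have hEXPm : NormedSpace.exp (z • KX) * Pm = Pm := mexp_mul_eq_of_mul_eq_zero _ _ hKXPm0
  have hexpBX : NormedSpace.exp (z • BX)
      = Complex.exp (-(z * (m : ℂ))) • NormedSpace.exp (z • KX)
        + ((1 - Complex.exp (-(z * (m : ℂ)))) * (m : ℂ)⁻¹) • Pm := by
    have hsplit : z • BX = z • KX + ((-(z * (m : ℂ))) • (1 : Matrix (Fin m) (Fin m) ℂ) + z • Pm) := by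
      rw [hBX]
      module
    have hcomm : Commute (z • KX) ((-(z * (m : ℂ))) • (1 : Matrix (Fin m) (Fin m) ℂ) + z • Pm) := by
      have h1 : Commute KX Pm := by show KX * Pm = Pm * KX; rw [hKXPm, hPmKX]
      exact (((Commute.one_right KX).smul_right _).add_right ((h1.smul_right z))).smul_left z
    rw [hsplit, Matrix.exp_add_of_commute _ _ hcomm, exp_scaled_shift Pm (m : ℂ) hm0 hPmPm z,
      Matrix.mul_add, Matrix.mul_smul, Matrix.mul_smul, Matrix.mul_one, hEXPm]
  -- assemble
  have hexpB : NormedSpace.exp (z • B)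
      = Matrix.fromBlocks (NormedSpace.exp (z • BX)) 0 0 (NormedSpace.exp (z • BY)) := by
    rw [hB]
    rw [show z • Matrix.fromBlocks BX 0 0 BY
        = Matrix.fromBlocks (z • BX) (0 : Matrix (Fin m) (Fin n) ℂ)
            (0 : Matrix (Fin n) (Fin m) ℂ) (z • BY) by
      rw [Matrix.fromBlocks_smul, smul_zero, smul_zero]]
    exact exp_fromBlocks _ _
  have hexpBP : NormedSpace.exp (z • B) * P = P :=
    mexp_mul_eq_of_mul_eq_zero _ _ (by rw [Matrix.smul_mul, hBP, smul_zero])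
  have hfinal : transU (joinL m n LX LY) t
      = Complex.exp (z * c) • NormedSpace.exp (z • B)
        + ((1 - Complex.exp (z * c)) * c⁻¹) • P := by
    rw [hmain, hexpC, Matrix.mul_add, Matrix.mul_smul, Matrix.mul_one, Matrix.mul_smul, hexpBP]
  rw [hfinal]
  have hEX : transU LX t = NormedSpace.exp (z • KX) := rfl
  rw [hEX]
  simp only [Matrix.add_apply, Matrix.smul_apply, hexpB, Matrix.fromBlocks_apply₁₁, hexpBX,
    hP, hPm, Matrix.of_apply, smul_eq_mul]
  -- scalar arithmetic
  have hA : Complex.exp (z * (m : ℂ)) * Complex.exp (-(z * (m : ℂ))) = 1 := by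
    rw [← Complex.exp_add]; simp
  have hE1 : Complex.exp (z * c) = Complex.exp (z * (m : ℂ)) * Complex.exp (z * (n : ℂ)) := by
    rw [← Complex.exp_add, hc]; ring_nf
  rw [hE1, Complex.exp_neg]
  rw [hc] at hc0 ⊢
  field_simp [Complex.exp_ne_zero]
  ring
end

section
/- For all u ∈ {1,…,m}, w ∈ {1,…,n}, and all t ∈ ℝ, the (u, m+w) entry of U_A(X∨Y,t) equals (e^{itλ⁺} − e^{itλ⁻})/√D. -/
open Matrix Complex

noncomputable def crSeq (k l mn : ℝ) : ℕ → ℝ × ℝ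
  | 0 => (0, 1)
  | s + 1 => (k * (crSeq k l mn s).1 + (crSeq k l mn s).2,
      mn * (crSeq k l mn s).1 + l * (crSeq k l mn s).2)

lemma crSeq_closed (k l mn p q : ℝ)
    (hp : p ^ 2 = (k + l) * p - (k * l - mn))
    (hq : q ^ 2 = (k + l) * q - (k * l - mn)) :
    ∀ s : ℕ, (p - q) * (crSeq k l mn s).1 = p ^ s - q ^ s ∧
      (p - q) * (crSeq k l mn s).2 = p ^ s * (p - k) - q ^ s * (q - k) := by
  intro s
  induction s with
  | zero => constructor <;> simp [crSeq] <;> ring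
  | succ s ih =>
    obtain ⟨ih1, ih2⟩ := ih
    constructor
    · show (p - q) * (k * (crSeq k l mn s).1 + (crSeq k l mn s).2) = _
      rw [pow_succ, pow_succ]
      linear_combination k * ih1 + ih2
    · show (p - q) * (mn * (crSeq k l mn s).1 + l * (crSeq k l mn s).2) = _
      rw [pow_succ, pow_succ]
      linear_combination mn * ih1 + l * ih2 - p ^ s * hp + q ^ s * hq

lemma joinA_pow (m n : ℕ) (k l : ℝ)
    (AX : Matrix (Fin m) (Fin m) ℝ) (AY : Matrix (Fin n) (Fin n) ℝ)
    (hAXrow : ∀ i, ∑ j, AX i j = k) (hAYcol : ∀ j, ∑ i, AY i j = l) :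
    ∀ s : ℕ,
      (∀ (u : Fin m) (w : Fin n), ((joinA m n AX AY) ^ s) (Sum.inl u) (Sum.inr w)
          = (crSeq k l ((m : ℝ) * n) s).1) ∧
      (∀ w : Fin n, ∑ w', ((joinA m n AX AY) ^ s) (Sum.inr w') (Sum.inr w)
          = (crSeq k l ((m : ℝ) * n) s).2) := by
  intro s
  induction s with
  | zero =>
    constructor
    · intro u w; simp [crSeq, Matrix.one_apply]
    · intro w; simp [crSeq, Matrix.one_apply]
  | succ s ih =>
    obtain ⟨ih1, ih2⟩ := ih
    rw [pow_succ']
    have e11 : ∀ u u', joinA m n AX AY (Sum.inl u) (Sum.inl u') = AX u u' := fun _ _ => rfl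
    have e12 : ∀ u w', joinA m n AX AY (Sum.inl u) (Sum.inr w') = 1 := fun _ _ => rfl
    have e21 : ∀ w u', joinA m n AX AY (Sum.inr w) (Sum.inl u') = 1 := fun _ _ => rfl
    have e22 : ∀ w w', joinA m n AX AY (Sum.inr w) (Sum.inr w') = AY w w' := fun _ _ => rfl
    constructor
    · intro u w
      rw [Matrix.mul_apply, Fintype.sum_sum_type]
      simp_rw [e11, e12, ih1, one_mul]
      rw [ih2 w, ← Finset.sum_mul, hAXrow]
      simp [crSeq]
    · intro w
      simp_rw [Matrix.mul_apply, Fintype.sum_sum_type]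
      simp_rw [e21, e22, ih1, one_mul]
      have h2 : ∑ x : Fin n, ∑ x1 : Fin n,
          AY x x1 * ((joinA m n AX AY) ^ s) (Sum.inr x1) (Sum.inr w)
          = l * (crSeq k l ((m : ℝ) * n) s).2 := by
        rw [Finset.sum_comm]
        simp_rw [← Finset.sum_mul, hAYcol]
        rw [← Finset.mul_sum, ih2 w]
      rw [Finset.sum_add_distrib, h2]
      simp only [Finset.sum_const, Finset.card_univ, Fintype.card_fin, smul_eq_mul,
        nsmul_eq_mul]
      show _ = (m : ℝ) * n * (crSeq k l ((m : ℝ) * n) s).1 + l * (crSeq k l ((m : ℝ) * n) s).2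
      push_cast
      ring

attribute [local instance] Matrix.linftyOpNormedRing Matrix.linftyOpNormedAlgebra

lemma expEntry {N : Type*} [Fintype N] [DecidableEq N] (M : Matrix N N ℂ) (i j : N) :
    NormedSpace.exp M i j = ∑' s : ℕ, (s.factorial : ℂ)⁻¹ • ((M ^ s) i j) := by
  have hs : Summable fun s : ℕ => (s.factorial : ℂ)⁻¹ • (M ^ s) :=
    NormedSpace.expSeries_summable' (𝕂 := ℂ) M
  rw [NormedSpace.exp_eq_tsum (𝕂 := ℂ)]
  beta_reduce
  erw [tsum_apply hs, tsum_apply (Pi.summable.1 hs i)]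
  simp [Pi.smul_apply]

theorem stmt2 (m n : ℕ) (hm : 1 ≤ m) (hn : 1 ≤ n) (k ℓ : ℝ)
    (AX : Matrix (Fin m) (Fin m) ℝ) (AY : Matrix (Fin n) (Fin n) ℝ)
    (hAXsymm : AX.IsSymm) (hAXnonneg : ∀ i j, 0 ≤ AX i j) (hAXrow : ∀ i, ∑ j, AX i j = k)
    (hAYsymm : AY.IsSymm) (hAYnonneg : ∀ i j, 0 ≤ AY i j) (hAYrow : ∀ i, ∑ j, AY i j = ℓ)
    (D lamPlus lamMinus : ℝ)
    (hD : D = (k - ℓ) ^ 2 + 4 * m * n)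
    (hPlus : lamPlus = (k + ℓ + Real.sqrt D) / 2)
    (hMinus : lamMinus = (k + ℓ - Real.sqrt D) / 2) :
    ∀ (u : Fin m) (w : Fin n) (t : ℝ),
      transU (joinA m n AX AY) t (Sum.inl u) (Sum.inr w) =
        (Complex.exp (Complex.I * (t : ℂ) * (lamPlus : ℂ))
          - Complex.exp (Complex.I * (t : ℂ) * (lamMinus : ℂ))) / ((Real.sqrt D : ℝ) : ℂ) := by
  
  intro u w t
  have hm' : (1 : ℝ) ≤ m := by exact_mod_cast hm
  have hn' : (1 : ℝ) ≤ n := by exact_mod_cast hn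
  have hAYcol : ∀ j, ∑ i, AY i j = ℓ := by
    intro j
    rw [← hAYrow j]
    refine Finset.sum_congr rfl fun i _ => ?_
    have := congrFun (congrFun hAYsymm j) i
    simpa [Matrix.transpose_apply] using this
  have hD0 : 0 < D := by
    rw [hD]; nlinarith [sq_nonneg (k - ℓ), hm', hn']
  have hsqrt : Real.sqrt D ^ 2 = D := Real.sq_sqrt hD0.le
  have hsd : 0 < Real.sqrt D := Real.sqrt_pos.mpr hD0
  have hpq : lamPlus - lamMinus = Real.sqrt D := by rw [hPlus, hMinus]; ring
  have hp : lamPlus ^ 2 = (k + ℓ) * lamPlus - (k * ℓ - (m : ℝ) * n) := by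
    rw [hPlus]; linear_combination hsqrt / 4 + hD / 4
  have hq : lamMinus ^ 2 = (k + ℓ) * lamMinus - (k * ℓ - (m : ℝ) * n) := by
    rw [hMinus]; linear_combination hsqrt / 4 + hD / 4
  have key := joinA_pow m n k ℓ AX AY hAXrow hAYcol
  have closed := crSeq_closed k ℓ ((m : ℝ) * n) lamPlus lamMinus hp hq
  set z : ℂ := Complex.I * (t : ℂ) with hz
  set A' : Matrix (Fin m ⊕ Fin n) (Fin m ⊕ Fin n) ℂ :=
    (joinA m n AX AY).map (fun x : ℝ => (x : ℂ)) with hA'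
  have hmap : ∀ s : ℕ, A' ^ s = ((joinA m n AX AY) ^ s).map (fun x : ℝ => (x : ℂ)) := by
    intro s
    have h1 : A' = Complex.ofRealHom.mapMatrix (joinA m n AX AY) := rfl
    have h2 : ((joinA m n AX AY) ^ s).map (fun x : ℝ => (x : ℂ))
        = Complex.ofRealHom.mapMatrix ((joinA m n AX AY) ^ s) := rfl
    rw [h1, h2, ← map_pow]
  have hA's : ∀ s : ℕ, ((z • A') ^ s) (Sum.inl u) (Sum.inr w)
      = z ^ s * (((crSeq k ℓ ((m : ℝ) * n) s).1 : ℝ) : ℂ) := by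
    intro s
    rw [smul_pow, hmap s]
    simp [Matrix.smul_apply, Matrix.map_apply, (key s).1 u w]
  have hc : ∀ s : ℕ, (((crSeq k ℓ ((m : ℝ) * n) s).1 : ℝ) : ℂ)
      = (((lamPlus : ℂ)) ^ s - ((lamMinus : ℂ)) ^ s) / ((Real.sqrt D : ℝ) : ℂ) := by
    intro s
    have h1 := (closed s).1
    rw [hpq] at h1
    have h2 : (crSeq k ℓ ((m : ℝ) * n) s).1
        = (lamPlus ^ s - lamMinus ^ s) / Real.sqrt D := by
      rw [eq_div_iff hsd.ne', mul_comm]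
      exact h1
    rw [h2]
    push_cast
    ring
  show NormedSpace.exp (z • A') (Sum.inl u) (Sum.inr w) = _
  rw [expEntry]
  have hterm : ∀ s : ℕ, (s.factorial : ℂ)⁻¹ • (((z • A') ^ s) (Sum.inl u) (Sum.inr w))
      = ((s.factorial : ℂ)⁻¹ • (z * (lamPlus : ℂ)) ^ s
          - (s.factorial : ℂ)⁻¹ • (z * (lamMinus : ℂ)) ^ s) / ((Real.sqrt D : ℝ) : ℂ) := by
    intro s
    rw [hA's s, hc s, smul_eq_mul, smul_eq_mul, smul_eq_mul, mul_pow, mul_pow]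
    ring
  rw [tsum_congr hterm, tsum_div_const,
    Summable.tsum_sub (NormedSpace.expSeries_summable' (𝕂 := ℂ) (z * (lamPlus : ℂ)))
      (NormedSpace.expSeries_summable' (𝕂 := ℂ) (z * (lamMinus : ℂ))),
    show ∑' s : ℕ, (s.factorial : ℂ)⁻¹ • (z * (lamPlus : ℂ)) ^ s = Complex.exp (z * lamPlus) by
      rw [Complex.exp_eq_exp_ℂ, NormedSpace.exp_eq_tsum (𝕂 := ℂ)],
    show ∑' s : ℕ, (s.factorial : ℂ)⁻¹ • (z * (lamMinus : ℂ)) ^ s = Complex.exp (z * lamMinus) by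
      rw [Complex.exp_eq_exp_ℂ, NormedSpace.exp_eq_tsum (𝕂 := ℂ)]]
end

section
/- For all u, v ∈ {1,…,m} and all t ∈ ℝ, U_A(X∨Y,t)_{u,v} = U_A(X,t)_{u,v} + e^{itλ⁺}(k−λ⁻)/(m√D) − e^{itλ⁻}(k−λ⁺)/(m√D) − e^{itk}/m. -/
open Matrix Complex

private lemma expSum_mulVec {N : Type*} [Fintype N] [DecidableEq N]
    (M : Matrix N N ℂ) (w : N → ℂ) :
    (NormedSpace.exp M).mulVec w = ∑' p : ℕ, ((p.factorial : ℂ)⁻¹ • (M ^ p).mulVec w) := by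
  letI : SeminormedRing (Matrix N N ℂ) := Matrix.linftyOpSemiNormedRing
  letI : NormedRing (Matrix N N ℂ) := Matrix.linftyOpNormedRing
  letI : NormedAlgebra ℂ (Matrix N N ℂ) := Matrix.linftyOpNormedAlgebra
  let f : Matrix N N ℂ →L[ℂ] (N → ℂ) :=
    { toLinearMap :=
      { toFun := fun A => A.mulVec w
        map_add' := fun A B => Matrix.add_mulVec A B w
        map_smul' := fun a A => by simp [Matrix.smul_mulVec] }
      cont := continuous_id.matrix_mulVec continuous_const }
  have hs : Summable (fun p : ℕ => (p.factorial : ℂ)⁻¹ • M ^ p) :=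
    NormedSpace.expSeries_summable' M
  have h1 : (NormedSpace.exp M).mulVec w = f (∑' p : ℕ, (p.factorial : ℂ)⁻¹ • M ^ p) := by
    rw [NormedSpace.exp_eq_tsum ℂ]; rfl
  rw [h1, f.map_tsum hs]
  simp [f, Matrix.smul_mulVec]

private lemma exp_mulVec_eigen {N : Type*} [Fintype N] [DecidableEq N]
    (M : Matrix N N ℂ) (w : N → ℂ) (μ : ℂ) (h : M.mulVec w = μ • w) :
    (NormedSpace.exp M).mulVec w = Complex.exp μ • w := by
  have hpow : ∀ p : ℕ, (M ^ p).mulVec w = μ ^ p • w := by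
    intro p
    induction p with
    | zero => simp [Matrix.one_mulVec]
    | succ p ih =>
      rw [pow_succ, ← Matrix.mulVec_mulVec, h, Matrix.mulVec_smul, ih, smul_smul, ← pow_succ']
  rw [expSum_mulVec]
  have hsum : Summable (fun p : ℕ => (p.factorial : ℂ)⁻¹ • μ ^ p) :=
    NormedSpace.expSeries_summable' μ
  calc ∑' p : ℕ, ((p.factorial : ℂ)⁻¹ • (M ^ p).mulVec w)
      = ∑' p : ℕ, ((p.factorial : ℂ)⁻¹ • μ ^ p) • w := by
        simp_rw [hpow, smul_smul, smul_eq_mul]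
    _ = (∑' p : ℕ, (p.factorial : ℂ)⁻¹ • μ ^ p) • w := hsum.tsum_smul_const w
    _ = Complex.exp μ • w := by rw [Complex.exp_eq_exp_ℂ, NormedSpace.exp_eq_tsum ℂ]

private lemma exp_mulVec_invariant {α β : Type*} [Fintype α] [Fintype β] [DecidableEq α]
    [DecidableEq β] (M : Matrix (α ⊕ β) (α ⊕ β) ℂ) (MX : Matrix α α ℂ) (S : Set (α → ℂ))
    (hS : ∀ x ∈ S, MX.mulVec x ∈ S)
    (hM : ∀ x ∈ S, M.mulVec (Sum.elim x 0) = Sum.elim (MX.mulVec x) 0)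
    (x : α → ℂ) (hx : x ∈ S) :
    (NormedSpace.exp M).mulVec (Sum.elim x 0) =
      Sum.elim ((NormedSpace.exp MX).mulVec x) 0 := by
  have hpow : ∀ p : ℕ, (MX ^ p).mulVec x ∈ S ∧
      (M ^ p).mulVec (Sum.elim x 0) = Sum.elim ((MX ^ p).mulVec x) 0 := by
    intro p
    induction p with
    | zero => simpa [Matrix.one_mulVec] using hx
    | succ p ih =>
      obtain ⟨h1, h2⟩ := ih
      constructor
      · rw [pow_succ', ← Matrix.mulVec_mulVec]
        exact hS _ h1
      · rw [pow_succ', pow_succ', ← Matrix.mulVec_mulVec, ← Matrix.mulVec_mulVec, h2, hM _ h1]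
  rw [expSum_mulVec, expSum_mulVec]
  have : ∀ p : ℕ, (p.factorial : ℂ)⁻¹ • (M ^ p).mulVec (Sum.elim x 0) =
      Sum.elim ((p.factorial : ℂ)⁻¹ • (MX ^ p).mulVec x) 0 := by
    intro p
    rw [(hpow p).2]
    funext s
    cases s <;> simp
  rw [tsum_congr this]
  letI : SeminormedRing (Matrix α α ℂ) := Matrix.linftyOpSemiNormedRing
  letI : NormedRing (Matrix α α ℂ) := Matrix.linftyOpNormedRing
  letI : NormedAlgebra ℂ (Matrix α α ℂ) := Matrix.linftyOpNormedAlgebra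
  let f : Matrix α α ℂ →L[ℂ] (α → ℂ) :=
    { toLinearMap :=
      { toFun := fun A => A.mulVec x
        map_add' := fun A B => Matrix.add_mulVec A B x
        map_smul' := fun a A => by simp [Matrix.smul_mulVec] }
      cont := continuous_id.matrix_mulVec continuous_const }
  let g : (α → ℂ) →L[ℂ] (α ⊕ β → ℂ) :=
    { toLinearMap :=
      { toFun := fun y => Sum.elim y 0
        map_add' := fun y z => by funext s; cases s <;> simp
        map_smul' := fun a y => by funext s; cases s <;> simp }
      cont := continuous_pi fun s => by cases s with
        | inl a => exact continuous_apply a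
        | inr b => exact continuous_const }
  have hs : Summable (fun p : ℕ => (p.factorial : ℂ)⁻¹ • MX ^ p) :=
    NormedSpace.expSeries_summable' MX
  have hA : Summable (fun p : ℕ => (p.factorial : ℂ)⁻¹ • (MX ^ p).mulVec x) := by
    have h := hs.map f f.continuous
    have he : (⇑f ∘ fun p : ℕ => (p.factorial : ℂ)⁻¹ • MX ^ p) =
        fun p : ℕ => (p.factorial : ℂ)⁻¹ • (MX ^ p).mulVec x := by
      funext p
      simp [f, Function.comp, Matrix.smul_mulVec]
    rwa [he] at h
  have hg : ∀ p : ℕ, Sum.elim ((p.factorial : ℂ)⁻¹ • (MX ^ p).mulVec x) (0 : β → ℂ) =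
      g ((p.factorial : ℂ)⁻¹ • (MX ^ p).mulVec x) := fun p => rfl
  rw [tsum_congr hg, ← g.map_tsum hA]
  rfl


theorem stmt3 (m n : ℕ) (hm : 1 ≤ m) (hn : 1 ≤ n) (k ℓ : ℝ)
    (AX : Matrix (Fin m) (Fin m) ℝ) (AY : Matrix (Fin n) (Fin n) ℝ)
    (hAXsymm : AX.IsSymm) (hAXnonneg : ∀ i j, 0 ≤ AX i j) (hAXrow : ∀ i, ∑ j, AX i j = k)
    (hAYsymm : AY.IsSymm) (hAYnonneg : ∀ i j, 0 ≤ AY i j) (hAYrow : ∀ i, ∑ j, AY i j = ℓ)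
    (D lamPlus lamMinus : ℝ)
    (hD : D = (k - ℓ) ^ 2 + 4 * m * n)
    (hPlus : lamPlus = (k + ℓ + Real.sqrt D) / 2)
    (hMinus : lamMinus = (k + ℓ - Real.sqrt D) / 2) :
    ∀ (u v : Fin m) (t : ℝ),
      transU (joinA m n AX AY) t (Sum.inl u) (Sum.inl v) =
        transU AX t u v
          + Complex.exp (Complex.I * (t : ℂ) * (lamPlus : ℂ)) * ((k : ℂ) - (lamMinus : ℂ))
              / ((m : ℂ) * ((Real.sqrt D : ℝ) : ℂ))
          - Complex.exp (Complex.I * (t : ℂ) * (lamMinus : ℂ)) * ((k : ℂ) - (lamPlus : ℂ))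
              / ((m : ℂ) * ((Real.sqrt D : ℝ) : ℂ))
          - Complex.exp (Complex.I * (t : ℂ) * (k : ℂ)) / (m : ℂ) := by
  intro u v t
  classical
  have hm0 : (m : ℂ) ≠ 0 := Nat.cast_ne_zero.mpr (by omega)
  have hn0 : (n : ℂ) ≠ 0 := Nat.cast_ne_zero.mpr (by omega)
  have hD0 : (0 : ℝ) < D := by
    rw [hD]
    have h1 : (1 : ℝ) ≤ (m : ℝ) := by exact_mod_cast hm
    have h2 : (1 : ℝ) ≤ (n : ℝ) := by exact_mod_cast hn
    nlinarith [sq_nonneg (k - ℓ)]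
  have hsd : (0 : ℝ) < Real.sqrt D := Real.sqrt_pos.mpr hD0
  have hsd2 : (Real.sqrt D) ^ 2 = D := Real.sq_sqrt hD0.le
  set c : ℂ := Complex.I * (t : ℂ) with hc
  set K : ℂ := (k : ℂ) with hK
  set L : ℂ := (ℓ : ℂ) with hL
  set SD : ℂ := ((Real.sqrt D : ℝ) : ℂ) with hSD
  set P : ℂ := (lamPlus : ℂ) with hP
  set Q : ℂ := (lamMinus : ℂ) with hQ
  have hSD0 : SD ≠ 0 := by
    rw [hSD]
    exact_mod_cast hsd.ne'
  have hPc : P = (K + L + SD) / 2 := by rw [hP, hPlus]; push_cast; ring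
  have hQc : Q = (K + L - SD) / 2 := by rw [hQ, hMinus]; push_cast; ring
  have hSD2 : SD ^ 2 = (K - L) ^ 2 + 4 * (m : ℂ) * (n : ℂ) := by
    rw [hSD, hK, hL]
    have : ((Real.sqrt D) ^ 2 : ℝ) = (k - ℓ) ^ 2 + 4 * m * n := by rw [hsd2, hD]
    exact_mod_cast this
  have hPQ : P - Q = SD := by rw [hPc, hQc]; ring
  have hPK : (P - K) * (P - L) = (m : ℂ) * (n : ℂ) := by
    rw [hPc]; linear_combination hSD2 / 4
  have hQK : (Q - K) * (Q - L) = (m : ℂ) * (n : ℂ) := by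
    rw [hQc]; linear_combination hSD2 / 4
  set AXc : Matrix (Fin m) (Fin m) ℂ := AX.map (fun x : ℝ => (x : ℂ)) with hAXc
  set AYc : Matrix (Fin n) (Fin n) ℂ := AY.map (fun x : ℝ => (x : ℂ)) with hAYc
  set Ac : Matrix (Fin m ⊕ Fin n) (Fin m ⊕ Fin n) ℂ :=
    (joinA m n AX AY).map (fun x : ℝ => (x : ℂ)) with hAcDef
  set M : Matrix (Fin m ⊕ Fin n) (Fin m ⊕ Fin n) ℂ := c • Ac with hM
  set MX : Matrix (Fin m) (Fin m) ℂ := c • AXc with hMX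
  -- row/column sums
  have hrX : ∀ i, ∑ j, AXc i j = K := by
    intro i; rw [hK, ← hAXrow i]; push_cast [hAXc, Matrix.map_apply]; rfl
  have hcX : ∀ j, ∑ i, AXc i j = K := by
    intro j
    have : ∀ i, AXc i j = AXc j i := by
      intro i; simp [hAXc, Matrix.map_apply, hAXsymm.apply]
    rw [Finset.sum_congr rfl (fun i _ => this i)]
    exact hrX j
  have hrY : ∀ i, ∑ j, AYc i j = L := by
    intro i; rw [hL, ← hAYrow i]; push_cast [hAYc, Matrix.map_apply]; rfl
  -- mulVec formula for Ac
  have hmulA : ∀ (w : Fin m ⊕ Fin n → ℂ) (s : Fin m ⊕ Fin n),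
      Ac.mulVec w s = Sum.elim
        (fun i => (∑ j, AXc i j * w (Sum.inl j)) + ∑ j, w (Sum.inr j))
        (fun i => (∑ j, w (Sum.inl j)) + ∑ j, AYc i j * w (Sum.inr j)) s := by
    intro w s
    cases s with
    | inl i =>
      simp [hAcDef, Matrix.mulVec, dotProduct, Fintype.sum_sum_type, joinA,
        Matrix.fromBlocks, hAXc]
    | inr i =>
      simp [hAcDef, Matrix.mulVec, dotProduct, Fintype.sum_sum_type, joinA,
        Matrix.fromBlocks, hAYc]
  -- eigenvectors in the span of the two all-ones parts
  set wP : Fin m ⊕ Fin n → ℂ :=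
    Sum.elim (fun _ => (1 : ℂ)) (fun _ => (P - K) / (n : ℂ)) with hwP
  set wQ : Fin m ⊕ Fin n → ℂ :=
    Sum.elim (fun _ => (1 : ℂ)) (fun _ => (Q - K) / (n : ℂ)) with hwQ
  have heigP : M.mulVec wP = (c * P) • wP := by
    funext s
    rw [hM, Matrix.smul_mulVec, Pi.smul_apply, Pi.smul_apply, hmulA]
    cases s with
    | inl i =>
      simp only [Sum.elim_inl, hwP, Sum.elim_inr, smul_eq_mul, mul_one]
      rw [hrX, Finset.sum_const, Finset.card_univ, Fintype.card_fin, nsmul_eq_mul]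
      field_simp
      ring
    | inr i =>
      simp only [Sum.elim_inl, hwP, Sum.elim_inr, smul_eq_mul]
      rw [← Finset.sum_mul, hrY, Finset.sum_const, Finset.card_univ, Fintype.card_fin,
        nsmul_eq_mul, mul_one]
      field_simp
      linear_combination (-c) * hPK
  have heigQ : M.mulVec wQ = (c * Q) • wQ := by
    funext s
    rw [hM, Matrix.smul_mulVec, Pi.smul_apply, Pi.smul_apply, hmulA]
    cases s with
    | inl i =>
      simp only [Sum.elim_inl, hwQ, Sum.elim_inr, smul_eq_mul, mul_one]
      rw [hrX, Finset.sum_const, Finset.card_univ, Fintype.card_fin, nsmul_eq_mul]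
      field_simp
      ring
    | inr i =>
      simp only [Sum.elim_inl, hwQ, Sum.elim_inr, smul_eq_mul]
      rw [← Finset.sum_mul, hrY, Finset.sum_const, Finset.card_univ, Fintype.card_fin,
        nsmul_eq_mul, mul_one]
      field_simp
      linear_combination (-c) * hQK
  have heigK : MX.mulVec (fun _ => (1 : ℂ)) = (c * K) • (fun _ => (1 : ℂ)) := by
    funext i
    rw [hMX, Matrix.smul_mulVec, Pi.smul_apply, Pi.smul_apply]
    simp only [Matrix.mulVec, dotProduct, mul_one, smul_eq_mul]
    rw [hrX]
  -- invariant subspace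
  set S : Set (Fin m → ℂ) := {x | ∑ i, x i = 0} with hSdef
  have hS : ∀ x ∈ S, MX.mulVec x ∈ S := by
    intro x hx
    show ∑ i, MX.mulVec x i = 0
    have : ∀ i, MX.mulVec x i = c * ∑ j, AXc i j * x j := by
      intro i
      rw [hMX, Matrix.smul_mulVec, Pi.smul_apply, smul_eq_mul]
      rfl
    rw [Finset.sum_congr rfl (fun i _ => this i), ← Finset.mul_sum, Finset.sum_comm]
    have : ∀ j : Fin m, ∑ i, AXc i j * x j = K * x j := by
      intro j; rw [← Finset.sum_mul, hcX]
    rw [Finset.sum_congr rfl (fun j _ => this j), ← Finset.mul_sum, hx]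
    ring
  have hMinv : ∀ x ∈ S, M.mulVec (Sum.elim x 0) = Sum.elim (MX.mulVec x) 0 := by
    intro x hx
    funext s
    rw [hM, Matrix.smul_mulVec, Pi.smul_apply, hmulA]
    cases s with
    | inl i =>
      simp only [Sum.elim_inl, Sum.elim_inr, Pi.zero_apply, Finset.sum_const_zero, add_zero,
        smul_eq_mul]
      rw [hMX, Matrix.smul_mulVec, Pi.smul_apply, smul_eq_mul]
      rfl
    | inr i =>
      simp only [Sum.elim_inl, Sum.elim_inr, Pi.zero_apply, smul_eq_mul, mul_zero,
        Finset.sum_const_zero, add_zero]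
      rw [hx]
      simp
  -- decomposition of the standard basis vector
  set x0 : Fin m → ℂ := fun i => (if i = v then (1 : ℂ) else 0) - 1 / (m : ℂ) with hx0def
  have hx0 : x0 ∈ S := by
    show ∑ i, x0 i = 0
    simp only [hx0def, Finset.sum_sub_distrib, Finset.sum_ite_eq', Finset.mem_univ, if_true,
      Finset.sum_const, Finset.card_univ, Fintype.card_fin, nsmul_eq_mul]
    field_simp
    ring
  have hsum1 : (K - Q) / SD / (m : ℂ) + (P - K) / SD / (m : ℂ) = 1 / (m : ℂ) := by
    rw [div_div, div_div, ← add_div,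
      show K - Q + (P - K) = SD from by linear_combination hPQ, mul_comm,
      div_mul_eq_div_div, div_right_comm, div_self hSD0]
  have hdecomp : (Pi.single (Sum.inl v) (1 : ℂ) : Fin m ⊕ Fin n → ℂ) =
      Sum.elim x0 0 + ((K - Q) / SD / (m : ℂ)) • wP + ((P - K) / SD / (m : ℂ)) • wQ := by
    funext s
    cases s with
    | inl i =>
      simp only [Pi.add_apply, Pi.smul_apply, Sum.elim_inl, hwP, hwQ, smul_eq_mul, mul_one,
        hx0def, Pi.single_apply, Sum.inl.injEq]
      linear_combination (-1 : ℂ) * hsum1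
    | inr j =>
      simp only [Pi.add_apply, Pi.smul_apply, Sum.elim_inr, hwP, hwQ, smul_eq_mul,
        Pi.zero_apply, Pi.single_apply]
      rw [if_neg (by simp)]
      field_simp
      ring
  -- assemble
  have hcol : ∀ (N : Matrix (Fin m ⊕ Fin n) (Fin m ⊕ Fin n) ℂ),
      N.mulVec (Pi.single (Sum.inl v) (1 : ℂ)) (Sum.inl u) = N (Sum.inl u) (Sum.inl v) := by
    intro N; rw [Matrix.mulVec_single]; simp
  have hx0d : x0 = Pi.single v (1 : ℂ) - (1 / (m : ℂ)) • (fun _ => (1 : ℂ)) := by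
    funext i
    simp [hx0def, Pi.single_apply]
  have hLHS : transU (joinA m n AX AY) t (Sum.inl u) (Sum.inl v) =
      NormedSpace.exp M (Sum.inl u) (Sum.inl v) := rfl
  rw [hLHS, ← hcol (NormedSpace.exp M), hdecomp, Matrix.mulVec_add, Matrix.mulVec_add, Matrix.mulVec_smul,
    Matrix.mulVec_smul, exp_mulVec_invariant M MX S hS hMinv x0 hx0,
    exp_mulVec_eigen M wP (c * P) heigP, exp_mulVec_eigen M wQ (c * Q) heigQ]
  have hXcol : (NormedSpace.exp MX).mulVec x0 u =
      transU AX t u v - (1 / (m : ℂ)) * Complex.exp (c * K) := by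
    rw [hx0d, Matrix.mulVec_sub, Matrix.mulVec_smul,
      exp_mulVec_eigen MX (fun _ => (1 : ℂ)) (c * K) heigK, Matrix.mulVec_single]
    simp only [Pi.sub_apply, Pi.smul_apply, smul_eq_mul, mul_one, op_smul_eq_mul]
    rfl
  simp only [Pi.add_apply, Pi.smul_apply, Sum.elim_inl, hwP, hwQ, smul_eq_mul, mul_one, hXcol]
  rw [hK, hP, hQ, hSD, hc]
  field_simp
  ring
end

section
/- Assume in addition that the kernel of L_X is one-dimensional (X is connected). Then for every u ∈ {1,…,m}, the eigenvalue support satisfies σ_u(L) = {λ + n : λ ∈ σ_u(L_X), λ ≠ 0} ∪ {0, m+n}. -/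
open Matrix Complex

lemma sum_mulVec_eq_zero {m : ℕ} (LX : Matrix (Fin m) (Fin m) ℝ) (hs : LX.IsSymm)
    (hr : ∀ i, ∑ j, LX i j = 0) (x : Fin m → ℝ) :
    ∑ i, LX.mulVec x i = 0 := by
  simp only [Matrix.mulVec, dotProduct]
  rw [Finset.sum_comm]
  refine Finset.sum_eq_zero fun j _ => ?_
  rw [← Finset.sum_mul]
  have hcol : ∑ i, LX i j = 0 := by
    rw [show ∑ i, LX i j = ∑ i, LX j i from Finset.sum_congr rfl fun i _ => hs.apply i j ▸ rfl, hr j]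
  rw [hcol, zero_mul]

lemma mulVec_const_zero {m : ℕ} (LX : Matrix (Fin m) (Fin m) ℝ)
    (hr : ∀ i, ∑ j, LX i j = 0) (c : ℝ) :
    LX.mulVec (fun _ => c) = 0 := by
  funext i
  simp only [Matrix.mulVec, dotProduct, Pi.zero_apply]
  rw [← Finset.sum_mul, hr i, zero_mul]

lemma ker_const {m : ℕ} (hm : 1 ≤ m) (LX : Matrix (Fin m) (Fin m) ℝ)
    (hones : LX.mulVec (fun _ => 1) = 0)
    (hconn : Module.finrank ℝ (LinearMap.ker (Matrix.toLin' LX)) = 1)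
    (x : Fin m → ℝ) (hx : LX.mulVec x = 0) : ∃ c : ℝ, x = fun _ => c := by
  have h1 : (fun _ => (1:ℝ)) ∈ LinearMap.ker (Matrix.toLin' LX) := by
    simp [LinearMap.mem_ker, Matrix.toLin'_apply, hones]
  have hne : (fun _ => (1:ℝ)) ≠ (0 : Fin m → ℝ) := by
    intro h; have := congrFun h ⟨0, hm⟩; simp at this
  have hspan : Submodule.span ℝ {(fun _ => (1:ℝ) : Fin m → ℝ)} = LinearMap.ker (Matrix.toLin' LX) := by
    apply Submodule.eq_of_le_of_finrank_le (Submodule.span_le.2 (by simpa using h1))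
    rw [hconn, finrank_span_singleton hne]
  have hxk : x ∈ LinearMap.ker (Matrix.toLin' LX) := by
    simp [LinearMap.mem_ker, Matrix.toLin'_apply, hx]
  rw [← hspan, Submodule.mem_span_singleton] at hxk
  obtain ⟨c, hc⟩ := hxk
  exact ⟨c, by rw [← hc]; funext i; simp⟩

lemma joinL_mulVec {m n : ℕ} (LX : Matrix (Fin m) (Fin m) ℝ)
    (LY : Matrix (Fin n) (Fin n) ℝ) (w : Fin m ⊕ Fin n → ℝ) :
    (joinL m n LX LY).mulVec w =
      Sum.elim
        (fun i => LX.mulVec (w ∘ Sum.inl) i + (n : ℝ) * w (Sum.inl i) - ∑ j, w (Sum.inr j))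
        (fun i => LY.mulVec (w ∘ Sum.inr) i + (m : ℝ) * w (Sum.inr i) - ∑ j, w (Sum.inl j)) := by
  rw [joinL, Matrix.fromBlocks_mulVec]
  funext i
  cases i <;>
    · simp [Matrix.mulVec, dotProduct, Matrix.one_apply, add_mul, ite_mul, zero_mul,
        Finset.sum_add_distrib, Finset.sum_ite_eq, sub_eq_add_neg, Function.comp]
      try ring

theorem stmt4 (m n : ℕ) (hm : 1 ≤ m) (hn : 1 ≤ n)
    (LX : Matrix (Fin m) (Fin m) ℝ) (LY : Matrix (Fin n) (Fin n) ℝ)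
    (hLXsymm : LX.IsSymm) (hLXrow : ∀ i, ∑ j, LX i j = 0)
    (hLYsymm : LY.IsSymm) (hLYrow : ∀ i, ∑ j, LY i j = 0)
    (hconn : Module.finrank ℝ (LinearMap.ker (Matrix.toLin' LX)) = 1) :
    ∀ u : Fin m,
      eigSupport (joinL m n LX LY) (Sum.inl u) =
        ((fun lam => lam + (n : ℝ)) '' (eigSupport LX u \ {0})) ∪ {0, (m : ℝ) + (n : ℝ)} := by
  intro u
  have honesX : LX.mulVec (fun _ => 1) = 0 := mulVec_const_zero LX hLXrow 1
  ext lam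
  simp only [Set.mem_union, Set.mem_image, Set.mem_diff, Set.mem_singleton_iff,
    Set.mem_insert_iff]
  constructor
  · rintro ⟨w, hw0, hw, hwu⟩
    rw [joinL_mulVec] at hw
    set s := ∑ i, w (Sum.inl i) with hsdef
    set t := ∑ j, w (Sum.inr j) with htdef
    have eq1 : ∀ i, LX.mulVec (w ∘ Sum.inl) i + (n : ℝ) * w (Sum.inl i) - t
        = lam * w (Sum.inl i) := fun i => by
      have h := congrFun hw (Sum.inl i); simpa using h
    have eq2 : ∀ i, LY.mulVec (w ∘ Sum.inr) i + (m : ℝ) * w (Sum.inr i) - s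
        = lam * w (Sum.inr i) := fun i => by
      have h := congrFun hw (Sum.inr i); simpa using h
    have hLx0 : ∑ i, LX.mulVec (w ∘ Sum.inl) i = 0 :=
      sum_mulVec_eq_zero LX hLXsymm hLXrow _
    have hLy0 : ∑ i, LY.mulVec (w ∘ Sum.inr) i = 0 :=
      sum_mulVec_eq_zero LY hLYsymm hLYrow _
    have hsum1 : (n : ℝ) * s - (m : ℝ) * t = lam * s := by
      have h : ∑ i, (LX.mulVec (w ∘ Sum.inl) i + (n : ℝ) * w (Sum.inl i) - t)
          = ∑ i, lam * w (Sum.inl i) := Finset.sum_congr rfl fun i _ => eq1 i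
      simp only [Finset.sum_sub_distrib, Finset.sum_add_distrib, ← Finset.mul_sum,
        Finset.sum_const, Finset.card_univ, Fintype.card_fin, nsmul_eq_mul, hLx0, ← hsdef,
        ← htdef] at h
      linarith
    have hsum2 : (m : ℝ) * t - (n : ℝ) * s = lam * t := by
      have h : ∑ i, (LY.mulVec (w ∘ Sum.inr) i + (m : ℝ) * w (Sum.inr i) - s)
          = ∑ i, lam * w (Sum.inr i) := Finset.sum_congr rfl fun i _ => eq2 i
      simp only [Finset.sum_sub_distrib, Finset.sum_add_distrib, ← Finset.mul_sum,
        Finset.sum_const, Finset.card_univ, Fintype.card_fin, nsmul_eq_mul, hLy0, ← hsdef,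
        ← htdef] at h
      linarith
    by_cases h0 : lam = 0
    · exact Or.inr (Or.inl h0)
    have hts : t = -s := by
      have hst : lam * (s + t) = 0 := by linarith
      rcases mul_eq_zero.1 hst with h | h
      · exact absurd h h0
      · linarith
    by_cases hs0 : s = 0
    · have ht0 : t = 0 := by rw [hts, hs0, neg_zero]
      have hxeig : LX.mulVec (w ∘ Sum.inl) = (lam - n) • (w ∘ Sum.inl) := by
        funext i
        have h := eq1 i
        rw [ht0] at h
        simp only [Pi.smul_apply, smul_eq_mul, Function.comp_apply]
        linarith
      have hlamn : lam - n ≠ 0 := by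
        intro hln
        rw [hln, zero_smul] at hxeig
        obtain ⟨c, hc⟩ := ker_const hm LX honesX hconn _ hxeig
        have hc0 : c ≠ 0 := by
          have := congrFun hc u
          simp only [Function.comp_apply] at this
          rw [← this]; exact hwu
        have hsm : s = (m : ℝ) * c := by
          rw [hsdef]
          have : ∀ i : Fin m, w (Sum.inl i) = c := fun i => congrFun hc i
          simp [this, Finset.sum_const, Fintype.card_fin, mul_comm]
        have hm0 : (m : ℝ) ≠ 0 := by
          exact (Nat.cast_pos.mpr hm).ne'
        exact hm0 (by
          have := hs0
          rw [hsm] at this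
          exact (mul_eq_zero.1 this).resolve_right hc0)
      refine Or.inl ⟨lam - n, ⟨⟨w ∘ Sum.inl, ?_, hxeig, hwu⟩, hlamn⟩, by ring⟩
      intro h
      exact hwu (by simpa using congrFun h u)
    · right; right
      have h := hsum1
      rw [hts] at h
      have h2 : ((m : ℝ) + n) * s = lam * s := by ring_nf; ring_nf at h; linarith
      exact (mul_right_cancel₀ hs0 h2).symm
  · rintro (⟨mu, ⟨⟨x, hx0, hx, hxu⟩, hmu⟩, rfl⟩ | rfl | rfl)
    · have hsx : ∑ i, x i = 0 := by
        have h := sum_mulVec_eq_zero LX hLXsymm hLXrow x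
        rw [hx] at h
        simp only [Pi.smul_apply, smul_eq_mul, ← Finset.mul_sum] at h
        exact (mul_eq_zero.1 h).resolve_left hmu
      refine ⟨Sum.elim x 0, ?_, ?_, by simpa using hxu⟩
      · intro h
        exact hxu (by simpa using congrFun h (Sum.inl u))
      · rw [joinL_mulVec]
        funext i
        cases i with
        | inl i =>
          simp only [Sum.elim_comp_inl, Sum.elim_comp_inr, Sum.elim_inl, Sum.elim_inr, Pi.smul_apply,
            smul_eq_mul, hx, Pi.zero_apply, Finset.sum_const_zero]
          ring
        | inr i =>
          simp only [Sum.elim_comp_inl, Sum.elim_comp_inr, Sum.elim_inr, Sum.elim_inl, Pi.smul_apply,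
            smul_eq_mul, Matrix.mulVec_zero, Pi.zero_apply, hsx]
          ring
    · refine ⟨Sum.elim (fun _ => (1:ℝ)) (fun _ => (1:ℝ)), ?_, ?_, ?_⟩
      · intro h
        exact (one_ne_zero : (1:ℝ) ≠ 0) (by simpa using congrFun h (Sum.inl u))
      swap
      · simp only [Sum.elim_inl]
        exact one_ne_zero
      · rw [joinL_mulVec]
        funext i
        cases i <;>
          · simp [Function.comp_def, Sum.elim_inl, Sum.elim_inr,
              mulVec_const_zero LX hLXrow, mulVec_const_zero LY hLYrow,
              Finset.sum_const, Fintype.card_fin]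
    · refine ⟨Sum.elim (fun _ => (n : ℝ)) (fun _ => -(m : ℝ)), ?_, ?_, ?_⟩
      · intro h
        have := congrFun h (Sum.inl u)
        simp only [Sum.elim_inl, Pi.zero_apply] at this
        exact (Nat.cast_pos.mpr hn).ne' this
      · rw [joinL_mulVec]
        funext i
        cases i with
        | inl i =>
          simp only [Sum.elim_comp_inl, Sum.elim_comp_inr, Sum.elim_inl, Sum.elim_inr, Pi.smul_apply,
            smul_eq_mul, mulVec_const_zero LX hLXrow, Pi.zero_apply, Finset.sum_const,
            Finset.card_univ, Fintype.card_fin, nsmul_eq_mul]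
          ring
        | inr i =>
          simp only [Sum.elim_comp_inl, Sum.elim_comp_inr, Sum.elim_inr, Sum.elim_inl,
            Pi.smul_apply, smul_eq_mul, mulVec_const_zero LY hLYrow, Pi.zero_apply, Finset.sum_const,
            Finset.card_univ, Fintype.card_fin, nsmul_eq_mul]
          ring
      · simp only [Sum.elim_inl]
        exact (Nat.cast_pos.mpr hn).ne'
end

section
/- Let u ∈ {1,…,m}. Then u is periodic with respect to L (i.e., |exp(iτL)_{u,u}| = 1 for some τ > 0) if and only if every element of σ_u(L_X) is rational. Moreover, if u is periodic with respect to L, then u is periodic with respect to L_X. -/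
open Matrix Complex

namespace JoinAux

variable {N : Type*} [Fintype N] [DecidableEq N]

noncomputable def evU {M : Matrix N N ℝ} (hM : M.IsHermitian) : Matrix N N ℝ :=
  (Matrix.IsHermitian.eigenvectorUnitary hM : Matrix N N ℝ)

lemma evU_mul_star {M : Matrix N N ℝ} (hM : M.IsHermitian) :
    evU hM * star (evU hM) = 1 :=
  (Matrix.mem_unitaryGroup_iff).mp (Matrix.IsHermitian.eigenvectorUnitary hM).2

lemma star_mul_evU {M : Matrix N N ℝ} (hM : M.IsHermitian) :
    star (evU hM) * evU hM = 1 :=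
  (Matrix.mem_unitaryGroup_iff').mp (Matrix.IsHermitian.eigenvectorUnitary hM).2

lemma spectral_real {M : Matrix N N ℝ} (hM : M.IsHermitian) :
    M = evU hM * Matrix.diagonal hM.eigenvalues * star (evU hM) := by
  have := hM.spectral_theorem
  simpa [evU, RCLike.ofReal_real_eq_id] using this

lemma spectral_complex {M : Matrix N N ℝ} (hM : M.IsHermitian) :
    M.map (fun x : ℝ => (x : ℂ)) =
      (evU hM).map (fun x : ℝ => (x : ℂ)) *
        Matrix.diagonal (fun k => (hM.eigenvalues k : ℂ)) *
        star ((evU hM).map (fun x : ℝ => (x : ℂ))) := by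
  have hstar : star ((evU hM).map (fun x : ℝ => (x : ℂ)))
      = (star (evU hM)).map (fun x : ℝ => (x : ℂ)) := by
    ext i j
    simp [Matrix.star_apply, Matrix.map_apply, Complex.conj_ofReal]
  rw [hstar]
  conv_lhs => rw [spectral_real hM]
  rw [show (fun x : ℝ => (x : ℂ)) = ⇑Complex.ofRealHom from rfl]
  rw [Matrix.map_mul (f := Complex.ofRealHom), Matrix.map_mul (f := Complex.ofRealHom)]
  congr 1
  rw [Matrix.diagonal_map (by simp)]
  rfl

lemma transU_apply {M : Matrix N N ℝ} (hM : M.IsHermitian) (τ : ℝ) (u v : N) :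
    transU M τ u v = ∑ k, (evU hM u k : ℂ) * (evU hM v k : ℂ) *
      Complex.exp (Complex.I * τ * hM.eigenvalues k) := by
  set Uc : Matrix N N ℂ := (evU hM).map (fun x : ℝ => (x : ℂ)) with hUc
  have hmapmul : ∀ A B : Matrix N N ℝ, (A * B).map (fun x : ℝ => (x : ℂ))
      = A.map (fun x : ℝ => (x : ℂ)) * B.map (fun x : ℝ => (x : ℂ)) := fun A B =>
    Matrix.map_mul (f := Complex.ofRealHom)
  have hstar : star Uc = (star (evU hM)).map (fun x : ℝ => (x : ℂ)) := by
    ext i j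
    simp [Matrix.star_apply, Matrix.map_apply, Complex.conj_ofReal, hUc]
  have hright : Uc * star Uc = 1 := by
    rw [hstar, hUc, ← hmapmul, evU_mul_star hM]
    simp
  have hunit : IsUnit Uc := ⟨⟨Uc, star Uc, hright, mul_eq_one_comm.mp hright⟩, rfl⟩
  have hinv : Uc⁻¹ = star Uc := Matrix.inv_eq_right_inv hright
  have key : (Complex.I * (τ:ℂ)) • M.map (fun x : ℝ => (x : ℂ))
      = Uc * Matrix.diagonal (fun k => Complex.I * τ * hM.eigenvalues k) * Uc⁻¹ := by
    rw [hinv, spectral_complex hM, ← hUc]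
    have hdiag : (fun k => Complex.I * τ * (hM.eigenvalues k : ℂ))
        = (Complex.I * (τ:ℂ)) • (fun k => (hM.eigenvalues k : ℂ)) := by
      funext k; simp [smul_eq_mul]
    rw [hdiag, Matrix.diagonal_smul, Matrix.mul_smul, Matrix.smul_mul]
  rw [transU, key, Matrix.exp_conj _ _ hunit, Matrix.exp_diagonal, hinv, hstar]
  rw [Pi.exp_def]
  rw [Matrix.mul_apply]
  refine Finset.sum_congr rfl fun k _ => ?_
  rw [Matrix.mul_diagonal, ← Complex.exp_eq_exp_ℂ]
  simp [hUc, Matrix.map_apply, Matrix.star_apply, Complex.conj_ofReal]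
  ring

lemma sum_sq_evU {M : Matrix N N ℝ} (hM : M.IsHermitian) (u : N) :
    ∑ k, (evU hM u k) ^ 2 = 1 := by
  have h := congrFun (congrFun (evU_mul_star hM) u) u
  rw [Matrix.mul_apply, Matrix.one_apply_eq] at h
  rw [← h]
  refine Finset.sum_congr rfl fun k _ => ?_
  rw [Matrix.star_apply, star_trivial, sq]

lemma eigSupport_eq {M : Matrix N N ℝ} (hM : M.IsHermitian) (u : N) :
    eigSupport M u = {lam | ∃ k, hM.eigenvalues k = lam ∧ evU hM u k ≠ 0} := by
  ext lam
  constructor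
  · rintro ⟨w, hw0, hww, hwu⟩
    set a : N → ℝ := (star (evU hM)) *ᵥ w with ha
    have haeq : ∀ k, hM.eigenvalues k * a k = lam * a k := by
      intro k
      have h1 : (star (evU hM)) *ᵥ (M *ᵥ w) = (Matrix.diagonal hM.eigenvalues) *ᵥ a := by
        rw [Matrix.mulVec_mulVec, ha, Matrix.mulVec_mulVec]
        have hm : star (evU hM) * M = Matrix.diagonal hM.eigenvalues * star (evU hM) := by
          calc star (evU hM) * M
              = star (evU hM) *
                  (evU hM * Matrix.diagonal hM.eigenvalues * star (evU hM)) := by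
                rw [← spectral_real hM]
            _ = Matrix.diagonal hM.eigenvalues * star (evU hM) := by
                rw [← mul_assoc, ← mul_assoc, star_mul_evU hM, one_mul]
        rw [hm]
      have h2 := congrFun h1 k
      rw [hww, Matrix.mulVec_smul, Matrix.mulVec_diagonal] at h2
      rw [← h2, ha]
      simp [smul_eq_mul]
    have hwrec : w = evU hM *ᵥ a := by
      rw [ha, Matrix.mulVec_mulVec, evU_mul_star hM, Matrix.one_mulVec]
    have hsum : w u = ∑ k, evU hM u k * a k := by
      rw [hwrec]; rfl
    have : ∃ k ∈ Finset.univ, evU hM u k * a k ≠ 0 := by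
      by_contra h
      push_neg at h
      apply hwu
      rw [hsum, Finset.sum_eq_zero h]
    obtain ⟨k, -, hk⟩ := this
    have hak : a k ≠ 0 := fun h => hk (by simp [h])
    have hUk : evU hM u k ≠ 0 := fun h => hk (by simp [h])
    refine ⟨k, ?_, hUk⟩
    have := haeq k
    exact mul_right_cancel₀ hak this
  · rintro ⟨k, hdk, hUk⟩
    refine ⟨fun i => evU hM i k, ?_, ?_, hUk⟩
    · intro h
      exact hUk (congrFun h u)
    · have := hM.mulVec_eigenvectorBasis k
      rw [← hdk]
      convert this using 2 <;> rfl

lemma eq_one_of_abs_re {w : ℂ} (habs : ‖w‖ = 1) (hre : w.re = 1) : w = 1 := by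
  have hnsq : Complex.normSq w = 1 := by
    rw [← Complex.sq_norm, habs]; norm_num
  rw [Complex.normSq_apply, hre] at hnsq
  have him : w.im = 0 := by nlinarith [sq_nonneg w.im]
  exact Complex.ext (by simp [hre]) (by simp [him])

lemma phases_eq {ι : Type*} [Fintype ι] (p : ι → ℝ) (z : ι → ℂ)
    (hp : ∀ i, 0 ≤ p i) (hz : ∀ i, ‖z i‖ = 1)
    (hsum : ∑ i, p i = 1)
    (habs : ‖∑ i, (p i : ℂ) * z i‖ = 1) :
    ∀ i, p i ≠ 0 → z i = ∑ j, (p j : ℂ) * z j := by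
  set S : ℂ := ∑ j, (p j : ℂ) * z j with hS
  have hSnsq : Complex.normSq S = 1 := by rw [← Complex.sq_norm, habs]; norm_num
  have hre_le : ∀ i, ((starRingEnd ℂ) S * z i).re ≤ 1 := by
    intro i
    calc ((starRingEnd ℂ) S * z i).re ≤ ‖(starRingEnd ℂ) S * z i‖ :=
          Complex.re_le_norm _
      _ = 1 := by rw [norm_mul, Complex.norm_conj, habs, hz i, one_mul]
  have key : ∑ i, p i * (1 - ((starRingEnd ℂ) S * z i).re) = 0 := by
    have h1 : ((starRingEnd ℂ) S * S).re = 1 := by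
      rw [mul_comm, Complex.mul_conj]
      simpa using hSnsq
    have h2 : ((starRingEnd ℂ) S * S).re
        = ∑ i, p i * ((starRingEnd ℂ) S * z i).re := by
      conv_lhs => rw [hS, Finset.mul_sum]
      rw [Complex.re_sum]
      refine Finset.sum_congr rfl fun i _ => ?_
      rw [show (starRingEnd ℂ) S * ((p i : ℂ) * z i)
          = (p i : ℂ) * ((starRingEnd ℂ) S * z i) by ring]
      exact Complex.re_ofReal_mul _ _
    have : ∑ i, p i * (1 - ((starRingEnd ℂ) S * z i).re)
        = (∑ i, p i) - ∑ i, p i * ((starRingEnd ℂ) S * z i).re := by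
      rw [← Finset.sum_sub_distrib]
      exact Finset.sum_congr rfl fun i _ => by ring
    rw [this, hsum, ← h2, h1, sub_self]
  have hterm := (Finset.sum_eq_zero_iff_of_nonneg fun i _ =>
    mul_nonneg (hp i) (by linarith [hre_le i])).mp key
  intro i hpi
  have h3 : ((starRingEnd ℂ) S * z i).re = 1 := by
    have := hterm i (Finset.mem_univ i)
    have h4 : 1 - ((starRingEnd ℂ) S * z i).re = 0 := by
      rcases mul_eq_zero.mp this with h | h
      · exact absurd h hpi
      · exact h
    linarith
  have h5 : (starRingEnd ℂ) S * z i = 1 := by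
    refine eq_one_of_abs_re ?_ h3
    rw [norm_mul, Complex.norm_conj, habs, hz i, one_mul]
  calc z i = (S * (starRingEnd ℂ) S) * z i := by
        rw [Complex.mul_conj, hSnsq]; simp
    _ = S * ((starRingEnd ℂ) S * z i) := by ring
    _ = S := by rw [h5, mul_one]

lemma periodic_of_rat {M : Matrix N N ℝ} (hM : M.IsHermitian) (u : N)
    (h : ∀ lam ∈ eigSupport M u, ∃ q : ℚ, lam = (q : ℝ)) : PeriodicAt M u := by
  have hq : ∀ k : N, ∃ q : ℚ, evU hM u k ≠ 0 → hM.eigenvalues k = (q : ℝ) := by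
    intro k
    by_cases hk : evU hM u k ≠ 0
    · obtain ⟨q, hq⟩ := h _ (by rw [eigSupport_eq hM u]; exact ⟨k, rfl, hk⟩)
      exact ⟨q, fun _ => hq⟩
    · exact ⟨0, fun h' => absurd h' hk⟩
  choose q hq using hq
  set D : ℕ := ∏ k, (q k).den with hD
  have hDpos : 0 < D := Finset.prod_pos fun k _ => (q k).pos
  refine ⟨2 * Real.pi * D, by positivity, ?_⟩
  rw [transU_apply hM]
  have hterm : ∀ k : N, (evU hM u k : ℂ) * (evU hM u k : ℂ) *
      Complex.exp (Complex.I * ((2 * Real.pi * D : ℝ) : ℂ) * (hM.eigenvalues k : ℂ))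
      = (((evU hM u k) ^ 2 : ℝ) : ℂ) := by
    intro k
    by_cases hk : evU hM u k = 0
    · simp [hk]
    · have hdk : hM.eigenvalues k = (q k : ℝ) := hq k hk
      obtain ⟨t, ht⟩ := Finset.dvd_prod_of_mem (fun k => (q k).den) (Finset.mem_univ k)
      have hden0 : ((q k).den : ℚ) ≠ 0 := by positivity
      have hden : ((q k).den : ℚ) * q k = ((q k).num : ℚ) := by
        set r := q k with hr
        obtain ⟨a, b, hb, hab⟩ : ∃ a b, ((b : ℚ)) ≠ 0 ∧ r = (a : ℚ) / (b : ℚ) ∧ a = r.num ∧ b = r.den :=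
          ⟨r.num, r.den, hden0, (Rat.num_div_den r).symm, rfl, rfl⟩
        obtain ⟨hab, ha, hb'⟩ := hab
        rw [← ha, ← hb', hab]
        field_simp
      have hzq : ((D : ℚ)) * q k = ((q k).num * t : ℤ) := by
        rw [← hD] at ht
        rw [ht]
        push_cast
        calc ((q k).den : ℚ) * (t : ℚ) * q k
            = (((q k).den : ℚ) * q k) * t := by ring
          _ = ((q k).num : ℚ) * t := by rw [hden]
      have hexp : Complex.exp (Complex.I * ((2 * Real.pi * D : ℝ) : ℂ) *
          (hM.eigenvalues k : ℂ)) = 1 := by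
        rw [Complex.exp_eq_one_iff]
        refine ⟨(q k).num * t, ?_⟩
        rw [hdk]
        have hr : ((D : ℝ)) * (q k : ℝ) = (((q k).num * t : ℤ) : ℝ) := by
          exact_mod_cast congrArg (fun x : ℚ => (x : ℝ)) hzq
        push_cast
        push_cast at hr
        rw [show Complex.I * (2 * (Real.pi : ℂ) * (D:ℂ)) * ((q k : ℚ) : ℂ)
            = ((D:ℂ) * ((q k : ℚ) : ℂ)) * (2 * (Real.pi:ℂ) * Complex.I) by ring]
        have hrc : (D : ℂ) * ((q k : ℚ) : ℂ) = ((q k).num : ℂ) * (t : ℂ) := by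
          exact_mod_cast congrArg (fun x : ℝ => (x : ℂ)) hr
        rw [hrc]
      rw [hexp, mul_one]
      push_cast
      ring
  rw [Finset.sum_congr rfl fun k _ => hterm k, ← Complex.ofReal_sum,
    sum_sq_evU hM u]
  simp

lemma periodic_imp {M : Matrix N N ℝ} (hM : M.IsHermitian) (u : N)
    (hP : PeriodicAt M u) :
    ∃ τ : ℝ, 0 < τ ∧ ∀ lam ∈ eigSupport M u, ∀ mu ∈ eigSupport M u,
      Complex.exp (Complex.I * τ * lam) = Complex.exp (Complex.I * τ * mu) := by
  obtain ⟨τ, hτ, habs⟩ := hP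
  rw [transU_apply hM] at habs
  have habs' : ‖∑ k, (((evU hM u k)^2 : ℝ) : ℂ) *
      Complex.exp (Complex.I * τ * hM.eigenvalues k)‖ = 1 := by
    rw [← habs]
    congr 1
    refine Finset.sum_congr rfl fun k _ => ?_
    push_cast
    ring
  have hall := phases_eq (fun k => (evU hM u k)^2)
    (fun k => Complex.exp (Complex.I * τ * hM.eigenvalues k))
    (fun k => sq_nonneg _)
    (fun k => by
      rw [Complex.norm_exp]
      norm_num [Complex.mul_re, Complex.mul_im])
    (sum_sq_evU hM u) habs'
  refine ⟨τ, hτ, ?_⟩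
  intro lam hlam mu hmu
  rw [eigSupport_eq hM u] at hlam hmu
  obtain ⟨k, hk, hk0⟩ := hlam
  obtain ⟨l, hl, hl0⟩ := hmu
  rw [← hk, ← hl]
  exact (hall k (pow_ne_zero 2 hk0)).trans (hall l (pow_ne_zero 2 hl0)).symm

lemma isHermitian_of_isSymm {A : Matrix N N ℝ} (h : A.IsSymm) : A.IsHermitian := by
  ext i j
  rw [Matrix.conjTranspose_apply, star_trivial, h.apply]

lemma eig_ortho {K : Type*} [Fintype K] {A : Matrix K K ℝ} (hA : A.IsSymm)
    {v w : K → ℝ} {a b : ℝ} (hv : A *ᵥ v = a • v) (hw : A *ᵥ w = b • w) (hab : a ≠ b) :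
    v ⬝ᵥ w = 0 := by
  have h1 : a * (v ⬝ᵥ w) = b * (v ⬝ᵥ w) := by
    calc a * (v ⬝ᵥ w) = (a • v) ⬝ᵥ w := by rw [smul_dotProduct]; rfl
      _ = (A *ᵥ v) ⬝ᵥ w := by rw [hv]
      _ = w ⬝ᵥ (A *ᵥ v) := dotProduct_comm _ _
      _ = (w ᵥ* A) ⬝ᵥ v := dotProduct_mulVec _ _ _
      _ = (Aᵀ *ᵥ w) ⬝ᵥ v := by rw [Matrix.mulVec_transpose]
      _ = (A *ᵥ w) ⬝ᵥ v := by rw [hA]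
      _ = (b • w) ⬝ᵥ v := by rw [hw]
      _ = b * (w ⬝ᵥ v) := by rw [smul_dotProduct]; rfl
      _ = b * (v ⬝ᵥ w) := by rw [dotProduct_comm]
  have h2 : (a - b) * (v ⬝ᵥ w) = 0 := by linear_combination h1
  rcases mul_eq_zero.mp h2 with h | h
  · exact absurd (sub_eq_zero.mp h) hab
  · exact h

variable {m n : ℕ} {LX : Matrix (Fin m) (Fin m) ℝ} {LY : Matrix (Fin n) (Fin n) ℝ}

lemma joinL_mulVec_inl (W : Fin m ⊕ Fin n → ℝ) (i : Fin m) :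
    ((joinL m n LX LY) *ᵥ W) (Sum.inl i)
      = (LX *ᵥ fun j => W (Sum.inl j)) i + n * W (Sum.inl i) - ∑ j, W (Sum.inr j) := by
  simp only [joinL, Matrix.mulVec, dotProduct, Fintype.sum_sum_type,
    Matrix.fromBlocks_apply₁₁, Matrix.fromBlocks_apply₁₂, Matrix.add_apply,
    Matrix.smul_apply, Matrix.one_apply, Matrix.neg_apply, Matrix.of_apply,
    smul_eq_mul, add_mul, neg_mul, one_mul, mul_ite, mul_one, mul_zero,
    Finset.sum_add_distrib, Finset.sum_ite_eq, Finset.mem_univ, if_true,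
    ite_mul, zero_mul, Finset.sum_neg_distrib]
  ring

lemma joinL_mulVec_inr (W : Fin m ⊕ Fin n → ℝ) (i : Fin n) :
    ((joinL m n LX LY) *ᵥ W) (Sum.inr i)
      = (LY *ᵥ fun j => W (Sum.inr j)) i + m * W (Sum.inr i) - ∑ j, W (Sum.inl j) := by
  simp only [joinL, Matrix.mulVec, dotProduct, Fintype.sum_sum_type,
    Matrix.fromBlocks_apply₂₁, Matrix.fromBlocks_apply₂₂, Matrix.add_apply,
    Matrix.smul_apply, Matrix.one_apply, Matrix.neg_apply, Matrix.of_apply,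
    smul_eq_mul, add_mul, neg_mul, one_mul, mul_ite, mul_one, mul_zero,
    Finset.sum_add_distrib, Finset.sum_ite_eq, Finset.mem_univ, if_true,
    ite_mul, zero_mul, Finset.sum_neg_distrib]
  ring

lemma joinL_isSymm (hLX : LX.IsSymm) (hLY : LY.IsSymm) : (joinL m n LX LY).IsSymm := by
  rw [Matrix.IsSymm]
  ext i j
  rw [Matrix.transpose_apply]
  rcases i with i | i <;> rcases j with j | j <;>
    simp [joinL, Matrix.add_apply, Matrix.smul_apply, Matrix.one_apply,
      hLX.apply, hLY.apply] <;> simp [eq_comm]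

lemma colsum_zero (hLXsymm : LX.IsSymm) (hLXrow : ∀ i, ∑ j, LX i j = 0) (j : Fin m) :
    ∑ i, LX i j = 0 := by
  rw [Finset.sum_congr rfl fun i _ => hLXsymm.apply j i]
  exact hLXrow j

lemma zero_mem_suppX (hLXrow : ∀ i, ∑ j, LX i j = 0) (u : Fin m) :
    (0 : ℝ) ∈ eigSupport LX u := by
  refine ⟨fun _ => 1, fun h => one_ne_zero (congrFun h u), ?_, one_ne_zero⟩
  funext i
  simp [Matrix.mulVec, dotProduct, hLXrow i]

lemma eigvec_sum_zero (hLXsymm : LX.IsSymm) (hLXrow : ∀ i, ∑ j, LX i j = 0)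
    {w : Fin m → ℝ} {lam : ℝ} (hww : LX *ᵥ w = lam • w) (hne : lam ≠ 0) :
    ∑ j, w j = 0 := by
  have h1 : lam * ∑ j, w j = 0 := by
    calc lam * ∑ j, w j = ∑ j, (lam • w) j := by rw [Finset.mul_sum]; rfl
      _ = ∑ j, (LX *ᵥ w) j := by rw [hww]
      _ = ∑ j, ∑ i, LX j i * w i := rfl
      _ = ∑ i, (∑ j, LX j i) * w i := by
          rw [Finset.sum_comm]
          exact Finset.sum_congr rfl fun i _ => (Finset.sum_mul _ _ _).symm
      _ = 0 := by
          refine Finset.sum_eq_zero fun i _ => ?_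
          rw [colsum_zero hLXsymm hLXrow i, zero_mul]
  rcases mul_eq_zero.mp h1 with h | h
  · exact absurd h hne
  · exact h

lemma joinL_one_eig (hLXrow : ∀ i, ∑ j, LX i j = 0) (hLYrow : ∀ i, ∑ j, LY i j = 0) :
    (joinL m n LX LY) *ᵥ (fun _ => (1:ℝ)) = (0:ℝ) • (fun _ => (1:ℝ)) := by
  funext x
  rcases x with i | i
  · rw [joinL_mulVec_inl]
    have h1 : (LX *ᵥ fun _ => (1:ℝ)) i = 0 := by
      simp [Matrix.mulVec, dotProduct, hLXrow i]
    rw [h1]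
    simp
  · rw [joinL_mulVec_inr]
    have h1 : (LY *ᵥ fun _ => (1:ℝ)) i = 0 := by
      simp [Matrix.mulVec, dotProduct, hLYrow i]
    rw [h1]
    simp

lemma zero_mem_suppJ (hLXrow : ∀ i, ∑ j, LX i j = 0) (hLYrow : ∀ i, ∑ j, LY i j = 0)
    (u : Fin m) : (0 : ℝ) ∈ eigSupport (joinL m n LX LY) (Sum.inl u) :=
  ⟨fun _ => 1, fun h => one_ne_zero (congrFun h (Sum.inl u)),
    joinL_one_eig hLXrow hLYrow, one_ne_zero⟩

lemma joinL_v2_eig (hLXrow : ∀ i, ∑ j, LX i j = 0) (hLYrow : ∀ i, ∑ j, LY i j = 0) :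
    (joinL m n LX LY) *ᵥ (Sum.elim (fun _ => (n : ℝ)) (fun _ => -(m : ℝ)))
      = ((m : ℝ) + n) • (Sum.elim (fun _ => (n : ℝ)) (fun _ => -(m : ℝ))) := by
  funext x
  rcases x with i | i
  · rw [joinL_mulVec_inl]
    have h1 : (LX *ᵥ fun _ => (n:ℝ)) i = 0 := by
      simp [Matrix.mulVec, dotProduct, ← Finset.sum_mul, hLXrow i]
    simp only [Sum.elim_inl, Sum.elim_inr, Pi.smul_apply, smul_eq_mul] at *
    rw [h1]
    simp [Finset.sum_const, Finset.card_univ]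
    ring
  · rw [joinL_mulVec_inr]
    have h1 : (LY *ᵥ fun _ => -(m:ℝ)) i = 0 := by
      simp [Matrix.mulVec, dotProduct, ← Finset.sum_mul, hLYrow i]
    simp only [Sum.elim_inl, Sum.elim_inr, Pi.smul_apply, smul_eq_mul] at *
    rw [h1]
    simp [Finset.sum_const, Finset.card_univ]
    ring

lemma mn_mem_suppJ (hLXrow : ∀ i, ∑ j, LX i j = 0) (hLYrow : ∀ i, ∑ j, LY i j = 0)
    (hn : 1 ≤ n) (u : Fin m) :
    ((m : ℝ) + n) ∈ eigSupport (joinL m n LX LY) (Sum.inl u) := by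
  have hn0 : (n : ℝ) ≠ 0 := by positivity
  exact ⟨Sum.elim (fun _ => (n : ℝ)) (fun _ => -(m : ℝ)),
    fun h => hn0 (congrFun h (Sum.inl u)), joinL_v2_eig hLXrow hLYrow, hn0⟩

lemma shift_mem_suppJ (hLXsymm : LX.IsSymm) (hLXrow : ∀ i, ∑ j, LX i j = 0)
    {u : Fin m} {lam : ℝ} (hlam : lam ∈ eigSupport LX u) (hne : lam ≠ 0) :
    (lam + n) ∈ eigSupport (joinL m n LX LY) (Sum.inl u) := by
  obtain ⟨w, hw0, hww, hwu⟩ := hlam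
  have hsum : ∑ j, w j = 0 := eigvec_sum_zero hLXsymm hLXrow hww hne
  refine ⟨Sum.elim w (fun _ => 0), fun h => hwu (congrFun h (Sum.inl u)), ?_, hwu⟩
  funext x
  rcases x with i | i
  · rw [joinL_mulVec_inl]
    have h1 : (fun j => Sum.elim w (fun _ : Fin n => (0:ℝ)) (Sum.inl j)) = w := rfl
    rw [h1, hww]
    simp only [Sum.elim_inl, Sum.elim_inr, Pi.smul_apply, smul_eq_mul]
    simp
    ring
  · rw [joinL_mulVec_inr]
    have h1 : (fun j => Sum.elim w (fun _ : Fin n => (0:ℝ)) (Sum.inr j)) = (0 : Fin n → ℝ) := rfl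
    rw [h1, Matrix.mulVec_zero]
    simp [hsum]

lemma suppJ_sub (hLXsymm : LX.IsSymm) (hLYsymm : LY.IsSymm)
    (hLXrow : ∀ i, ∑ j, LX i j = 0) (hLYrow : ∀ i, ∑ j, LY i j = 0)
    (hm : 1 ≤ m) (hn : 1 ≤ n) {u : Fin m} {mu : ℝ}
    (hmu : mu ∈ eigSupport (joinL m n LX LY) (Sum.inl u))
    (h0 : mu ≠ 0) (hmn : mu ≠ (m : ℝ) + n) :
    (mu - n) ∈ eigSupport LX u := by
  obtain ⟨W, hW0, hWW, hWu⟩ := hmu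
  have hJsymm := joinL_isSymm (m := m) (n := n) hLXsymm hLYsymm
  have hmn0 : (0:ℝ) ≠ (m:ℝ) + n := by
    have : (0:ℝ) < (m:ℝ) + n := by positivity
    exact this.ne
  have ho1 : W ⬝ᵥ (fun _ => (1:ℝ)) = 0 :=
    eig_ortho hJsymm hWW (joinL_one_eig hLXrow hLYrow) h0
  have ho2 : W ⬝ᵥ (Sum.elim (fun _ => (n : ℝ)) (fun _ => -(m : ℝ))) = 0 :=
    eig_ortho hJsymm hWW (joinL_v2_eig hLXrow hLYrow) hmn
  rw [dotProduct, Fintype.sum_sum_type] at ho1 ho2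
  simp only [Sum.elim_inl, Sum.elim_inr, mul_one, mul_neg, ← Finset.sum_mul,
    Finset.sum_neg_distrib] at ho1 ho2
  set sw := ∑ j, W (Sum.inl j) with hsw
  set sz := ∑ j, W (Sum.inr j) with hsz
  have hsz0 : sz = 0 := by
    have hm0 : (0:ℝ) < (m:ℝ) + n := by positivity
    nlinarith [ho1, ho2]
  refine ⟨fun i => W (Sum.inl i), fun h => hWu (congrFun h u), ?_, hWu⟩
  funext i
  have := congrFun hWW (Sum.inl i)
  rw [joinL_mulVec_inl] at this
  rw [← hsz, hsz0] at this
  simp only [Pi.smul_apply, smul_eq_mul] at this ⊢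
  linarith [this]

lemma exp_one_real {τ x : ℝ} (h : Complex.exp (Complex.I * τ * x) = 1) :
    ∃ b : ℤ, τ * x = 2 * Real.pi * b := by
  rw [Complex.exp_eq_one_iff] at h
  obtain ⟨b, hb⟩ := h
  refine ⟨b, ?_⟩
  have h2 : ((τ * x : ℝ) : ℂ) = ((2 * Real.pi * b : ℝ) : ℂ) := by
    apply mul_right_cancel₀ Complex.I_ne_zero
    push_cast
    push_cast at hb
    linear_combination hb
  exact_mod_cast h2

end JoinAux

theorem stmt5 (m n : ℕ) (hm : 1 ≤ m) (hn : 1 ≤ n)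
    (LX : Matrix (Fin m) (Fin m) ℝ) (LY : Matrix (Fin n) (Fin n) ℝ)
    (hLXsymm : LX.IsSymm) (hLXrow : ∀ i, ∑ j, LX i j = 0)
    (hLYsymm : LY.IsSymm) (hLYrow : ∀ i, ∑ j, LY i j = 0) (u : Fin m) :
    (PeriodicAt (joinL m n LX LY) (Sum.inl u) ↔
        ∀ lam ∈ eigSupport LX u, ∃ q : ℚ, lam = (q : ℝ)) ∧
      (PeriodicAt (joinL m n LX LY) (Sum.inl u) → PeriodicAt LX u) := by
  have hJsymm := JoinAux.joinL_isSymm (m := m) (n := n) hLXsymm hLYsymm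
  have hJher := JoinAux.isHermitian_of_isSymm hJsymm
  have hXher := JoinAux.isHermitian_of_isSymm hLXsymm
  have forward : PeriodicAt (joinL m n LX LY) (Sum.inl u) →
      ∀ lam ∈ eigSupport LX u, ∃ q : ℚ, lam = (q : ℝ) := by
    intro hP lam hlam
    obtain ⟨τ, hτ, hE⟩ := JoinAux.periodic_imp hJher (Sum.inl u) hP
    by_cases hlam0 : lam = 0
    · exact ⟨0, by simp [hlam0]⟩
    have h0m : (0:ℝ) ∈ eigSupport (joinL m n LX LY) (Sum.inl u) :=
      JoinAux.zero_mem_suppJ hLXrow hLYrow u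
    have hmnm := JoinAux.mn_mem_suppJ (LX := LX) (LY := LY) hLXrow hLYrow hn u
    have hsh := JoinAux.shift_mem_suppJ (n := n) (LY := LY) hLXsymm hLXrow hlam hlam0
    have e1 : Complex.exp (Complex.I * τ * ((lam + n : ℝ) : ℂ)) = 1 := by
      have h := hE _ hsh _ h0m
      rw [h]
      norm_num
    have e2 : Complex.exp (Complex.I * τ * (((m : ℝ) + n : ℝ) : ℂ)) = 1 := by
      have h := hE _ hmnm _ h0m
      rw [h]
      norm_num
    obtain ⟨b, hb⟩ := JoinAux.exp_one_real e1
    obtain ⟨a, ha⟩ := JoinAux.exp_one_real e2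
    have ha0 : (a : ℝ) ≠ 0 := by
      intro h
      have h1 : τ * ((m:ℝ) + n) = 0 := by rw [ha, h]; ring
      have hmn0 : (0:ℝ) < (m:ℝ) + n := by positivity
      nlinarith [hτ]
    have key : (a:ℝ) * (lam + n) = (b:ℝ) * ((m:ℝ) + n) := by
      have h3 : τ * ((a:ℝ) * (lam + n) - (b:ℝ) * ((m:ℝ) + n)) = 0 := by
        linear_combination (a:ℝ) * hb - (b:ℝ) * ha
      rcases mul_eq_zero.mp h3 with h | h
      · exact absurd h hτ.ne'
      · linarith
    refine ⟨(b * (m + n) : ℚ) / (a : ℚ) - n, ?_⟩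
    have haq : ((a:ℚ) : ℝ) ≠ 0 := by push_cast; exact ha0
    push_cast
    rw [eq_sub_iff_add_eq, eq_div_iff (by push_cast; exact ha0)]
    push_cast
    linear_combination key
  refine ⟨⟨forward, ?_⟩, fun hP => JoinAux.periodic_of_rat hXher u (forward hP)⟩
  intro hQ
  apply JoinAux.periodic_of_rat hJher
  intro mu hmu
  by_cases h0 : mu = 0
  · exact ⟨0, by simp [h0]⟩
  by_cases hmn : mu = (m:ℝ) + n
  · exact ⟨(m : ℚ) + n, by rw [hmn]; push_cast; ring⟩
  · obtain ⟨q, hq⟩ := hQ _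
      (JoinAux.suppJ_sub hLXsymm hLYsymm hLXrow hLYrow hm hn hmu h0 hmn)
    exact ⟨q + n, by push_cast; linarith [hq]⟩
end

section
/- Assume k, ℓ, and √D are all rational. Then for u ∈ {1,…,m}, the vertex u is periodic with respect to A (i.e., |exp(iτA)_{u,u}| = 1 for some τ > 0) if and only if every element of σ_u(A_X) is rational. -/
open Matrix Complex

set_option linter.unusedSectionVars false
set_option maxHeartbeats 1000000

section AuxGeneric

variable {V : Type*} [Fintype V] [DecidableEq V]

lemma cmap_herm {M : Matrix V V ℝ} (hM : M.IsSymm) :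
    (M.map (fun x : ℝ => (x : ℂ))).IsHermitian := by
  ext i j
  simp [Matrix.conjTranspose_apply, Matrix.map_apply, hM.apply i j]

lemma transU_apply (M : Matrix V V ℝ) (h : (M.map (fun x : ℝ => (x : ℂ))).IsHermitian)
    (t : ℝ) (u v : V) :
    transU M t u v = ∑ j, Complex.exp (Complex.I * t * h.eigenvalues j) *
      ((h.eigenvectorUnitary : Matrix V V ℂ) u j *
        star ((h.eigenvectorUnitary : Matrix V V ℂ) v j)) := by
  set U : Matrix V V ℂ := (h.eigenvectorUnitary : Matrix V V ℂ) with hU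
  have hU1 : U * star U = 1 := (Matrix.mem_unitaryGroup_iff).mp h.eigenvectorUnitary.2
  have hUinv : U⁻¹ = star U := Matrix.inv_eq_right_inv hU1
  have hUunit : IsUnit U :=
    Matrix.isUnit_iff_isUnit_det U |>.mpr (Matrix.isUnit_det_of_right_inverse hU1)
  have hspec := h.spectral_theorem
  have key : (Complex.I * t) • M.map (fun x : ℝ => (x : ℂ))
      = U * ((Complex.I * t) • Matrix.diagonal (RCLike.ofReal ∘ h.eigenvalues)) * star U := by
    rw [Matrix.mul_smul, Matrix.smul_mul]
    rw [Unitary.conjStarAlgAut_apply] at hspec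
    exact congrArg ((Complex.I * (t : ℂ)) • ·) hspec
  rw [transU, key, ← hUinv, Matrix.exp_conj U _ hUunit, ← Matrix.diagonal_smul,
    Matrix.exp_diagonal, hUinv]
  rw [Matrix.mul_apply]
  refine Finset.sum_congr rfl fun j _ => ?_
  rw [Matrix.mul_diagonal, Matrix.star_eq_conjTranspose, Matrix.conjTranspose_apply,
    Pi.exp_def]
  simp only [Pi.smul_apply, Function.comp_apply, ← Complex.exp_eq_exp_ℂ, smul_eq_mul,
    RCLike.ofReal_alg, Complex.real_smul, mul_one]
  ring

lemma sumP (M : Matrix V V ℝ) (h : (M.map (fun x : ℝ => (x : ℂ))).IsHermitian) (u : V) :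
    ∑ j, ((h.eigenvectorUnitary : Matrix V V ℂ) u j *
      star ((h.eigenvectorUnitary : Matrix V V ℂ) u j)) = 1 := by
  set U : Matrix V V ℂ := (h.eigenvectorUnitary : Matrix V V ℂ)
  have hU1 : U * star U = 1 := (Matrix.mem_unitaryGroup_iff).mp h.eigenvectorUnitary.2
  have := congr_fun (congr_fun hU1 u) u
  rw [Matrix.mul_apply] at this
  simpa [Matrix.star_eq_conjTranspose, Matrix.conjTranspose_apply, Matrix.one_apply] using this

lemma col_eig (M : Matrix V V ℝ) (h : (M.map (fun x : ℝ => (x : ℂ))).IsHermitian) (j : V) :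
    (M.map (fun x : ℝ => (x : ℂ))) *ᵥ (fun i => (h.eigenvectorUnitary : Matrix V V ℂ) i j)
      = (h.eigenvalues j : ℂ) • (fun i => (h.eigenvectorUnitary : Matrix V V ℂ) i j) := by
  have := h.mulVec_eigenvectorBasis j
  funext i
  have hi := congr_fun this i
  simp only [Matrix.IsHermitian.eigenvectorUnitary_apply]
  rw [hi]
  simp [Complex.real_smul]

lemma evec_real (M : Matrix V V ℝ) (lam : ℝ) (v : V → ℂ)
    (hv : (M.map (fun x : ℝ => (x : ℂ))) *ᵥ v = (lam : ℂ) • v) :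
    M.mulVec (fun i => (v i).re) = lam • (fun i => (v i).re) ∧
    M.mulVec (fun i => (v i).im) = lam • (fun i => (v i).im) := by
  have key : ∀ i, ∑ x, (M i x : ℂ) * v x = (lam : ℂ) * v i := by
    intro i
    have hi := congr_fun hv i
    rw [Matrix.mulVec, dotProduct] at hi
    simpa [Matrix.map_apply, Complex.real_smul] using hi
  constructor
  · funext i
    have := congr_arg Complex.re (key i)
    simpa [Complex.re_sum, Matrix.mulVec, dotProduct] using this
  · funext i
    have := congr_arg Complex.im (key i)
    simpa [Complex.im_sum, Matrix.mulVec, dotProduct] using this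

lemma support_of_entry (M : Matrix V V ℝ) (h : (M.map (fun x : ℝ => (x : ℂ))).IsHermitian)
    (u j : V) (hne : (h.eigenvectorUnitary : Matrix V V ℂ) u j ≠ 0) :
    h.eigenvalues j ∈ eigSupport M u := by
  set U : Matrix V V ℂ := (h.eigenvectorUnitary : Matrix V V ℂ)
  have hcol := col_eig M h j
  have hre := (evec_real M (h.eigenvalues j) _ hcol).1
  have him := (evec_real M (h.eigenvalues j) _ hcol).2
  by_cases hr : (U u j).re ≠ 0
  · exact ⟨_, fun h0 => hr (by simpa [U] using congr_fun h0 u), hre, hr⟩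
  · have hi : (U u j).im ≠ 0 := by
      intro h0
      exact hne (Complex.ext (by simpa using hr) (by simpa using h0))
    exact ⟨_, fun h0 => hi (by simpa [U] using congr_fun h0 u), him, hi⟩

lemma entry_of_support (M : Matrix V V ℝ) (hM : M.IsSymm)
    (h : (M.map (fun x : ℝ => (x : ℂ))).IsHermitian)
    (u : V) (lam : ℝ) (hlam : lam ∈ eigSupport M u) :
    ∃ j, h.eigenvalues j = lam ∧ (h.eigenvectorUnitary : Matrix V V ℂ) u j ≠ 0 := by
  set U : Matrix V V ℂ := (h.eigenvectorUnitary : Matrix V V ℂ) with hUdef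
  have hU1 : U * star U = 1 := (Matrix.mem_unitaryGroup_iff).mp h.eigenvectorUnitary.2
  obtain ⟨w, hw0, hwe, hwu⟩ := hlam
  set wc : V → ℂ := fun i => (w i : ℂ) with hwc
  have hwce : (M.map (fun x : ℝ => (x : ℂ))) *ᵥ wc = (lam : ℂ) • wc := by
    funext i
    have h1 : ∑ x, M i x * w x = lam * w i := by
      simpa [Matrix.mulVec, dotProduct] using congr_fun hwe i
    rw [Matrix.mulVec, dotProduct]
    simp only [Matrix.map_apply, Pi.smul_apply, hwc, Complex.real_smul, smul_eq_mul]
    exact_mod_cast congr_arg Complex.ofReal h1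
  set c : V → ℂ := star U *ᵥ wc with hc
  have hrec : U *ᵥ c = wc := by
    rw [hc, Matrix.mulVec_mulVec, hU1, Matrix.one_mulVec]
  have hker : ∀ j, h.eigenvalues j ≠ lam → c j = 0 := by
    intro j hje
    have hcj : c j = ∑ i, star (U i j) * wc i := by
      rw [hc, Matrix.mulVec, dotProduct]
      refine Finset.sum_congr rfl fun i _ => ?_
      rw [Matrix.star_eq_conjTranspose, Matrix.conjTranspose_apply]
    have key : (h.eigenvalues j : ℂ) * c j = (lam : ℂ) * c j := by
      have hcol := col_eig M h j
      calc (h.eigenvalues j : ℂ) * c j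
          = ∑ i, star ((h.eigenvalues j : ℂ) * U i j) * wc i := by
            rw [hcj, Finset.mul_sum]
            refine Finset.sum_congr rfl fun i _ => ?_
            rw [star_mul', Complex.star_def, Complex.conj_ofReal]
            ring
        _ = ∑ i, star (∑ t, (M i t : ℂ) * U t j) * wc i := by
            refine Finset.sum_congr rfl fun i _ => ?_
            have h2 := congr_fun hcol i
            simp only [Pi.smul_apply, smul_eq_mul] at h2
            have h3 : (h.eigenvalues j : ℂ) * U i j = ∑ t, (M i t : ℂ) * U t j := by
              rw [← h2, Matrix.mulVec, dotProduct]
              rfl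
            rw [h3]
        _ = ∑ i, ∑ t, (M i t : ℂ) * (star (U t j) * wc i) := by
            refine Finset.sum_congr rfl fun i _ => ?_
            rw [star_sum, Finset.sum_mul]
            refine Finset.sum_congr rfl fun t _ => ?_
            rw [star_mul', Complex.star_def, Complex.conj_ofReal]
            ring
        _ = ∑ t, star (U t j) * ∑ i, (M t i : ℂ) * wc i := by
            rw [Finset.sum_comm]
            refine Finset.sum_congr rfl fun t _ => ?_
            rw [Finset.mul_sum]
            refine Finset.sum_congr rfl fun i _ => ?_
            rw [hM.apply i t]
            ring
        _ = ∑ t, star (U t j) * ((lam : ℂ) * wc t) := by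
            refine Finset.sum_congr rfl fun t _ => ?_
            congr 1
            have := congr_fun hwce t
            rw [Matrix.mulVec, dotProduct] at this
            simp only [Matrix.map_apply, Pi.smul_apply, smul_eq_mul] at this
            exact this
        _ = (lam : ℂ) * c j := by
            rw [hcj, Finset.mul_sum]
            refine Finset.sum_congr rfl fun t _ => ?_
            ring
    have h5 : ((h.eigenvalues j : ℂ) - lam) * c j = 0 := by rw [sub_mul, key]; ring
    rcases mul_eq_zero.mp h5 with h0 | h0
    · exact absurd (by exact_mod_cast sub_eq_zero.mp h0) hje
    · exact h0
  by_contra hcon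
  push_neg at hcon
  have h6 : wc u = 0 := by
    rw [← hrec, Matrix.mulVec, dotProduct]
    refine Finset.sum_eq_zero fun j _ => ?_
    by_cases hje : h.eigenvalues j = lam
    · rw [hcon j hje, zero_mul]
    · rw [hker j hje, mul_zero]
  have h4 : (w u : ℂ) = 0 := h6
  exact hwu (by exact_mod_cast h4)

lemma periodic_of_rat (M : Matrix V V ℝ) (hM : M.IsSymm) (u : V)
    (hrat : ∀ lam ∈ eigSupport M u, ∃ q : ℚ, lam = (q : ℝ)) :
    PeriodicAt M u := by
  classical
  have h := cmap_herm hM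
  set U : Matrix V V ℂ := (h.eigenvectorUnitary : Matrix V V ℂ) with hUdef
  have hq : ∀ j : V, ∃ q : ℚ, U u j ≠ 0 → h.eigenvalues j = (q : ℝ) := by
    intro j
    by_cases hj : U u j ≠ 0
    · obtain ⟨q, hq⟩ := hrat _ (support_of_entry M h u j hj)
      exact ⟨q, fun _ => hq⟩
    · exact ⟨0, fun hc => absurd hc hj⟩
  choose q hq using hq
  set d : ℕ := ∏ j, (q j).den with hd
  have hdpos : 0 < d := Finset.prod_pos fun j _ => (q j).pos
  refine ⟨2 * Real.pi * d, by positivity, ?_⟩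
  rw [transU_apply M h]
  have hsum : ∑ j, Complex.exp (Complex.I * (2 * Real.pi * d : ℝ) * h.eigenvalues j) *
      (U u j * star (U u j)) = ∑ j, (U u j * star (U u j)) := by
    refine Finset.sum_congr rfl fun j _ => ?_
    by_cases hj : U u j = 0
    · rw [hj]; ring
    · obtain ⟨c, hc⟩ := Finset.dvd_prod_of_mem (fun j => (q j).den) (Finset.mem_univ j)
      have hz : ((q j : ℝ)) * d = ((q j).num * c : ℤ) := by
        rw [hd, hc]
        push_cast
        have hqd : ((q j):ℝ) * ((q j).den:ℝ) = ((q j).num:ℝ) := by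
          rw [Rat.cast_def]
          field_simp
        rw [← mul_assoc, hqd]
      have : Complex.I * (2 * Real.pi * d : ℝ) * (h.eigenvalues j : ℂ)
          = ((q j).num * c : ℤ) * (2 * Real.pi * Complex.I) := by
        rw [hq j hj]
        have hC : ((q j : ℝ) * d : ℂ) = (((q j).num * c : ℤ) : ℂ) := by
          exact_mod_cast congrArg Complex.ofReal hz
        push_cast at hC ⊢
        linear_combination (2 * (Real.pi : ℂ) * Complex.I) * hC
      rw [this, Complex.exp_int_mul_two_pi_mul_I, one_mul]
  rw [hsum, sumP M h u]
  simp

lemma re_eq_one_of_abs_one {z : ℂ} (habs : ‖z‖ = 1) (hre : z.re = 1) : z = 1 := by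
  have h1 : Complex.normSq z = 1 := by
    have := Complex.sq_norm z
    rw [habs] at this
    simpa using this.symm
  rw [Complex.normSq_apply, hre] at h1
  have him : z.im = 0 := by nlinarith
  exact Complex.ext (by simp [hre]) (by simp [him])

lemma periodic_phase (M : Matrix V V ℝ) (hM : M.IsSymm) (u : V) (hp : PeriodicAt M u) :
    ∃ τ : ℝ, 0 < τ ∧ ∀ lam ∈ eigSupport M u, ∀ mu ∈ eigSupport M u,
      ∃ z : ℤ, τ * (lam - mu) = z * (2 * Real.pi) := by
  classical
  have h := cmap_herm hM
  set U : Matrix V V ℂ := (h.eigenvectorUnitary : Matrix V V ℂ) with hUdef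
  obtain ⟨τ, hτ, habs⟩ := hp
  refine ⟨τ, hτ, ?_⟩
  set P : V → ℝ := fun j => Complex.normSq (U u j) with hP
  have hPnn : ∀ j, 0 ≤ P j := fun j => Complex.normSq_nonneg _
  have hmc : ∀ j, U u j * star (U u j) = ((P j : ℝ) : ℂ) := by
    intro j; rw [hP]; exact Complex.mul_conj _
  have hPsum : ∑ j, P j = 1 := by
    have := sumP M h u
    have h2 : ((∑ j, P j : ℝ) : ℂ) = 1 := by
      push_cast
      rw [← this]
      exact Finset.sum_congr rfl fun j _ => (hmc j).symm
    exact_mod_cast h2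
  set g : V → ℂ := fun j => Complex.exp (Complex.I * τ * h.eigenvalues j) with hg
  have habsg : ∀ j, ‖g j‖ = 1 := by
    intro j
    rw [hg]
    simp [Complex.norm_exp]
  set S : ℂ := ∑ j, g j * ((P j : ℝ) : ℂ) with hS
  have habsS : ‖S‖ = 1 := by
    rw [hS]
    have e : (∑ j, g j * ((P j : ℝ) : ℂ)) = transU M τ u u := by
      rw [transU_apply M h]
      exact Finset.sum_congr rfl fun j _ => congrArg (g j * ·) (hmc j).symm
    rw [e]
    exact habs
  have hnormSqS : Complex.normSq S = 1 := by
    rw [← Complex.sq_norm, habsS, one_pow]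
  have key : ∀ j, P j ≠ 0 → g j = S := by
    have hre : ∀ j, ((starRingEnd ℂ) S * g j).re ≤ 1 := by
      intro j
      calc ((starRingEnd ℂ) S * g j).re ≤ ‖(starRingEnd ℂ) S * g j‖ :=
            Complex.re_le_norm _
        _ = 1 := by rw [norm_mul, Complex.norm_conj, habsS, habsg, one_mul]
    have hSS : ((starRingEnd ℂ) S * S).re = 1 := by
      rw [mul_comm, Complex.mul_conj, hnormSqS]
      simp
    have hexp : ((starRingEnd ℂ) S * S).re = ∑ j, P j * ((starRingEnd ℂ) S * g j).re := by
      rw [hS, Finset.mul_sum, Complex.re_sum]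
      refine Finset.sum_congr rfl fun j _ => ?_
      rw [show (starRingEnd ℂ) (∑ j, g j * ((P j : ℝ) : ℂ)) * (g j * ((P j : ℝ) : ℂ))
            = ((starRingEnd ℂ) (∑ j, g j * ((P j : ℝ) : ℂ)) * g j) * ((P j : ℝ) : ℂ) by ring,
        Complex.mul_re]
      simp only [Complex.ofReal_re, Complex.ofReal_im, mul_zero, sub_zero, ← hS]
      ring
    have hre1 : ∑ j, P j * (1 - ((starRingEnd ℂ) S * g j).re) = 0 := by
      have hsplit : ∑ j, P j * (1 - ((starRingEnd ℂ) S * g j).re)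
          = (∑ j, P j) - ∑ j, P j * ((starRingEnd ℂ) S * g j).re := by
        rw [← Finset.sum_sub_distrib]
        exact Finset.sum_congr rfl fun j _ => by ring
      rw [hsplit, hPsum, ← hexp, hSS, sub_self]
    intro j hPj
    have hterm : P j * (1 - ((starRingEnd ℂ) S * g j).re) = 0 :=
      (Finset.sum_eq_zero_iff_of_nonneg (fun i _ => by
        have h1 := hre i
        have h2 := hPnn i
        nlinarith)).mp hre1 j (Finset.mem_univ j)
    have hre1j : ((starRingEnd ℂ) S * g j).re = 1 := by
      rcases mul_eq_zero.mp hterm with h0 | h0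
      · exact absurd h0 hPj
      · linarith
    have habsj : ‖(starRingEnd ℂ) S * g j‖ = 1 := by
      rw [norm_mul, Complex.norm_conj, habsS, habsg, one_mul]
    have hone := re_eq_one_of_abs_one habsj hre1j
    have hS2 : S * ((starRingEnd ℂ) S * g j) = S := by rw [hone, mul_one]
    rw [← mul_assoc, Complex.mul_conj, hnormSqS] at hS2
    simpa using hS2
  intro lam hlam mu hmu
  obtain ⟨j, hj, hj0⟩ := entry_of_support M hM h u lam hlam
  obtain ⟨j', hj', hj0'⟩ := entry_of_support M hM h u mu hmu
  have hgj : g j = S := key j (fun hc => hj0 (by rwa [hP, Complex.normSq_eq_zero] at hc))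
  have hgj' : g j' = S := key j' (fun hc => hj0' (by rwa [hP, Complex.normSq_eq_zero] at hc))
  have heq : Complex.exp (Complex.I * τ * lam) = Complex.exp (Complex.I * τ * mu) := by
    rw [← hj, ← hj']
    exact hgj.trans hgj'.symm
  rw [Complex.exp_eq_exp_iff_exists_int] at heq
  obtain ⟨z, hz⟩ := heq
  refine ⟨z, ?_⟩
  have h7 : (Complex.I : ℂ) * (↑(τ * (lam - mu)) - ↑((z : ℝ) * (2 * Real.pi))) = 0 := by
    push_cast
    linear_combination hz
  rcases mul_eq_zero.mp h7 with h0 | h0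
  · exact absurd h0 Complex.I_ne_zero
  · have := sub_eq_zero.mp h0
    exact_mod_cast this

end AuxGeneric

section Join

variable {m n : ℕ} {k ℓ : ℝ} {AX : Matrix (Fin m) (Fin m) ℝ} {AY : Matrix (Fin n) (Fin n) ℝ}

lemma joinA_symm (hAX : AX.IsSymm) (hAY : AY.IsSymm) : (joinA m n AX AY).IsSymm := by
  unfold joinA
  rw [Matrix.IsSymm, Matrix.fromBlocks_transpose, hAX.eq, hAY.eq]
  congr 1 <;> ext i j <;> rfl

lemma joinA_mulVec_inl (w : Fin m ⊕ Fin n → ℝ) (i : Fin m) :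
    (joinA m n AX AY).mulVec w (Sum.inl i)
      = (AX.mulVec (w ∘ Sum.inl)) i + ∑ j, w (Sum.inr j) := by
  rw [Matrix.mulVec, dotProduct, Fintype.sum_sum_type]
  simp [joinA, Matrix.mulVec, dotProduct]

lemma joinA_mulVec_inr (w : Fin m ⊕ Fin n → ℝ) (i : Fin n) :
    (joinA m n AX AY).mulVec w (Sum.inr i)
      = (∑ j, w (Sum.inl j)) + (AY.mulVec (w ∘ Sum.inr)) i := by
  rw [Matrix.mulVec, dotProduct, Fintype.sum_sum_type]
  simp [joinA, Matrix.mulVec, dotProduct]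

lemma colsum (hAX : AX.IsSymm) (hrow : ∀ i, ∑ j, AX i j = k) (j : Fin m) :
    ∑ i, AX i j = k := by
  rw [← hrow j]
  exact Finset.sum_congr rfl fun i _ => hAX.apply j i ▸ rfl

lemma sum_mulVec (hAX : AX.IsSymm) (hrow : ∀ i, ∑ j, AX i j = k) (x : Fin m → ℝ) :
    ∑ i, AX.mulVec x i = k * ∑ j, x j := by
  simp_rw [Matrix.mulVec, dotProduct]
  rw [Finset.sum_comm, Finset.mul_sum]
  refine Finset.sum_congr rfl fun j _ => ?_
  rw [← Finset.sum_mul, colsum hAX hrow j]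

lemma support_char (hm : 1 ≤ m) (hAXsymm : AX.IsSymm) (hrowX : ∀ i, ∑ j, AX i j = k)
    (hAYsymm : AY.IsSymm) (hrowY : ∀ i, ∑ j, AY i j = ℓ) (u : Fin m) (lam : ℝ)
    (hlam : lam ∈ eigSupport (joinA m n AX AY) (Sum.inl u)) :
    lam ∈ eigSupport AX u ∨ (lam - k) * (lam - ℓ) = m * n := by
  obtain ⟨w, hw0, hwe, hwu⟩ := hlam
  set x : Fin m → ℝ := w ∘ Sum.inl with hx
  set y : Fin n → ℝ := w ∘ Sum.inr with hy
  set s : ℝ := ∑ j, x j with hs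
  set t : ℝ := ∑ j, y j with ht
  have eqX : ∀ i, AX.mulVec x i + t = lam * x i := by
    intro i
    have := congr_fun hwe (Sum.inl i)
    rw [joinA_mulVec_inl] at this
    simpa [x, y, t] using this
  have eqY : ∀ i, s + AY.mulVec y i = lam * y i := by
    intro i
    have := congr_fun hwe (Sum.inr i)
    rw [joinA_mulVec_inr] at this
    simpa [x, y, s] using this
  have sumX : k * s + m * t = lam * s := by
    have h1 : ∑ i, (AX.mulVec x i + t) = ∑ i, lam * x i :=
      Finset.sum_congr rfl fun i _ => eqX i
    rw [Finset.sum_add_distrib, sum_mulVec hAXsymm hrowX, Finset.sum_const, ← Finset.mul_sum]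
      at h1
    simpa [← hs, mul_comm, nsmul_eq_mul] using h1
  have sumY : (n : ℝ) * s + ℓ * t = lam * t := by
    have h1 : ∑ i, (s + AY.mulVec y i) = ∑ i, lam * y i :=
      Finset.sum_congr rfl fun i _ => eqY i
    rw [Finset.sum_add_distrib, sum_mulVec hAYsymm hrowY, Finset.sum_const, ← Finset.mul_sum]
      at h1
    simpa [← ht, mul_comm, nsmul_eq_mul] using h1
  by_cases htz : t = 0
  · left
    refine ⟨x, fun h0 => hwu (by simpa [hx] using congr_fun h0 u), ?_,
      by simpa [hx] using hwu⟩
    funext i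
    have := eqX i
    rw [htz, add_zero] at this
    simpa using this
  · right
    have hsz : s ≠ 0 := by
      intro h0
      rw [h0] at sumX
      have hmpos : (0:ℝ) < m := by exact_mod_cast hm
      apply htz
      nlinarith
    have key : ((lam - k) * (lam - ℓ)) * s = ((m : ℝ) * n) * s := by
      linear_combination (ℓ - lam) * sumX - (m : ℝ) * sumY
    exact mul_right_cancel₀ hsz key
end Join

section Join2
variable {m n : ℕ} {k ℓ : ℝ} {AX : Matrix (Fin m) (Fin m) ℝ} {AY : Matrix (Fin n) (Fin n) ℝ}

lemma mulVec_const (hrow : ∀ i, ∑ j, AX i j = k) (c : ℝ) (i : Fin m) :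
    AX.mulVec (fun _ => c) i = k * c := by
  rw [Matrix.mulVec, dotProduct, ← Finset.sum_mul, hrow i]

lemma theta_mem (hn : 1 ≤ n) (hrowX : ∀ i, ∑ j, AX i j = k)
    (hrowY : ∀ i, ∑ j, AY i j = ℓ) (u : Fin m) (θ : ℝ)
    (hθ : (θ - k) * (θ - ℓ) = m * n) :
    θ ∈ eigSupport (joinA m n AX AY) (Sum.inl u) := by
  have hnR : ((n : ℝ)) ≠ 0 := by positivity
  refine ⟨Sum.elim (fun _ => (n : ℝ)) (fun _ => θ - k),
    fun h0 => hnR (by simpa using congr_fun h0 (Sum.inl u)), ?_, by simpa using hnR⟩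
  funext i
  cases i with
  | inl i =>
    rw [joinA_mulVec_inl]
    have h1 : ((Sum.elim (fun _ => (n : ℝ)) (fun _ => θ - k) : Fin m ⊕ Fin n → ℝ) ∘ Sum.inl) = fun _ => (n:ℝ) := rfl
    rw [h1, mulVec_const hrowX]
    simp only [Sum.elim_inr, Finset.sum_const, Finset.card_univ, Fintype.card_fin,
      nsmul_eq_mul, Pi.smul_apply, Sum.elim_inl, smul_eq_mul]
    ring
  | inr i =>
    rw [joinA_mulVec_inr]
    have h1 : ((Sum.elim (fun _ => (n : ℝ)) (fun _ => θ - k) : Fin m ⊕ Fin n → ℝ) ∘ Sum.inr) = fun _ => θ - k := rfl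
    rw [h1, mulVec_const hrowY]
    simp only [Sum.elim_inl, Finset.sum_const, Finset.card_univ, Fintype.card_fin,
      nsmul_eq_mul, Pi.smul_apply, Sum.elim_inr, smul_eq_mul]
    nlinarith [hθ]

lemma lift_mem (hAXsymm : AX.IsSymm) (hrowX : ∀ i, ∑ j, AX i j = k) (u : Fin m) (lam : ℝ)
    (hlam : lam ∈ eigSupport AX u) (hne : lam ≠ k) :
    lam ∈ eigSupport (joinA m n AX AY) (Sum.inl u) := by
  obtain ⟨w, hw0, hwe, hwu⟩ := hlam
  have hsum0 : ∑ j, w j = 0 := by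
    have h1 : ∑ i, AX.mulVec w i = k * ∑ j, w j := sum_mulVec hAXsymm hrowX w
    have h2 : ∑ i, AX.mulVec w i = lam * ∑ j, w j := by
      rw [hwe]
      simp [Finset.mul_sum]
    have h3 : (k - lam) * ∑ j, w j = 0 := by
      linear_combination h1.symm.trans h2
    rcases mul_eq_zero.mp h3 with h0 | h0
    · exact absurd (by linarith : lam = k) hne
    · exact h0
  refine ⟨Sum.elim w 0, fun h0 => hwu (by simpa using congr_fun h0 (Sum.inl u)), ?_,
    by simpa using hwu⟩
  funext i
  cases i with
  | inl i =>
    rw [joinA_mulVec_inl]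
    have h1 : (Sum.elim w (0 : Fin n → ℝ)) ∘ Sum.inl = w := rfl
    rw [h1]
    simp only [Sum.elim_inr, Pi.zero_apply, Finset.sum_const_zero, add_zero, Pi.smul_apply,
      Sum.elim_inl, smul_eq_mul]
    rw [hwe]
    simp
  | inr i =>
    rw [joinA_mulVec_inr]
    have h1 : (Sum.elim w (0 : Fin n → ℝ)) ∘ Sum.inr = (0 : Fin n → ℝ) := rfl
    rw [h1]
    simp [hsum0]
end Join2

theorem stmt6 (m n : ℕ) (hm : 1 ≤ m) (hn : 1 ≤ n) (k ℓ : ℝ)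
    (AX : Matrix (Fin m) (Fin m) ℝ) (AY : Matrix (Fin n) (Fin n) ℝ)
    (hAXsymm : AX.IsSymm) (hAXnonneg : ∀ i j, 0 ≤ AX i j) (hAXrow : ∀ i, ∑ j, AX i j = k)
    (hAYsymm : AY.IsSymm) (hAYnonneg : ∀ i j, 0 ≤ AY i j) (hAYrow : ∀ i, ∑ j, AY i j = ℓ)
    (D : ℝ) (hD : D = (k - ℓ) ^ 2 + 4 * m * n)
    (hk : ∃ q : ℚ, k = (q : ℝ)) (hℓ : ∃ q : ℚ, ℓ = (q : ℝ))
    (hsqrtD : ∃ q : ℚ, Real.sqrt D = (q : ℝ)) (u : Fin m) :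
    PeriodicAt (joinA m n AX AY) (Sum.inl u) ↔
      ∀ lam ∈ eigSupport AX u, ∃ q : ℚ, lam = (q : ℝ) := by
  obtain ⟨qk, hqk⟩ := hk
  obtain ⟨qℓ, hqℓ⟩ := hℓ
  obtain ⟨qD, hqD⟩ := hsqrtD
  have hjs : (joinA m n AX AY).IsSymm := joinA_symm hAXsymm hAYsymm
  have hm1 : (1:ℝ) ≤ m := by exact_mod_cast hm
  have hn1 : (1:ℝ) ≤ n := by exact_mod_cast hn
  have hDpos : 0 < D := by rw [hD]; nlinarith
  have hD0 : 0 ≤ D := le_of_lt hDpos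
  have hsD : 0 < Real.sqrt D := Real.sqrt_pos.mpr hDpos
  have hS2 : Real.sqrt D ^ 2 = (k - ℓ)^2 + 4*m*n := by rw [Real.sq_sqrt hD0, hD]
  constructor
  · intro hp
    obtain ⟨τ, hτ, hph⟩ := periodic_phase _ hjs _ hp
    set S := Real.sqrt D with hSdef
    set θp := (k + ℓ + S)/2 with hθp
    set θm := (k + ℓ - S)/2 with hθm
    have hp1 : (θp - k)*(θp - ℓ) = m*n := by rw [hθp]; linear_combination hS2/4
    have hp2 : (θm - k)*(θm - ℓ) = m*n := by rw [hθm]; linear_combination hS2/4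
    have memp := theta_mem (AX := AX) (AY := AY) hn hAXrow hAYrow u θp hp1
    have memm := theta_mem (AX := AX) (AY := AY) hn hAXrow hAYrow u θm hp2
    intro lam hlam
    by_cases hlk : lam = k
    · exact ⟨qk, by rw [hlk, hqk]⟩
    · have hmem := lift_mem (AY := AY) hAXsymm hAXrow u lam hlam hlk
      obtain ⟨N, hN⟩ := hph θp memp θm memm
      obtain ⟨Z, hZ⟩ := hph lam hmem θp memp
      have hdiff : θp - θm = S := by rw [hθp, hθm]; ring
      rw [hdiff] at hN
      have hNpos : (0:ℝ) < N * (2*Real.pi) := by rw [← hN]; positivity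
      have hNne : (N:ℝ) ≠ 0 := by
        intro h0
        rw [h0, zero_mul] at hNpos
        exact lt_irrefl _ hNpos
      have hcancel : (N:ℝ) * (lam - θp) = Z * S := by
        have h1 : τ * ((N:ℝ)*(lam - θp) - Z * S) = 0 := by
          linear_combination (N:ℝ) * hZ - (Z:ℝ) * hN
        rcases mul_eq_zero.mp h1 with h0 | h0
        · exact absurd h0 (ne_of_gt hτ)
        · linarith
      refine ⟨(qk + qℓ + qD)/2 + (Z : ℚ) * qD / (N : ℚ), ?_⟩
      have hNq : ((N:ℚ):ℝ) ≠ 0 := by exact_mod_cast hNne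
      rw [hθp] at hcancel
      push_cast
      rw [← hqk, ← hqℓ, ← hqD]
      field_simp
      linear_combination 2 * hcancel
  · intro hrat
    refine periodic_of_rat _ hjs _ (fun lam hlam => ?_)
    rcases support_char hm hAXsymm hAXrow hAYsymm hAYrow u lam hlam with hmem | hquad
    · exact hrat lam hmem
    · have hsq : (2*lam - (k+ℓ))^2 = D := by rw [hD]; linear_combination 4*hquad
      have habs2 : |2*lam - (k+ℓ)| = Real.sqrt D := by rw [← hsq, Real.sqrt_sq_eq_abs]
      rcases (abs_eq (Real.sqrt_nonneg D)).mp habs2 with h0 | h0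
      · exact ⟨(qk + qℓ + qD)/2, by push_cast; rw [← hqk, ← hqℓ, ← hqD]; linarith⟩
      · exact ⟨(qk + qℓ - qD)/2, by push_cast; rw [← hqk, ← hqℓ, ← hqD]; linarith⟩
end

section
/- Assume the off-diagonal entries of L_X and of L_Y are nonpositive and that the characteristic polynomial of L has integer coefficients. Then there exist a real τ > 0 and a complex number γ with |γ| = 1 such that exp(iτL) = γ·I if and only if every eigenvalue of L is an integer. -/
open Matrix Complex

section aux
open Polynomial
variable {N : Type*} [Fintype N] [DecidableEq N]

lemma isHermitian_cmap {M : Matrix N N ℝ} (h : M.IsSymm) :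
    (M.map (fun x : ℝ => (x : ℂ))).IsHermitian := by
  ext i j
  simp only [Matrix.conjTranspose_apply, Matrix.map_apply, Complex.star_def,
    Complex.conj_ofReal, Complex.ofReal_inj]
  exact h.apply i j

lemma cancel_unitary {U : Matrix N N ℂ} (hsU : star U * U = 1) (B : Matrix N N ℂ) :
    star U * (U * B * star U) * U = B := by
  simp only [← Matrix.mul_assoc]
  rw [hsU, Matrix.one_mul, Matrix.mul_assoc, hsU, Matrix.mul_one]

lemma transU_eq_smul_one_iff (M : Matrix N N ℝ)
    (hM : (M.map (fun x : ℝ => (x : ℂ))).IsHermitian) (τ : ℝ) (γ : ℂ) :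
    transU M τ = γ • 1 ↔ ∀ i, Complex.exp (Complex.I * τ * hM.eigenvalues i) = γ := by
  set U : Matrix N N ℂ := (hM.eigenvectorUnitary : Matrix N N ℂ) with hUdef
  have hsU : star U * U = 1 := Matrix.mem_unitaryGroup_iff'.mp hM.eigenvectorUnitary.2
  have hUs : U * star U = 1 := Matrix.mem_unitaryGroup_iff.mp hM.eigenvectorUnitary.2
  have hspec := hM.spectral_theorem
  have h1 : (Complex.I * (τ : ℂ)) • (M.map (fun x : ℝ => (x : ℂ)))
      = U * Matrix.diagonal (fun i => (Complex.I * τ) * (hM.eigenvalues i : ℂ)) * star U := by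
    conv_lhs => rw [hspec, Unitary.conjStarAlgAut_apply]
    rw [← smul_mul_assoc, ← mul_smul_comm]
    congr 2
    rw [← Matrix.diagonal_smul]
    congr 1
  have key : transU M τ
      = U * Matrix.diagonal (fun i => Complex.exp (Complex.I * τ * hM.eigenvalues i)) * star U := by
    have hu : transU M τ = NormedSpace.exp
        (U * Matrix.diagonal (fun i => (Complex.I * τ) * (hM.eigenvalues i : ℂ)) * star U) := by
      rw [transU, h1]
    set u : (Matrix N N ℂ)ˣ := ⟨U, star U, hUs, hsU⟩ with hudef
    have := Matrix.exp_units_conj u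
      (Matrix.diagonal (fun i => (Complex.I * τ) * (hM.eigenvalues i : ℂ)))
    rw [hu]
    have hco : (↑u : Matrix N N ℂ) = U := rfl
    have hco' : (↑u⁻¹ : Matrix N N ℂ) = star U := rfl
    rw [hco, hco'] at this
    rw [this, Matrix.exp_diagonal]
    congr 2
    rw [Pi.exp_def]
    funext i
    rw [← Complex.exp_eq_exp_ℂ]
  rw [key]
  constructor
  · intro h i
    have h4 : Matrix.diagonal (fun i => Complex.exp (Complex.I * τ * hM.eigenvalues i))
        = γ • 1 := by
      have := cancel_unitary hsU
        (Matrix.diagonal (fun i => Complex.exp (Complex.I * τ * hM.eigenvalues i)))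
      rw [← this, h]
      rw [mul_smul_comm, smul_mul_assoc, Matrix.mul_one, hsU]
    have h5 := congr_arg (fun A : Matrix N N ℂ => A i i) h4
    simpa [Matrix.smul_apply] using h5
  · intro h
    have h4 : Matrix.diagonal (fun i => Complex.exp (Complex.I * τ * hM.eigenvalues i))
        = γ • 1 := by
      ext i j
      by_cases hij : i = j
      · subst hij
        simp [Matrix.diagonal_apply_eq, Matrix.smul_apply, Matrix.one_apply_eq, h i]
      · simp [Matrix.diagonal_apply_ne _ hij, Matrix.one_apply_ne hij]
    rw [h4, mul_smul_comm, smul_mul_assoc, Matrix.mul_one, hUs]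

lemma det_sub_smul (M : Matrix N N ℝ)
    (hM : (M.map (fun x : ℝ => (x : ℂ))).IsHermitian) (lam : ℝ) :
    (M.map (fun x : ℝ => (x : ℂ)) - (lam : ℂ) • 1).det
      = ∏ i, ((hM.eigenvalues i : ℂ) - lam) := by
  set U : Matrix N N ℂ := (hM.eigenvectorUnitary : Matrix N N ℂ) with hUdef
  have hsU : star U * U = 1 := Matrix.mem_unitaryGroup_iff'.mp hM.eigenvectorUnitary.2
  have hUs : U * star U = 1 := Matrix.mem_unitaryGroup_iff.mp hM.eigenvectorUnitary.2
  have hspec := hM.spectral_theorem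
  have hsm : (lam : ℂ) • (1 : Matrix N N ℂ) = U * ((lam : ℂ) • 1) * star U := by
    rw [mul_smul_comm, smul_mul_assoc, Matrix.mul_one, hUs]
  have hdiff : M.map (fun x : ℝ => (x : ℂ)) - (lam : ℂ) • 1
      = U * Matrix.diagonal (fun i => (hM.eigenvalues i : ℂ) - lam) * star U := by
    conv_lhs => rw [hspec, Unitary.conjStarAlgAut_apply, hsm]
    rw [← Matrix.sub_mul, ← Matrix.mul_sub]
    congr 2
    rw [← Matrix.diagonal_one, ← Matrix.diagonal_smul, Matrix.diagonal_sub]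
    funext i
    simp [Function.comp, smul_eq_mul]
  have hdetU : U.det * (star U).det = 1 := by
    rw [← Matrix.det_mul, hUs, Matrix.det_one]
  rw [hdiff, Matrix.det_mul, Matrix.det_mul, Matrix.det_diagonal, mul_right_comm, hdetU, one_mul]

lemma eig_iff (M : Matrix N N ℝ)
    (hM : (M.map (fun x : ℝ => (x : ℂ))).IsHermitian) (lam : ℝ) :
    IsEigenvalue M lam ↔ ∃ i, hM.eigenvalues i = lam := by
  constructor
  · rintro ⟨w, hw0, hw⟩
    have hv0 : (fun j => (w j : ℂ)) ≠ 0 := by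
      intro h
      apply hw0
      funext j
      have h2 : (w j : ℂ) = 0 := by simpa using congrFun h j
      exact_mod_cast h2
    have hveq : (M.map (fun x : ℝ => (x : ℂ)) - (lam : ℂ) • 1) *ᵥ (fun j => (w j : ℂ)) = 0 := by
      funext k
      have hk := congrFun hw k
      simp only [Matrix.mulVec, dotProduct, Pi.smul_apply, smul_eq_mul] at hk
      simp only [Matrix.sub_mulVec, Pi.sub_apply, Matrix.smul_mulVec,
        Pi.smul_apply, Matrix.one_mulVec, smul_eq_mul, Pi.zero_apply]
      simp only [Matrix.mulVec, dotProduct, Matrix.map_apply]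
      rw [sub_eq_zero]
      exact_mod_cast congrArg (fun x : ℝ => (x : ℂ)) hk
    have hdet := (Matrix.exists_mulVec_eq_zero_iff).mp ⟨_, hv0, hveq⟩
    rw [det_sub_smul M hM lam] at hdet
    obtain ⟨i, _, hi⟩ := Finset.prod_eq_zero_iff.mp hdet
    refine ⟨i, ?_⟩
    have := sub_eq_zero.mp hi
    exact_mod_cast this
  · rintro ⟨i, rfl⟩
    set v : N → ℂ := ⇑(hM.eigenvectorBasis i) with hvdef
    have hv : (M.map (fun x : ℝ => (x : ℂ))) *ᵥ v = hM.eigenvalues i • v :=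
      hM.mulVec_eigenvectorBasis i
    have hvne : v ≠ 0 := by
      intro h
      exact hM.eigenvectorBasis.orthonormal.ne_zero i (by ext k; exact congrFun h k)
    obtain ⟨k0, hk0⟩ : ∃ k, v k ≠ 0 := by
      by_contra h
      push_neg at h
      exact hvne (funext h)
    have hre : ∀ k, ∑ j, M k j * (v j).re = hM.eigenvalues i * (v k).re := by
      intro k
      have hk := congrFun hv k
      simp only [Matrix.mulVec, dotProduct, Pi.smul_apply, Matrix.map_apply] at hk
      have := congrArg Complex.re hk
      simpa [Complex.re_sum, Complex.mul_re, Complex.smul_re] using this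
    have him : ∀ k, ∑ j, M k j * (v j).im = hM.eigenvalues i * (v k).im := by
      intro k
      have hk := congrFun hv k
      simp only [Matrix.mulVec, dotProduct, Pi.smul_apply, Matrix.map_apply] at hk
      have := congrArg Complex.im hk
      simpa [Complex.im_sum, Complex.mul_im, Complex.smul_im] using this
    by_cases hcase : (v k0).re ≠ 0
    · exact ⟨fun j => (v j).re, fun h => hcase (congrFun h k0), by
        funext k
        simp only [Matrix.mulVec, dotProduct, Pi.smul_apply, smul_eq_mul]
        exact hre k⟩
    · push_neg at hcase
      have him0 : (v k0).im ≠ 0 := by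
        intro h
        exact hk0 (Complex.ext hcase h)
      exact ⟨fun j => (v j).im, fun h => him0 (congrFun h k0), by
        funext k
        simp only [Matrix.mulVec, dotProduct, Pi.smul_apply, smul_eq_mul]
        exact him k⟩

end aux

theorem stmt8 (m n : ℕ) (hm : 1 ≤ m) (hn : 1 ≤ n)
    (LX : Matrix (Fin m) (Fin m) ℝ) (LY : Matrix (Fin n) (Fin n) ℝ)
    (hLXsymm : LX.IsSymm) (hLXrow : ∀ i, ∑ j, LX i j = 0)
    (hLXoffdiag : ∀ i j, i ≠ j → LX i j ≤ 0)
    (hLYsymm : LY.IsSymm) (hLYrow : ∀ i, ∑ j, LY i j = 0)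
    (hLYoffdiag : ∀ i j, i ≠ j → LY i j ≤ 0)
    (hcharpoly : ∀ i, ∃ z : ℤ, (Matrix.charpoly (joinL m n LX LY)).coeff i = (z : ℝ)) :
    (∃ τ : ℝ, 0 < τ ∧ ∃ γ : ℂ, ‖γ‖ = 1 ∧
        transU (joinL m n LX LY) τ = γ • (1 : Matrix (Fin m ⊕ Fin n) (Fin m ⊕ Fin n) ℂ)) ↔
      ∀ lam : ℝ, IsEigenvalue (joinL m n LX LY) lam → ∃ z : ℤ, lam = (z : ℝ) := by
  have a0 : Fin m := ⟨0, hm⟩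
  have b0 : Fin n := ⟨0, hn⟩
  -- symmetry
  have hsymm : (joinL m n LX LY).IsSymm := by
    unfold Matrix.IsSymm joinL
    rw [Matrix.fromBlocks_transpose, Matrix.transpose_add, Matrix.transpose_add,
      Matrix.transpose_smul, Matrix.transpose_smul, Matrix.transpose_one, Matrix.transpose_one,
      hLXsymm, hLYsymm, Matrix.transpose_neg, Matrix.transpose_neg]
    congr 1 <;> ext i j <;> rfl
  have hHerm : ((joinL m n LX LY).map (fun x : ℝ => (x : ℂ))).IsHermitian :=
    isHermitian_cmap hsymm
  -- block row sums
  have hblockX : ∀ a : Fin m, ∑ b : Fin m, (LX + (n : ℝ) • 1) a b = (n : ℝ) := by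
    intro a
    simp only [Matrix.add_apply, Finset.sum_add_distrib, hLXrow a, Matrix.smul_apply,
      Matrix.one_apply, smul_eq_mul, mul_ite, mul_one, mul_zero, zero_add]
    rw [Finset.sum_ite_eq]
    simp
  have hblockY : ∀ a : Fin n, ∑ b : Fin n, (LY + (m : ℝ) • 1) a b = (m : ℝ) := by
    intro a
    simp only [Matrix.add_apply, Finset.sum_add_distrib, hLYrow a, Matrix.smul_apply,
      Matrix.one_apply, smul_eq_mul, mul_ite, mul_one, mul_zero, zero_add]
    rw [Finset.sum_ite_eq]
    simp
  -- eigenvalue 0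
  have heig0 : IsEigenvalue (joinL m n LX LY) 0 := by
    refine ⟨fun _ => 1, ?_, ?_⟩
    · intro h
      have := congrFun h (Sum.inl a0)
      simp at this
    · funext k
      simp only [Matrix.mulVec, dotProduct, mul_one, Pi.smul_apply, smul_eq_mul, zero_mul]
      cases k with
      | inl a =>
        rw [Fintype.sum_sum_type]
        simp only [joinL, Matrix.fromBlocks_apply₁₁, Matrix.fromBlocks_apply₁₂,
          Matrix.neg_apply, Matrix.of_apply]
        rw [hblockX a]
        simp
      | inr a =>
        rw [Fintype.sum_sum_type]
        simp only [joinL, Matrix.fromBlocks_apply₂₁, Matrix.fromBlocks_apply₂₂,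
          Matrix.neg_apply, Matrix.of_apply]
        rw [hblockY a]
        simp
  -- eigenvalue m + n
  have heigmn : IsEigenvalue (joinL m n LX LY) ((m : ℝ) + n) := by
    refine ⟨Sum.elim (fun _ => (n : ℝ)) (fun _ => -(m : ℝ)), ?_, ?_⟩
    · intro h
      have h2 := congrFun h (Sum.inl a0)
      simp only [Sum.elim_inl, Pi.zero_apply] at h2
      have : (1 : ℝ) ≤ n := by exact_mod_cast hn
      linarith
    · funext k
      cases k with
      | inl a =>
        simp only [Matrix.mulVec, dotProduct, Pi.smul_apply, Sum.elim_inl, smul_eq_mul]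
        rw [Fintype.sum_sum_type]
        simp only [joinL, Matrix.fromBlocks_apply₁₁, Matrix.fromBlocks_apply₁₂,
          Matrix.neg_apply, Matrix.of_apply, Sum.elim_inl, Sum.elim_inr]
        rw [← Finset.sum_mul, hblockX a]
        simp only [Finset.sum_const, Finset.card_univ, Fintype.card_fin, nsmul_eq_mul]
        ring
      | inr a =>
        simp only [Matrix.mulVec, dotProduct, Pi.smul_apply, Sum.elim_inr, smul_eq_mul]
        rw [Fintype.sum_sum_type]
        simp only [joinL, Matrix.fromBlocks_apply₂₁, Matrix.fromBlocks_apply₂₂,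
          Matrix.neg_apply, Matrix.of_apply, Sum.elim_inl, Sum.elim_inr]
        have e1 : ∑ x : Fin n, (LY + (m : ℝ) • 1) a x * -(m : ℝ)
            = (m : ℝ) * -(m : ℝ) := by
          rw [← Finset.sum_mul, hblockY a]
        rw [e1]
        simp only [Finset.sum_const, Finset.card_univ, Fintype.card_fin, nsmul_eq_mul]
        ring
  -- eigenvalues are roots of the characteristic polynomial
  have hcp_eval : ∀ lam : ℝ, IsEigenvalue (joinL m n LX LY) lam →
      ((joinL m n LX LY).charpoly).eval lam = 0 := by
    rintro lam ⟨w, hw0, hw⟩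
    have h0 : (lam • 1 - joinL m n LX LY) *ᵥ w = 0 := by
      rw [Matrix.sub_mulVec, Matrix.smul_mulVec, Matrix.one_mulVec, hw, sub_self]
    have hdet : (lam • (1 : Matrix (Fin m ⊕ Fin n) (Fin m ⊕ Fin n) ℝ)
        - joinL m n LX LY).det = 0 :=
      Matrix.exists_mulVec_eq_zero_iff.mp ⟨w, hw0, h0⟩
    rw [Matrix.charpoly, eval_det, matPolyEquiv_charmatrix, Polynomial.eval_sub,
      Polynomial.eval_X, Polynomial.eval_C]
    have hscal : (Matrix.scalar (Fin m ⊕ Fin n)) lam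
        = lam • (1 : Matrix (Fin m ⊕ Fin n) (Fin m ⊕ Fin n) ℝ) := by
      ext i j
      by_cases hij : i = j
      · subst hij
        simp [Matrix.scalar_apply, Matrix.one_apply_eq]
      · simp [Matrix.scalar_apply, Matrix.diagonal_apply_ne _ hij, Matrix.one_apply_ne hij]
    rw [hscal]
    exact hdet
  -- integer characteristic polynomial
  set p : Polynomial ℤ :=
    ∑ i ∈ Finset.range (((joinL m n LX LY).charpoly).natDegree + 1),
      Polynomial.C (hcharpoly i).choose * Polynomial.X ^ i with hpdef
  have hpmap : p.map (Int.castRingHom ℝ) = (joinL m n LX LY).charpoly := by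
    ext k
    rw [Polynomial.coeff_map]
    simp only [hpdef, Polynomial.finset_sum_coeff, Polynomial.coeff_C_mul,
      Polynomial.coeff_X_pow, mul_ite, mul_one, mul_zero]
    rw [Finset.sum_ite_eq]
    by_cases hk : k ∈ Finset.range (((joinL m n LX LY).charpoly).natDegree + 1)
    · rw [if_pos hk]
      exact ((hcharpoly k).choose_spec).symm
    · rw [if_neg hk]
      symm
      rw [Finset.mem_range, not_lt] at hk
      have := Polynomial.coeff_eq_zero_of_natDegree_lt
        (lt_of_lt_of_le (Nat.lt_succ_self _) hk)
      simpa using this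
  have hpmonic : p.Monic := by
    apply Polynomial.monic_of_injective (f := Int.castRingHom ℝ) Int.cast_injective
    rw [hpmap]
    exact Matrix.charpoly_monic _
  constructor
  · rintro ⟨τ, hτ, γ, _, heq⟩
    rw [transU_eq_smul_one_iff _ hHerm τ γ] at heq
    obtain ⟨i0, hi0⟩ := (eig_iff _ hHerm 0).mp heig0
    have hγ1 : γ = 1 := by
      rw [← heq i0, hi0]
      simp
    obtain ⟨i1, hi1⟩ := (eig_iff _ hHerm _).mp heigmn
    have h1 := heq i1
    rw [hi1, hγ1, Complex.exp_eq_one_iff] at h1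
    obtain ⟨k, hk⟩ := h1
    have hk' : τ * ((m : ℝ) + n) = (k : ℝ) * (2 * Real.pi) := by
      have h2 : Complex.I * ((τ * ((m : ℝ) + n) : ℝ) : ℂ)
          = Complex.I * (((k : ℝ) * (2 * Real.pi) : ℝ) : ℂ) := by
        push_cast at hk ⊢
        linear_combination hk
      have h3 := mul_left_cancel₀ Complex.I_ne_zero h2
      exact_mod_cast h3
    have hmn : (0 : ℝ) < (m : ℝ) + n := by
      have : (1 : ℝ) ≤ (m : ℝ) := by exact_mod_cast hm
      positivity
    have hkpos : (0 : ℝ) < (k : ℝ) := by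
      by_contra hc
      push_neg at hc
      nlinarith [Real.pi_pos, mul_pos hτ hmn]
    have hk0 : (k : ℝ) ≠ 0 := ne_of_gt hkpos
    intro lam hlam
    obtain ⟨i, hi⟩ := (eig_iff _ hHerm lam).mp hlam
    have h4 := heq i
    rw [hi, hγ1, Complex.exp_eq_one_iff] at h4
    obtain ⟨j, hj⟩ := h4
    have hj' : τ * lam = (j : ℝ) * (2 * Real.pi) := by
      have h2 : Complex.I * ((τ * lam : ℝ) : ℂ)
          = Complex.I * (((j : ℝ) * (2 * Real.pi) : ℝ) : ℂ) := by
        push_cast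
        linear_combination hj
      have h3 := mul_left_cancel₀ Complex.I_ne_zero h2
      exact_mod_cast h3
    have hlam_eq : lam = ((j : ℝ) * ((m : ℝ) + n)) / (k : ℝ) := by
      have h3 : τ * (lam * (k : ℝ)) = τ * ((j : ℝ) * ((m : ℝ) + n)) := by
        linear_combination (k : ℝ) * hj' - (j : ℝ) * hk'
      have h4 := mul_left_cancel₀ (ne_of_gt hτ) h3
      field_simp
      linarith [h4]
    -- lam is rational
    set q : ℚ := ((j * (m + n) : ℤ) : ℚ) / ((k : ℤ) : ℚ) with hqdef
    have hq : ((q : ℚ) : ℝ) = lam := by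
      rw [hlam_eq, hqdef]
      push_cast
      ring
    have hint : IsIntegral ℤ lam := by
      refine ⟨p, hpmonic, ?_⟩
      rw [Polynomial.eval₂_eq_eval_map, algebraMap_int_eq, hpmap]
      exact hcp_eval lam hlam
    have hint' : IsIntegral ℤ q := by
      have h5 : algebraMap ℚ ℝ q = lam := hq
      rw [← h5] at hint
      exact (isIntegral_algebraMap_iff (algebraMap ℚ ℝ).injective).mp hint
    obtain ⟨z, hz⟩ := IsIntegrallyClosed.isIntegral_iff.mp hint'
    refine ⟨z, ?_⟩
    rw [← hq, ← hz]
    simp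
  · intro hall
    refine ⟨2 * Real.pi, by positivity, 1, by simp, ?_⟩
    rw [transU_eq_smul_one_iff _ hHerm]
    intro i
    obtain ⟨z, hz⟩ := hall (hHerm.eigenvalues i) ((eig_iff _ hHerm _).mpr ⟨i, rfl⟩)
    rw [hz]
    have h6 := Complex.exp_int_mul_two_pi_mul_I z
    rw [← h6]
    congr 1
    push_cast
    ring
end

section
/- If every eigenvalue of L_X is an integer but some eigenvalue of L_Y is not an integer, then some eigenvalue of L is not an integer, and nevertheless every vertex u ∈ {1,…,m} is periodic with respect to L. -/
open Matrix Complex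

namespace Stmt9Aux

variable {N : Type*} [Fintype N] [DecidableEq N]

lemma pow_mulVec (A : Matrix N N ℂ) (v : N → ℂ) (μ : ℂ) (h : A *ᵥ v = μ • v) :
    ∀ k : ℕ, A ^ k *ᵥ v = μ ^ k • v := by
  intro k
  induction k with
  | zero => simp
  | succ k ih =>
    rw [pow_succ', ← Matrix.mulVec_mulVec, ih, Matrix.mulVec_smul, h, smul_smul,
      pow_succ', mul_comm]

lemma exp_mulVec (A : Matrix N N ℂ) (v : N → ℂ) (μ : ℂ) (h : A *ᵥ v = μ • v) :
    NormedSpace.exp A *ᵥ v = Complex.exp μ • v := by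
  letI : NormedRing (Matrix N N ℂ) := Matrix.linftyOpNormedRing
  letI : NormedAlgebra ℂ (Matrix N N ℂ) := Matrix.linftyOpNormedAlgebra
  have hsum : Summable fun k : ℕ => (((Nat.factorial k : ℕ) : ℂ)⁻¹) • A ^ k :=
    NormedSpace.expSeries_summable' (𝕂 := ℂ) A
  let f : Matrix N N ℂ →ₗ[ℂ] (N → ℂ) :=
    { toFun := fun B => B *ᵥ v
      map_add' := fun B C => Matrix.add_mulVec B C v
      map_smul' := fun c B => Matrix.smul_mulVec c B v }
  have hf : Continuous f := LinearMap.continuous_of_finiteDimensional f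
  let F : Matrix N N ℂ →L[ℂ] (N → ℂ) := ⟨f, hf⟩
  have h1 : NormedSpace.exp A *ᵥ v = F (NormedSpace.exp A) := rfl
  rw [h1, NormedSpace.exp_eq_tsum ℂ, F.map_tsum hsum]
  have h2 : ∀ k : ℕ, F ((((Nat.factorial k : ℕ) : ℂ)⁻¹) • A ^ k)
      = ((((Nat.factorial k : ℕ) : ℂ)⁻¹) * μ ^ k) • v := by
    intro k
    show ((((Nat.factorial k : ℕ) : ℂ)⁻¹) • A ^ k) *ᵥ v = _
    rw [Matrix.smul_mulVec, pow_mulVec A v μ h k, smul_smul]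
  simp_rw [h2]
  rw [Summable.tsum_smul_const]
  · congr 1
    rw [Complex.exp_eq_exp_ℂ, NormedSpace.exp_eq_tsum ℂ]
    simp_rw [smul_eq_mul]
  · have := NormedSpace.expSeries_summable' (𝕂 := ℂ) μ
    simpa [smul_eq_mul] using this

def mapC (v : N → ℝ) : N → ℂ := fun i => (v i : ℂ)

omit [DecidableEq N] in
lemma mapC_mulVec (M : Matrix N N ℝ) (v : N → ℝ) :
    (M.map (fun x : ℝ => (x : ℂ))) *ᵥ mapC v = mapC (M *ᵥ v) := by
  funext i
  simp only [mapC, Matrix.mulVec, dotProduct, Matrix.map_apply]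
  norm_cast

omit [Fintype N] [DecidableEq N] in
lemma mapC_add (v w : N → ℝ) : mapC (v + w) = mapC v + mapC w := by
  funext i; simp [mapC]

omit [Fintype N] [DecidableEq N] in
lemma mapC_smul (r : ℝ) (v : N → ℝ) : mapC (r • v) = (r : ℂ) • mapC v := by
  funext i; simp [mapC]

omit [Fintype N] [DecidableEq N] in
lemma mapC_sum {ι : Type*} (s : Finset ι) (f : ι → N → ℝ) :
    mapC (∑ i ∈ s, f i) = ∑ i ∈ s, mapC (f i) := by
  funext j
  simp [mapC, Finset.sum_apply]

omit [DecidableEq N] in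
lemma mulVec_sum {ι : Type*} (s : Finset ι) (M : Matrix N N ℂ) (f : ι → N → ℂ) :
    M *ᵥ (∑ i ∈ s, f i) = ∑ i ∈ s, M *ᵥ f i := by
  funext j
  simp only [Matrix.mulVec, dotProduct, Finset.sum_apply, Finset.mul_sum]
  rw [Finset.sum_comm]

lemma good (M : Matrix N N ℝ) (v : N → ℝ) (k : ℤ)
    (h : M *ᵥ v = (k : ℝ) • v) :
    NormedSpace.exp ((Complex.I * ((2 * Real.pi : ℝ) : ℂ)) • M.map (fun x : ℝ => (x : ℂ)))
      *ᵥ mapC v = mapC v := by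
  have h1 : (M.map (fun x : ℝ => (x : ℂ))) *ᵥ mapC v = ((k : ℂ)) • mapC v := by
    rw [mapC_mulVec, h]
    funext i
    simp [mapC]
  have h2 : ((Complex.I * ((2 * Real.pi : ℝ) : ℂ)) • M.map (fun x : ℝ => (x : ℂ))) *ᵥ mapC v
      = (Complex.I * ((2 * Real.pi : ℝ) : ℂ) * (k : ℂ)) • mapC v := by
    rw [Matrix.smul_mulVec, h1, smul_smul]
  rw [exp_mulVec _ _ _ h2]
  have h3 : Complex.exp (Complex.I * ((2 * Real.pi : ℝ) : ℂ) * (k : ℂ)) = 1 := by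
    rw [← Complex.exp_int_mul_two_pi_mul_I k]
    congr 1
    push_cast
    ring
  rw [h3, one_smul]

lemma sum_mulVec_eq_zero {k : ℕ} (M : Matrix (Fin k) (Fin k) ℝ) (hs : M.IsSymm)
    (hr : ∀ i, ∑ j, M i j = 0) (w : Fin k → ℝ) : ∑ i, (M *ᵥ w) i = 0 := by
  simp only [Matrix.mulVec, dotProduct]
  rw [Finset.sum_comm]
  have h : ∀ j, ∑ i, M i j * w j = 0 := by
    intro j
    rw [← Finset.sum_mul]
    have hcol : ∑ i, M i j = 0 := by
      calc ∑ i, M i j = ∑ i, M j i := by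
            apply Finset.sum_congr rfl
            intro i _
            exact (hs.apply i j).symm
        _ = 0 := hr j
    rw [hcol, zero_mul]
  simp [h]

lemma joinL_mulVec (m n : ℕ) (LX : Matrix (Fin m) (Fin m) ℝ) (LY : Matrix (Fin n) (Fin n) ℝ)
    (x : Fin m → ℝ) (y : Fin n → ℝ) :
    joinL m n LX LY *ᵥ Sum.elim x y =
      Sum.elim (LX *ᵥ x + (n : ℝ) • x - fun _ => ∑ j, y j)
        (LY *ᵥ y + (m : ℝ) • y - fun _ => ∑ j, x j) := by
  unfold joinL
  rw [Matrix.fromBlocks_mulVec]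
  funext i
  cases i <;>
    simp [Matrix.add_mulVec, Matrix.smul_mulVec, Matrix.one_mulVec,
      Matrix.mulVec, dotProduct, sub_eq_add_neg, Finset.sum_add_distrib, add_comm]

end Stmt9Aux

theorem stmt9 (m n : ℕ) (hm : 1 ≤ m) (hn : 1 ≤ n)
    (LX : Matrix (Fin m) (Fin m) ℝ) (LY : Matrix (Fin n) (Fin n) ℝ)
    (hLXsymm : LX.IsSymm) (hLXrow : ∀ i, ∑ j, LX i j = 0)
    (hLYsymm : LY.IsSymm) (hLYrow : ∀ i, ∑ j, LY i j = 0)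
    (hXint : ∀ lam : ℝ, IsEigenvalue LX lam → ∃ z : ℤ, lam = (z : ℝ))
    (hYnotint : ∃ lam : ℝ, IsEigenvalue LY lam ∧ ¬∃ z : ℤ, lam = (z : ℝ)) :
    (∃ lam : ℝ, IsEigenvalue (joinL m n LX LY) lam ∧ ¬∃ z : ℤ, lam = (z : ℝ)) ∧
      ∀ u : Fin m, PeriodicAt (joinL m n LX LY) (Sum.inl u) := by
  obtain ⟨μ, ⟨w, hw0, hwe⟩, hμ⟩ := hYnotint
  have hμ0 : μ ≠ 0 := by
    rintro rfl
    exact hμ ⟨0, by simp⟩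
  have hsumw : ∑ j, w j = 0 := by
    have h1 := Stmt9Aux.sum_mulVec_eq_zero LY hLYsymm hLYrow w
    rw [hwe] at h1
    have h2 : μ * ∑ j, w j = 0 := by
      simpa [Finset.mul_sum] using h1
    exact (mul_eq_zero.mp h2).resolve_left hμ0
  constructor
  · refine ⟨μ + m, ⟨Sum.elim 0 w, ?_, ?_⟩, ?_⟩
    · obtain ⟨i, hi⟩ := Function.ne_iff.mp hw0
      intro hz
      exact hi (congrFun hz (Sum.inr i))
    · show joinL m n LX LY *ᵥ Sum.elim 0 w = _
      rw [Stmt9Aux.joinL_mulVec]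
      funext i
      cases i with
      | inl i => simp [hsumw]
      | inr i =>
        have h3 := congrFun hwe i
        simp only [Sum.elim_inr, Pi.sub_apply, Pi.add_apply, Pi.smul_apply, smul_eq_mul,
          Pi.zero_apply, Finset.sum_const_zero, sub_zero, Sum.elim_inr] at h3 ⊢
        rw [h3]
        ring
    · rintro ⟨z, hz⟩
      refine hμ ⟨z - m, ?_⟩
      push_cast
      linarith
  · intro u
    have hm0 : (m : ℝ) ≠ 0 := Nat.cast_ne_zero.mpr (by omega)
    have hmn0 : (m : ℝ) + (n : ℝ) ≠ 0 := by
      have h1 : (1 : ℝ) ≤ (m : ℝ) := by exact_mod_cast hm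
      have h2 : (0 : ℝ) ≤ (n : ℝ) := Nat.cast_nonneg n
      linarith
    refine ⟨2 * Real.pi, Real.two_pi_pos, ?_⟩
    have hA : LX.IsHermitian := by
      rwa [Matrix.IsHermitian, Matrix.conjTranspose_eq_transpose_of_trivial]
    set U : Matrix (Fin m) (Fin m) ℝ := (hA.eigenvectorUnitary : Matrix (Fin m) (Fin m) ℝ)
      with hU
    set lam : Fin m → ℝ := hA.eigenvalues with hlamdef
    set B : Fin m → Fin m → ℝ := fun i j => U j i with hB
    have hBcoe : ∀ i, B i = ⇑(hA.eigenvectorBasis i) := fun i => rfl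
    have heig : ∀ i, LX *ᵥ B i = lam i • B i := by
      intro i
      rw [hBcoe i]
      exact hA.mulVec_eigenvectorBasis i
    have hUstar : U * star U = 1 := Unitary.coe_mul_star_self hA.eigenvectorUnitary
    have hBne : ∀ i, B i ≠ 0 := by
      intro i h0
      have h1 : star U *ᵥ (U *ᵥ Pi.single i 1) = Pi.single i (1 : ℝ) := by
        rw [Matrix.mulVec_mulVec, Unitary.coe_star_mul_self, Matrix.one_mulVec]
      have h2 : U *ᵥ Pi.single i (1 : ℝ) = B i := by
        rw [Matrix.mulVec_single]
        funext j
        simp [hB]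
      rw [h2, h0, Matrix.mulVec_zero] at h1
      have h3 := congrFun h1 i
      simp at h3
    have hint : ∀ i, ∃ z : ℤ, lam i = (z : ℝ) := fun i => hXint _ ⟨B i, hBne i, heig i⟩
    set t : Fin m → ℝ := fun i => ∑ j, B i j with ht
    have hlamt : ∀ i, lam i * t i = 0 := by
      intro i
      have h1 := Stmt9Aux.sum_mulVec_eq_zero LX hLXsymm hLXrow (B i)
      rw [heig i] at h1
      simpa [ht, Finset.mul_sum] using h1
    have hLXone : ∀ c : ℝ, LX *ᵥ (fun _ => c) = 0 := by
      intro c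
      funext i
      simp [Matrix.mulVec, dotProduct, ← Finset.sum_mul, hLXrow i]
    have hLYone : ∀ c : ℝ, LY *ᵥ (fun _ => c) = 0 := by
      intro c
      funext i
      simp [Matrix.mulVec, dotProduct, ← Finset.sum_mul, hLYrow i]
    set w' : Fin m → Fin m → ℝ := fun i j => B i j - t i / m with hw'
    have hw'sum : ∀ i, ∑ j, w' i j = 0 := by
      intro i
      simp only [hw']
      rw [Finset.sum_sub_distrib, Finset.sum_const, Finset.card_univ, Fintype.card_fin]
      have hti : ∑ x : Fin m, B i x = t i := rfl
      rw [hti, nsmul_eq_mul]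
      field_simp
      ring
    have hw'eig : ∀ i, LX *ᵥ w' i = lam i • w' i := by
      intro i
      have hsplit : w' i = B i - fun _ => t i / m := by
        funext j
        simp [hw']
      rw [hsplit, Matrix.mulVec_sub, hLXone, heig i, sub_zero]
      funext j
      have hz : lam i * (t i / m) = 0 := by
        rw [← mul_div_assoc, hlamt i, zero_div]
      simp only [Pi.smul_apply, Pi.sub_apply, smul_eq_mul, mul_sub, hz, sub_zero]
    -- the three families of eigenvectors of the join
    set φ0 : Fin m ⊕ Fin n → ℝ := Sum.elim (fun _ => (1 : ℝ)) (fun _ => (1 : ℝ)) with hφ0def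
    set φ1 : Fin m ⊕ Fin n → ℝ := Sum.elim (fun _ => (n : ℝ)) (fun _ => -(m : ℝ)) with hφ1def
    have hφ0eig : joinL m n LX LY *ᵥ φ0 = (((0 : ℤ) : ℝ)) • φ0 := by
      rw [hφ0def, Stmt9Aux.joinL_mulVec]
      funext i
      cases i <;> simp [hLXone, hLYone]
    have hφ1eig : joinL m n LX LY *ᵥ φ1 = ((((m : ℤ) + n : ℤ)) : ℝ) • φ1 := by
      rw [hφ1def, Stmt9Aux.joinL_mulVec]
      funext i
      cases i <;>
        · simp [hLXone, hLYone]
          push_cast [-Int.cast_add]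
          ring
    have hψeig : ∀ i, joinL m n LX LY *ᵥ Sum.elim (w' i) (0 : Fin n → ℝ)
        = (lam i + n) • Sum.elim (w' i) (0 : Fin n → ℝ) := by
      intro i
      rw [Stmt9Aux.joinL_mulVec]
      funext x
      cases x with
      | inl j =>
        have h1 := congrFun (hw'eig i) j
        simp only [Sum.elim_inl, Pi.sub_apply, Pi.add_apply, Pi.smul_apply, smul_eq_mul,
          Pi.zero_apply, Finset.sum_const_zero, sub_zero] at h1 ⊢
        rw [h1]
        ring
      | inr j =>
        simp [hLYone, hw'sum i]
    -- decomposition of the standard basis vector at `inl u`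
    set c : Fin m → ℝ := star U *ᵥ Pi.single u 1 with hc
    have hkey : ∀ j, (Pi.single u 1 : Fin m → ℝ) j = ∑ i, c i * B i j := by
      intro j
      have h1 : U *ᵥ c = Pi.single u 1 := by
        rw [hc, Matrix.mulVec_mulVec, hUstar, Matrix.one_mulVec]
      conv_lhs => rw [← h1]
      simp [Matrix.mulVec, dotProduct, hB, mul_comm]
    set S : ℝ := ∑ i, c i * t i with hS
    have hdecomp : (Pi.single (Sum.inl u) (1 : ℝ) : Fin m ⊕ Fin n → ℝ)
        = (∑ i, c i • Sum.elim (w' i) (0 : Fin n → ℝ))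
          + (S / ((m : ℝ) + n)) • φ0 + (S / ((m : ℝ) * ((m : ℝ) + n))) • φ1 := by
      funext x
      cases x with
      | inl j =>
        have e1 : (∑ i, c i • Sum.elim (w' i) (0 : Fin n → ℝ)) (Sum.inl j)
            = ∑ i, c i * w' i j := by
          rw [Finset.sum_apply]
          simp
        have e2 : ∑ i, c i * w' i j = (∑ i, c i * B i j) - S / m := by
          simp only [hw', mul_sub]
          rw [Finset.sum_sub_distrib]
          congr 1
          rw [hS, Finset.sum_div]
          apply Finset.sum_congr rfl
          intro i _
          field_simp
        have e3 : (Pi.single (Sum.inl u) (1 : ℝ) : Fin m ⊕ Fin n → ℝ) (Sum.inl j)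
            = (Pi.single u 1 : Fin m → ℝ) j := by
          simp [Pi.single_apply]
        simp only [Pi.add_apply, Pi.smul_apply, smul_eq_mul, e1, e3, hφ0def, hφ1def,
          Sum.elim_inl]
        rw [e2, ← hkey j]
        field_simp
        ring
      | inr j =>
        have e1 : (∑ i, c i • Sum.elim (w' i) (0 : Fin n → ℝ)) (Sum.inr j) = 0 := by
          rw [Finset.sum_apply]
          simp
        have e3 : (Pi.single (Sum.inl u) (1 : ℝ) : Fin m ⊕ Fin n → ℝ) (Sum.inr j) = 0 := by
          simp [Pi.single_apply]
        simp only [Pi.add_apply, Pi.smul_apply, smul_eq_mul, e1, e3, hφ0def, hφ1def,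
          Sum.elim_inr]
        field_simp
        ring
    -- now transfer to ℂ
    have hg0 : NormedSpace.exp ((Complex.I * ((2 * Real.pi : ℝ) : ℂ)) •
        (joinL m n LX LY).map (fun x : ℝ => (x : ℂ))) *ᵥ Stmt9Aux.mapC φ0
        = Stmt9Aux.mapC φ0 := Stmt9Aux.good _ _ 0 hφ0eig
    have hg1 : NormedSpace.exp ((Complex.I * ((2 * Real.pi : ℝ) : ℂ)) •
        (joinL m n LX LY).map (fun x : ℝ => (x : ℂ))) *ᵥ Stmt9Aux.mapC φ1
        = Stmt9Aux.mapC φ1 := Stmt9Aux.good _ _ ((m : ℤ) + n) hφ1eig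
    have hgψ : ∀ i, NormedSpace.exp ((Complex.I * ((2 * Real.pi : ℝ) : ℂ)) •
        (joinL m n LX LY).map (fun x : ℝ => (x : ℂ))) *ᵥ
          Stmt9Aux.mapC (Sum.elim (w' i) (0 : Fin n → ℝ))
        = Stmt9Aux.mapC (Sum.elim (w' i) (0 : Fin n → ℝ)) := by
      intro i
      obtain ⟨z, hz⟩ := hint i
      refine Stmt9Aux.good _ _ (z + n) ?_
      rw [hψeig i, hz]
      push_cast
      rfl
    have hfinal : NormedSpace.exp ((Complex.I * ((2 * Real.pi : ℝ) : ℂ)) •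
        (joinL m n LX LY).map (fun x : ℝ => (x : ℂ))) *ᵥ
          Stmt9Aux.mapC (Pi.single (Sum.inl u) (1 : ℝ))
        = Stmt9Aux.mapC (Pi.single (Sum.inl u) (1 : ℝ)) := by
      rw [hdecomp]
      rw [Stmt9Aux.mapC_add, Stmt9Aux.mapC_add, Stmt9Aux.mapC_smul, Stmt9Aux.mapC_smul,
        Stmt9Aux.mapC_sum]
      simp_rw [Stmt9Aux.mapC_smul]
      rw [Matrix.mulVec_add, Matrix.mulVec_add, Matrix.mulVec_smul, Matrix.mulVec_smul,
        Stmt9Aux.mulVec_sum]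
      simp_rw [Matrix.mulVec_smul, hgψ, hg0, hg1]
    have hmapsingle : Stmt9Aux.mapC (Pi.single (Sum.inl u) (1 : ℝ) : Fin m ⊕ Fin n → ℝ)
        = (Pi.single (Sum.inl u) (1 : ℂ) : Fin m ⊕ Fin n → ℂ) := by
      funext x
      simp [Stmt9Aux.mapC, Pi.single_apply, apply_ite]
    rw [hmapsingle] at hfinal
    have h4 := congrFun hfinal (Sum.inl u)
    rw [Matrix.mulVec_single] at h4
    simp only [mul_one, Pi.single_eq_same, Pi.smul_apply, Matrix.col_apply, op_smul_eq_mul] at h4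
    show ‖transU (joinL m n LX LY) (2 * Real.pi) (Sum.inl u) (Sum.inl u)‖ = 1
    unfold transU
    rw [h4]
    simp
end
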